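/- arXiv:2008.02261 — 6 statements merged into one kernel-verified Lean document; each statement's English description precedes it below -/
import Mathlib

section
/- Let H be a real Hilbert space, let f : H → ℝ be a convex function of class C¹ whose set of minimizers argmin f is nonempty, and let r > 0. Let x : [0,∞) → H be twice continuously differentiable and satisfy the heavy ball with friction equation ẍ(t) + r ẋ(t) + ∇f(x(t)) = 0 for all t ≥ 0, with x(0) = x₀ and ẋ(0) = x₁. Set C(x₀,x₁) := (3/(2r))(f(x₀) − min f) + r·dist(x₀, argmin f)² + (5/(4r))‖x₁‖². Then: (i) ∫₀^∞ (f(x(t)) − min f) dt < ∞ and ∫₀^∞ t‖ẋ(t)‖² dt < ∞; (ii) for all t > 0, f(x(t)) − min f ≤ C(x₀,x₁)/t and ‖ẋ(t)‖ ≤ √(2C(x₀,x₁))/√t; (iii) t·(f(x(t)) − min f) → 0 and √t·‖ẋ(t)‖ → 0 as t → ∞. -/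
open Set Filter Topology MeasureTheory Metric Bornology
open scoped RealInnerProductSpace NNReal

set_option maxHeartbeats 1000000

noncomputable section


lemma grad_convex_ineq {H : Type*} [NormedAddCommGroup H] [InnerProductSpace ℝ H]
    [CompleteSpace H] {f : H → ℝ} (hf : Differentiable ℝ f)
    (hconv : ConvexOn ℝ Set.univ f) (a b : H) :
    f a - f b ≤ ⟪gradient f a, a - b⟫ := by
  set φ : ℝ → ℝ := fun s => f (a + s • (b - a)) with hφ
  have hφconv : ConvexOn ℝ Set.univ φ := by
    have h := hconv.comp_affineMap (AffineMap.lineMap a b : ℝ →ᵃ[ℝ] H)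
    have he : φ = f ∘ ⇑(AffineMap.lineMap a b) := by
      funext s; simp only [φ, Function.comp, AffineMap.lineMap_apply_module]; congr 1; module
    rw [he]
    simpa using h
  have hd : HasDerivAt φ ⟪gradient f a, b - a⟫ 0 := by
    have h1 : HasFDerivAt f (InnerProductSpace.toDual ℝ H (gradient f a))
        ((0:ℝ) • (b - a) + a) := by
      simpa using (hf a).hasGradientAt.hasFDerivAt
    have h2 : HasDerivAt (fun s : ℝ => s • (b - a) + a) (b - a) 0 := by
      simpa using ((hasDerivAt_id (0:ℝ)).smul_const (b - a)).add_const a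
    have h3 := h1.comp_hasDerivAt (x := (0:ℝ)) h2
    have he : φ = fun s : ℝ => f (s • (b - a) + a) := by
      funext s; simp only [φ]; congr 1; module
    rw [he]
    simpa [InnerProductSpace.toDual_apply_apply, Function.comp_def] using h3
  have hs := hφconv.le_slope_of_hasDerivAt (Set.mem_univ 0) (Set.mem_univ 1) one_pos hd
  have h4 : slope φ 0 1 = f b - f a := by
    simp [slope_def_field, φ]
  rw [h4] at hs
  have h5 : ⟪gradient f a, a - b⟫ = -⟪gradient f a, b - a⟫ := by
    rw [← inner_neg_right]; congr 1; abel
  linarith [hs]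

lemma ftc_Ici {φ φ' : ℝ → ℝ}
    (hd : ∀ t ∈ Set.Ici (0:ℝ), HasDerivWithinAt φ (φ' t) (Set.Ici 0) t)
    (hc : ContinuousOn φ' (Set.Ici 0)) {a b : ℝ} (ha : 0 ≤ a) (hab : a ≤ b) :
    ∫ t in a..b, φ' t = φ b - φ a := by
  apply intervalIntegral.integral_eq_sub_of_hasDeriv_right_of_le hab
  · intro t ht
    exact ((hd t (ha.trans ht.1)).continuousWithinAt).mono
      (fun y hy => ha.trans hy.1)
  · intro t ht
    exact (hd t (ha.trans ht.1.le)).mono (fun y hy => (ha.trans_lt (ht.1.trans hy)).le)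
  · exact (hc.mono (fun y hy => ha.trans hy.1)).intervalIntegrable_of_Icc hab

lemma tendsto_of_antitoneOn_Ici {F : ℝ → ℝ} {c : ℝ}
    (ha : ∀ a b : ℝ, 0 ≤ a → a ≤ b → F b ≤ F a)
    (hb : ∀ t : ℝ, 0 ≤ t → c ≤ F t) :
    ∃ L : ℝ, Tendsto F atTop (𝓝 L) := by
  set G : ℝ → ℝ := fun t => F (max t 0) with hG
  have hanti : Antitone G := by
    intro s t hst
    exact ha _ _ (le_max_right s 0) (max_le_max hst le_rfl)
  have hbdd : BddBelow (Set.range G) := by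
    refine ⟨c, ?_⟩
    rintro y ⟨t, rfl⟩
    exact hb _ (le_max_right t 0)
  refine ⟨⨅ i, G i, ?_⟩
  have := tendsto_atTop_ciInf hanti hbdd
  refine this.congr' ?_
  filter_upwards [eventually_ge_atTop (0:ℝ)] with t ht
  simp [G, max_eq_left ht]

theorem hbf_convergence_rates_aux
    {H : Type*} [NormedAddCommGroup H] [InnerProductSpace ℝ H] [CompleteSpace H]
    (f : H → ℝ) (hf : ContDiff ℝ 1 f) (hconv : ConvexOn ℝ Set.univ f)
    (r : ℝ) (hr : 0 < r)
    (z : H) (hz : ∀ y, f z ≤ f y)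
    (x x' x'' : ℝ → H)
    (hx : ∀ t ∈ Set.Ici (0:ℝ), HasDerivWithinAt x (x' t) (Set.Ici 0) t)
    (hx' : ∀ t ∈ Set.Ici (0:ℝ), HasDerivWithinAt x' (x'' t) (Set.Ici 0) t)
    (hx''c : ContinuousOn x'' (Set.Ici 0))
    (heq : ∀ t ∈ Set.Ici (0:ℝ), x'' t + r • x' t + gradient f (x t) = 0)
    (x₀ x₁ : H) (hx0 : x 0 = x₀) (hx1 : x' 0 = x₁)
    (C : ℝ)
    (hC : C = (3 / (2 * r)) * (f x₀ - f z)
        + r * (Metric.infDist x₀ {w : H | ∀ y, f w ≤ f y}) ^ 2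
        + (5 / (4 * r)) * ‖x₁‖ ^ 2) :
    (MeasureTheory.IntegrableOn (fun t => f (x t) - f z) (Set.Ioi 0) ∧
        MeasureTheory.IntegrableOn (fun t => t * ‖x' t‖ ^ 2) (Set.Ioi 0)) ∧
    (∀ t : ℝ, 0 < t →
        f (x t) - f z ≤ C / t ∧ ‖x' t‖ ≤ Real.sqrt (2 * C) / Real.sqrt t) ∧
    (Tendsto (fun t => t * (f (x t) - f z)) atTop (𝓝 0) ∧
        Tendsto (fun t => Real.sqrt t * ‖x' t‖) atTop (𝓝 0)) := by
  have hfd : Differentiable ℝ f := hf.differentiable one_ne_zero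
  have hgradc : Continuous (fun y => gradient f y) := by
    have h1 : Continuous (fun y => fderiv ℝ f y) := hf.continuous_fderiv one_ne_zero
    exact (InnerProductSpace.toDual ℝ H).symm.continuous.comp h1
  have hxc : ContinuousOn x (Set.Ici 0) := fun t ht => (hx t ht).continuousWithinAt
  have hx'c : ContinuousOn x' (Set.Ici 0) := fun t ht => (hx' t ht).continuousWithinAt
  have hGc : ContinuousOn (fun t => gradient f (x t)) (Set.Ici 0) :=
    hgradc.comp_continuousOn hxc
  -- expression for x''
  have hx''e : ∀ t ∈ Set.Ici (0:ℝ), x'' t = -(r • x' t) - gradient f (x t) := by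
    intro t ht
    have h0 := heq t ht
    rw [← sub_eq_zero, ← h0]; abel
  -- derivative of g
  have hg' : ∀ t ∈ Set.Ici (0:ℝ), HasDerivWithinAt (fun s => f (x s) - f z)
      ⟪gradient f (x t), x' t⟫ (Set.Ici 0) t := by
    intro t ht
    have h1 : HasFDerivAt f (InnerProductSpace.toDual ℝ H (gradient f (x t))) (x t) :=
      (hfd (x t)).hasGradientAt.hasFDerivAt
    have h2 := h1.comp_hasDerivWithinAt t (hx t ht)
    simpa [InnerProductSpace.toDual_apply_apply] using h2.sub_const (f z)
  -- derivative of v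
  have hv' : ∀ t ∈ Set.Ici (0:ℝ), HasDerivWithinAt (fun s => ‖x' s‖^2)
      (2 * ⟪x'' t, x' t⟫) (Set.Ici 0) t := by
    intro t ht
    have h1 := (hx' t ht).inner ℝ (hx' t ht)
    have h2 : (fun s => ⟪x' s, x' s⟫) = (fun s => ‖x' s‖^2) := by
      funext s; exact real_inner_self_eq_norm_sq _
    rw [h2] at h1
    have h3 : ⟪x' t, x'' t⟫ + ⟪x'' t, x' t⟫ = 2 * ⟪x'' t, x' t⟫ := by
      rw [real_inner_comm]; ring
    rwa [h3] at h1
  -- derivative of E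
  have hE' : ∀ t ∈ Set.Ici (0:ℝ), HasDerivWithinAt
      (fun s => f (x s) - f z + ‖x' s‖^2/2) (-(r * ‖x' t‖^2)) (Set.Ici 0) t := by
    intro t ht
    have h1 := (hg' t ht).add ((hv' t ht).div_const 2)
    have h2 : ⟪gradient f (x t), x' t⟫ + 2 * ⟪x'' t, x' t⟫ / 2 = -(r * ‖x' t‖^2) := by
      have h3 : ⟪gradient f (x t), x' t⟫ + 2 * ⟪x'' t, x' t⟫ / 2
          = ⟪gradient f (x t) + x'' t, x' t⟫ := by
        rw [inner_add_left]; ring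
      rw [h3, show gradient f (x t) + x'' t = -(r • x' t) by
          rw [hx''e t ht]; abel,
        inner_neg_left, real_inner_smul_left, real_inner_self_eq_norm_sq]
    rwa [h2] at h1
  -- continuity facts
  have hgc : ContinuousOn (fun t => f (x t) - f z) (Set.Ici 0) :=
    fun t ht => ((hg' t ht).continuousWithinAt)
  have hvc : ContinuousOn (fun t : ℝ => ‖x' t‖^2) (Set.Ici 0) :=
    fun t ht => ((hv' t ht).continuousWithinAt)
  have hE'c : ContinuousOn (fun t : ℝ => -(r * ‖x' t‖^2)) (Set.Ici 0) :=
    (hvc.const_smul r).neg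
  have hgnn : ∀ t : ℝ, 0 ≤ f (x t) - f z := fun t => sub_nonneg.2 (hz _)
  have hEnn : ∀ t : ℝ, 0 ≤ f (x t) - f z + ‖x' t‖^2/2 := by
    intro t; have := hgnn t; positivity
  -- FTC for E
  have hEftc : ∀ a b : ℝ, 0 ≤ a → a ≤ b →
      f (x b) - f z + ‖x' b‖^2/2 - (f (x a) - f z + ‖x' a‖^2/2)
        = -(r * ∫ t in a..b, ‖x' t‖^2) := by
    intro a b ha hab
    rw [← ftc_Ici hE' hE'c ha hab]
    rw [show (fun t : ℝ => -(r * ‖x' t‖^2)) = (fun t : ℝ => (-r) * ‖x' t‖^2) by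
      funext t; ring]
    rw [intervalIntegral.integral_const_mul]; ring
  have hvint : ∀ a b : ℝ, 0 ≤ a → a ≤ b →
      IntervalIntegrable (fun t : ℝ => ‖x' t‖^2) MeasureTheory.volume a b := by
    intro a b ha hab
    exact (hvc.mono (fun y hy => ha.trans hy.1)).intervalIntegrable_of_Icc hab
  have hVle : ∀ a b : ℝ, 0 ≤ a → a ≤ b →
      (∫ t in a..b, ‖x' t‖^2) ≤ (f (x a) - f z + ‖x' a‖^2/2) / r := by
    intro a b ha hab
    have h1 := hEftc a b ha hab
    have h2 := hEnn b
    rw [le_div_iff₀ hr]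
    nlinarith [hEnn b]
  have hEanti : ∀ a b : ℝ, 0 ≤ a → a ≤ b →
      f (x b) - f z + ‖x' b‖^2/2 ≤ f (x a) - f z + ‖x' a‖^2/2 := by
    intro a b ha hab
    have h1 := hEftc a b ha hab
    have h2 : 0 ≤ ∫ t in a..b, ‖x' t‖^2 :=
      intervalIntegral.integral_nonneg hab (fun u _ => by positivity)
    nlinarith
  -- generic integrability helper
  have hII : ∀ {F : ℝ → ℝ}, ContinuousOn F (Set.Ici 0) → ∀ {a b : ℝ}, 0 ≤ a → a ≤ b →
      IntervalIntegrable F MeasureTheory.volume a b := by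
    intro F hc a b ha hab
    exact (hc.mono (fun y hy => ha.trans hy.1)).intervalIntegrable_of_Icc hab
  -- the key estimates, for an arbitrary minimizer w
  have key : ∀ w : H, (∀ y, f w ≤ f y) → ∀ a b : ℝ, 0 ≤ a → a ≤ b →
      ((∫ t in a..b, (f (x t) - f z)) ≤
        r * (‖x a - w + r⁻¹ • x' a‖^2/2 + (f (x a) - f z)/r^2)) ∧
      (‖x b - w + r⁻¹ • x' b‖^2/2 + (f (x b) - f z)/r^2
          ≤ ‖x a - w + r⁻¹ • x' a‖^2/2 + (f (x a) - f z)/r^2) ∧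
      ((b * (f (x b) - f z + ‖x' b‖^2/2)
          + r * (‖x b - w + r⁻¹ • x' b‖^2/2 + (f (x b) - f z)/r^2))
        - (a * (f (x a) - f z + ‖x' a‖^2/2)
          + r * (‖x a - w + r⁻¹ • x' a‖^2/2 + (f (x a) - f z)/r^2))
        + r * (∫ t in a..b, t * ‖x' t‖^2)
          ≤ (∫ t in a..b, ‖x' t‖^2) / 2) := by
    intro w hw a b ha hab
    have hfw : f w = f z := le_antisymm (hw z) (hz w)
    -- derivative of u = x - w + r⁻¹ x'
    have hu' : ∀ t ∈ Set.Ici (0:ℝ), HasDerivWithinAt (fun s => x s - w + r⁻¹ • x' s)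
        (-(r⁻¹ • gradient f (x t))) (Set.Ici 0) t := by
      intro t ht
      have h1 := ((hx t ht).sub_const w).add ((hx' t ht).const_smul r⁻¹)
      have h2 : x' t + r⁻¹ • x'' t = -(r⁻¹ • gradient f (x t)) := by
        rw [hx''e t ht]
        rw [smul_sub, smul_neg, smul_smul, inv_mul_cancel₀ hr.ne']
        module
      rwa [h2] at h1
    -- derivative of M
    have hM' : ∀ t ∈ Set.Ici (0:ℝ), HasDerivWithinAt
        (fun s => ‖x s - w + r⁻¹ • x' s‖^2/2 + (f (x s) - f z)/r^2)
        (-(⟪gradient f (x t), x t - w⟫ / r)) (Set.Ici 0) t := by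
      intro t ht
      have h1 := (hu' t ht).inner ℝ (hu' t ht)
      have h2 : (fun s => ⟪x s - w + r⁻¹ • x' s, x s - w + r⁻¹ • x' s⟫)
          = (fun s => ‖x s - w + r⁻¹ • x' s‖^2) :=
        funext fun s => real_inner_self_eq_norm_sq _
      rw [h2] at h1
      have h3 := (h1.div_const 2).add ((hg' t ht).div_const (r^2))
      have h4 : (⟪x t - w + r⁻¹ • x' t, -(r⁻¹ • gradient f (x t))⟫
            + ⟪-(r⁻¹ • gradient f (x t)), x t - w + r⁻¹ • x' t⟫)/2
            + ⟪gradient f (x t), x' t⟫/r^2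
          = -(⟪gradient f (x t), x t - w⟫ / r) := by
        simp only [inner_neg_left, inner_neg_right, real_inner_smul_left,
          real_inner_smul_right, inner_add_left, inner_add_right]
        rw [real_inner_comm (x t - w) (gradient f (x t)),
          real_inner_comm (x' t) (gradient f (x t))]
        field_simp
        ring
      rwa [h4] at h3
    have hM'c : ContinuousOn (fun t : ℝ => -(⟪gradient f (x t), x t - w⟫ / r))
        (Set.Ici 0) := by
      exact ((hGc.inner ((hxc.sub continuousOn_const))).div_const r).neg
    have hM'le : ∀ t, -(⟪gradient f (x t), x t - w⟫ / r) ≤ -((f (x t) - f z)/r) := by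
      intro t
      have h1 := grad_convex_ineq hfd hconv (x t) w
      rw [hfw] at h1
      have h2 := (div_le_div_iff_of_pos_right hr).mpr h1
      linarith
    have hMnn : ∀ t : ℝ, 0 ≤ ‖x t - w + r⁻¹ • x' t‖^2/2 + (f (x t) - f z)/r^2 := by
      intro t; have := hgnn t; positivity
    have hMftc := ftc_Ici hM' hM'c ha hab
    have hIM := hII hM'c ha hab
    have hIg := hII hgc ha hab
    have hIv := hII hvc ha hab
    have hItv : IntervalIntegrable (fun t : ℝ => t * ‖x' t‖^2) MeasureTheory.volume a b :=
      hII ((continuousOn_id).mul hvc) ha hab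
    -- K1a
    have k1a : (∫ t in a..b, (f (x t) - f z)) ≤
        r * (‖x a - w + r⁻¹ • x' a‖^2/2 + (f (x a) - f z)/r^2) := by
      have h1 : (∫ t in a..b, -(⟪gradient f (x t), x t - w⟫ / r))
          ≤ ∫ t in a..b, -((f (x t) - f z)/r) :=
        intervalIntegral.integral_mono_on hab hIM
          ((hIg.div_const r).neg) (fun t _ => hM'le t)
      rw [hMftc] at h1
      have h2 : (∫ t in a..b, -((f (x t) - f z)/r))
          = -((∫ t in a..b, (f (x t) - f z)) / r) := by
        rw [intervalIntegral.integral_neg, intervalIntegral.integral_div]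
      rw [h2] at h1
      have h3 := hMnn b
      have h4 : (∫ t in a..b, (f (x t) - f z)) / r ≤
          (‖x a - w + r⁻¹ • x' a‖^2/2 + (f (x a) - f z)/r^2)
          - (‖x b - w + r⁻¹ • x' b‖^2/2 + (f (x b) - f z)/r^2) := by linarith
      rw [div_le_iff₀ hr] at h4
      nlinarith [hMnn b]
    -- K1b
    have k1b : ‖x b - w + r⁻¹ • x' b‖^2/2 + (f (x b) - f z)/r^2
          ≤ ‖x a - w + r⁻¹ • x' a‖^2/2 + (f (x a) - f z)/r^2 := by
      have h1 : (∫ t in a..b, -(⟪gradient f (x t), x t - w⟫ / r))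
          ≤ ∫ t in a..b, (0:ℝ) :=
        intervalIntegral.integral_mono_on hab hIM intervalIntegrable_const
          (fun t _ => le_trans (hM'le t) (neg_nonpos.mpr (by have := hgnn t; positivity)))
      rw [hMftc] at h1
      simp at h1
      linarith
    refine ⟨k1a, k1b, ?_⟩
    -- derivative of N
    have hN' : ∀ t ∈ Set.Ici (0:ℝ), HasDerivWithinAt
        (fun s => s * (f (x s) - f z + ‖x' s‖^2/2)
          + r * (‖x s - w + r⁻¹ • x' s‖^2/2 + (f (x s) - f z)/r^2))
        (1 * (f (x t) - f z + ‖x' t‖^2/2) + t * (-(r * ‖x' t‖^2))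
          + r * (-(⟪gradient f (x t), x t - w⟫ / r))) (Set.Ici 0) t := by
      intro t ht
      exact ((hasDerivWithinAt_id t (Set.Ici 0)).mul (hE' t ht)).add
        ((hM' t ht).const_mul r)
    have hN'c : ContinuousOn (fun t : ℝ => 1 * (f (x t) - f z + ‖x' t‖^2/2)
        + t * (-(r * ‖x' t‖^2)) + r * (-(⟪gradient f (x t), x t - w⟫ / r)))
        (Set.Ici 0) := by
      apply ContinuousOn.add
      apply ContinuousOn.add
      · exact (continuousOn_const.mul (hgc.add (hvc.div_const 2)))
      · exact (continuousOn_id.mul ((hvc.const_smul r).neg))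
      · exact hM'c.const_smul r
    have hNftc := ftc_Ici hN' hN'c ha hab
    have hN'le : ∀ t, 0 ≤ t → 1 * (f (x t) - f z + ‖x' t‖^2/2) + t * (-(r * ‖x' t‖^2))
        + r * (-(⟪gradient f (x t), x t - w⟫ / r))
        ≤ ‖x' t‖^2/2 - r * (t * ‖x' t‖^2) := by
      intro t ht
      have h1 := grad_convex_ineq hfd hconv (x t) w
      rw [hfw] at h1
      have h2 : r * (⟪gradient f (x t), x t - w⟫ / r) = ⟪gradient f (x t), x t - w⟫ := by
        field_simp
      nlinarith
    have h1 : (∫ t in a..b, (1 * (f (x t) - f z + ‖x' t‖^2/2) + t * (-(r * ‖x' t‖^2))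
          + r * (-(⟪gradient f (x t), x t - w⟫ / r))))
        ≤ ∫ t in a..b, (‖x' t‖^2/2 - r * (t * ‖x' t‖^2)) := by
      apply intervalIntegral.integral_mono_on hab (hII hN'c ha hab)
        ((hIv.div_const 2).sub ((hItv.const_mul r)))
      intro t htt
      exact hN'le t (ha.trans htt.1)
    rw [hNftc] at h1
    have h2 : (∫ t in a..b, (‖x' t‖^2/2 - r * (t * ‖x' t‖^2)))
        = (∫ t in a..b, ‖x' t‖^2)/2 - r * (∫ t in a..b, t * ‖x' t‖^2) := by
      rw [intervalIntegral.integral_sub (hIv.div_const 2) (hItv.const_mul r),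
        intervalIntegral.integral_div, intervalIntegral.integral_const_mul]
    rw [h2] at h1
    linarith
  subst hx0 hx1
  -- combined bound from key
  have hB : ∀ w : H, (∀ y, f w ≤ f y) → ∀ T : ℝ, 0 ≤ T →
      T * (f (x T) - f z + ‖x' T‖^2/2)
        + r * (∫ t in (0:ℝ)..T, t * ‖x' t‖^2)
      ≤ r * (‖x 0 - w + r⁻¹ • x' 0‖^2/2 + (f (x 0) - f z)/r^2)
        + (f (x 0) - f z + ‖x' 0‖^2/2)/(2*r) := by
    intro w hw T hT
    have k := (key w hw 0 T le_rfl hT).2.2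
    have hMnnT : 0 ≤ ‖x T - w + r⁻¹ • x' T‖^2/2 + (f (x T) - f z)/r^2 := by
      have := hgnn T; positivity
    have hMnnT' := mul_nonneg hr.le hMnnT
    have hV := hVle 0 T le_rfl hT
    have h3 : (f (x 0) - f z + ‖x' 0‖^2/2)/r/2 = (f (x 0) - f z + ‖x' 0‖^2/2)/(2*r) := by
      ring
    linarith
  have htvnn : ∀ T : ℝ, 0 ≤ T → 0 ≤ ∫ t in (0:ℝ)..T, t * ‖x' t‖^2 := by
    intro T hT
    exact intervalIntegral.integral_nonneg hT (fun u hu => mul_nonneg hu.1 (sq_nonneg _))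
  have hEnd : ∀ w : H, (∀ y, f w ≤ f y) → ∀ T : ℝ, 0 ≤ T →
      T * (f (x T) - f z + ‖x' T‖^2/2)
      ≤ (3/(2*r)) * (f (x 0) - f z) + r * ‖x 0 - w‖^2 + (5/(4*r)) * ‖x' 0‖^2 := by
    intro w hw T hT
    have h1 := hB w hw T hT
    have h2 := mul_nonneg hr.le (htvnn T hT)
    have htri : ‖x 0 - w + r⁻¹ • x' 0‖ ≤ ‖x 0 - w‖ + r⁻¹ * ‖x' 0‖ := by
      refine (norm_add_le _ _).trans ?_
      rw [norm_smul, Real.norm_eq_abs, abs_of_pos (inv_pos.mpr hr)]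
    have h5 : (r/2) * ‖x 0 - w + r⁻¹ • x' 0‖^2
        ≤ (r/2) * (‖x 0 - w‖ + r⁻¹ * ‖x' 0‖)^2 :=
      mul_le_mul_of_nonneg_left
        (pow_le_pow_left₀ (norm_nonneg _) htri 2) (by positivity)
    have eR : r * (‖x 0 - w + r⁻¹ • x' 0‖^2/2 + (f (x 0) - f z)/r^2)
          + (f (x 0) - f z + ‖x' 0‖^2/2)/(2*r)
        = (r/2) * ‖x 0 - w + r⁻¹ • x' 0‖^2 + (3/2)*(r⁻¹*(f (x 0) - f z))
          + (r⁻¹*‖x' 0‖^2)/4 := by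
      field_simp
      ring
    have eS : (r/2) * (‖x 0 - w‖ + r⁻¹ * ‖x' 0‖)^2
        = (r/2)*‖x 0 - w‖^2 + ‖x 0 - w‖*‖x' 0‖ + (r⁻¹*‖x' 0‖^2)/2 := by
      field_simp
      ring
    have hAM : ‖x 0 - w‖*‖x' 0‖ ≤ (r/2)*‖x 0 - w‖^2 + (r⁻¹*‖x' 0‖^2)/2 := by
      have h0 : 0 ≤ r⁻¹ * (r*‖x 0 - w‖ - ‖x' 0‖)^2 := by positivity
      have e : r⁻¹ * (r*‖x 0 - w‖ - ‖x' 0‖)^2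
          = r*‖x 0 - w‖^2 - 2*(‖x 0 - w‖*‖x' 0‖) + r⁻¹*‖x' 0‖^2 := by
        field_simp
        ring
      rw [e] at h0
      linarith
    have eG1 : (3/(2*r)) * (f (x 0) - f z) = (3/2)*(r⁻¹*(f (x 0) - f z)) := by
      field_simp
    have eG2 : (5/(4*r)) * ‖x' 0‖^2 = (5/4)*(r⁻¹*‖x' 0‖^2) := by
      field_simp
    rw [eR] at h1
    rw [eS] at h5
    rw [eG1, eG2]
    have hinvnn : 0 ≤ r⁻¹*‖x' 0‖^2 := by positivity
    linarith
  -- the pointwise bound with the constant C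
  have hCnn : 0 ≤ C := by
    rw [hC]
    have := hgnn 0
    have := Metric.infDist_nonneg (s := {w : H | ∀ y, f w ≤ f y}) (x := x 0)
    positivity
  have hTE : ∀ T : ℝ, 0 ≤ T → T * (f (x T) - f z + ‖x' T‖^2/2) ≤ C := by
    intro T hT
    refine le_of_forall_pos_le_add ?_
    intro ε hε
    set S := {w : H | ∀ y, f w ≤ f y} with hS
    set d := Metric.infDist (x 0) S with hd
    have hdnn : 0 ≤ d := Metric.infDist_nonneg
    have hSne : S.Nonempty := ⟨z, hz⟩
    set δ := min 1 (ε/(r*(2*d+1))) with hδ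
    have hδpos : 0 < δ := lt_min one_pos (by positivity)
    obtain ⟨w, hwS, hww⟩ := (Metric.infDist_lt_iff hSne).mp
      (show d < d + δ by linarith)
    have h1 := hEnd w hwS T hT
    have h2 : ‖x 0 - w‖ < d + δ := by rwa [← dist_eq_norm]
    have h3 : r * ‖x 0 - w‖^2 ≤ r * (d + δ)^2 := by
      have : ‖x 0 - w‖^2 ≤ (d + δ)^2 :=
        pow_le_pow_left₀ (norm_nonneg _) h2.le 2
      exact mul_le_mul_of_nonneg_left this hr.le
    have h4 : r * (d + δ)^2 ≤ r * d^2 + ε := by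
      have hδ1 : δ ≤ 1 := min_le_left _ _
      have hδ2 : δ ≤ ε/(r*(2*d+1)) := min_le_right _ _
      have h5 : r * (2*d+1) * δ ≤ ε := by
        rw [div_eq_inv_mul] at hδ2
        have hpos : (0:ℝ) < r*(2*d+1) := by positivity
        calc r * (2*d+1) * δ ≤ r * (2*d+1) * ((r*(2*d+1))⁻¹ * ε) := by
              apply mul_le_mul_of_nonneg_left hδ2 hpos.le
          _ = ε := by field_simp
      nlinarith
    rw [hC]
    linarith
  refine ⟨⟨?_, ?_⟩, ?_, ?_, ?_⟩
  · -- integrability of f(x t) - f z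
    apply MeasureTheory.integrableOn_Ioi_of_intervalIntegral_norm_bounded
      (r * (‖x 0 - z + r⁻¹ • x' 0‖^2/2 + (f (x 0) - f z)/r^2)) 0
      (f := fun t => f (x t) - f z) (b := fun i : ℝ => i) (l := atTop) ?_ tendsto_id ?_
    · intro i
      rcases le_or_gt i 0 with hi | hi
      · rw [Set.Ioc_eq_empty (by simpa using hi)]
        exact MeasureTheory.integrableOn_empty
      · exact ((hgc.mono (fun y hy => hy.1)).integrableOn_Icc).mono_set
          Set.Ioc_subset_Icc_self
    · filter_upwards [eventually_ge_atTop (0:ℝ)] with i hi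
      have e : (∫ t in (0:ℝ)..i, ‖f (x t) - f z‖)
          = ∫ t in (0:ℝ)..i, (f (x t) - f z) := by
        apply intervalIntegral.integral_congr
        intro t htt
        rw [Set.uIcc_of_le hi] at htt
        exact Real.norm_of_nonneg (hgnn t)
      rw [e]
      exact (key z hz 0 i le_rfl hi).1
  · -- integrability of t ‖x' t‖²
    apply MeasureTheory.integrableOn_Ioi_of_intervalIntegral_norm_bounded
      ((r * (‖x 0 - z + r⁻¹ • x' 0‖^2/2 + (f (x 0) - f z)/r^2)
        + (f (x 0) - f z + ‖x' 0‖^2/2)/(2*r))/r) 0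
      (f := fun t => t * ‖x' t‖^2) (b := fun i : ℝ => i) (l := atTop) ?_ tendsto_id ?_
    · intro i
      rcases le_or_gt i 0 with hi | hi
      · rw [Set.Ioc_eq_empty (by simpa using hi)]
        exact MeasureTheory.integrableOn_empty
      · exact (((continuousOn_id.mul hvc).mono (fun y hy => hy.1)).integrableOn_Icc).mono_set
          Set.Ioc_subset_Icc_self
    · filter_upwards [eventually_ge_atTop (0:ℝ)] with i hi
      have e : (∫ t in (0:ℝ)..i, ‖t * ‖x' t‖^2‖)
          = ∫ t in (0:ℝ)..i, t * ‖x' t‖^2 := by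
        apply intervalIntegral.integral_congr
        intro t htt
        rw [Set.uIcc_of_le hi] at htt
        exact Real.norm_of_nonneg (mul_nonneg htt.1 (sq_nonneg _))
      rw [e]
      have h1 := hB z hz i hi
      have h2 := mul_nonneg hi (hEnn i)
      rw [le_div_iff₀ hr]
      nlinarith
  · -- pointwise bounds
    intro t ht
    have h1 := hTE t ht.le
    have e : t * (f (x t) - f z + ‖x' t‖^2/2)
        = (f (x t) - f z)*t + t*(‖x' t‖^2/2) := by ring
    have h2 : 0 ≤ t*(‖x' t‖^2/2) := by positivity
    have h3 : 0 ≤ (f (x t) - f z)*t := mul_nonneg (hgnn t) ht.le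
    constructor
    · rw [le_div_iff₀ ht]
      linarith
    · have h4 : ‖x' t‖^2 ≤ 2*C/t := by
        rw [le_div_iff₀ ht]
        linarith
      calc ‖x' t‖ = Real.sqrt (‖x' t‖^2) := (Real.sqrt_sq (norm_nonneg _)).symm
        _ ≤ Real.sqrt (2*C/t) := Real.sqrt_le_sqrt h4
        _ = Real.sqrt (2*C) / Real.sqrt t := Real.sqrt_div (by linarith) t
  all_goals {
  -- Part (iii) preparation
  obtain ⟨mM, hmM⟩ := tendsto_of_antitoneOn_Ici
    (F := fun t => ‖x t - z + r⁻¹ • x' t‖^2/2 + (f (x t) - f z)/r^2)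
    (fun a b ha hab => (key z hz a b ha hab).2.1) (c := 0)
    (fun t ht => by have := hgnn t; positivity)
  have hVsplit : ∀ a b : ℝ, 0 ≤ a → a ≤ b →
      (∫ s in (0:ℝ)..a, ‖x' s‖^2) + (∫ s in a..b, ‖x' s‖^2)
        = ∫ s in (0:ℝ)..b, ‖x' s‖^2 :=
    fun a b ha hab => intervalIntegral.integral_add_adjacent_intervals
      (hvint 0 a le_rfl ha) (hvint a b ha hab)
  obtain ⟨mV', hmV'⟩ := tendsto_of_antitoneOn_Ici
    (F := fun t => -(∫ s in (0:ℝ)..t, ‖x' s‖^2))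
    (c := -((f (x 0) - f z + ‖x' 0‖^2/2)/r))
    (fun a b ha hab => by
      have h1 : 0 ≤ ∫ s in a..b, ‖x' s‖^2 :=
        intervalIntegral.integral_nonneg hab (fun u _ => sq_nonneg _)
      have h2 := hVsplit a b ha hab
      linarith)
    (fun t ht => by have := hVle 0 t le_rfl ht; linarith)
  have hVlim : Tendsto (fun t => ∫ s in (0:ℝ)..t, ‖x' s‖^2) atTop (𝓝 (-mV')) := by
    have h := hmV'.neg
    simpa using h
  have htvnn2 : ∀ a b : ℝ, 0 ≤ a → a ≤ b → 0 ≤ ∫ t in a..b, t*‖x' t‖^2 :=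
    fun a b ha hab => intervalIntegral.integral_nonneg hab
      (fun u hu => mul_nonneg (ha.trans hu.1) (sq_nonneg _))
  obtain ⟨L, hL⟩ := tendsto_of_antitoneOn_Ici
    (F := fun t => t * (f (x t) - f z + ‖x' t‖^2/2)
        + r * (‖x t - z + r⁻¹ • x' t‖^2/2 + (f (x t) - f z)/r^2)
        - (∫ s in (0:ℝ)..t, ‖x' s‖^2)/2)
    (c := -((f (x 0) - f z + ‖x' 0‖^2/2)/r/2))
    (fun a b ha hab => by
      have k := (key z hz a b ha hab).2.2
      have h2 := mul_nonneg hr.le (htvnn2 a b ha hab)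
      have h3 := hVsplit a b ha hab
      linarith)
    (fun t ht => by
      have h1 := mul_nonneg ht (hEnn t)
      have h2 : 0 ≤ ‖x t - z + r⁻¹ • x' t‖^2/2 + (f (x t) - f z)/r^2 := by
        have := hgnn t; positivity
      have h3 := hVle 0 t le_rfl ht
      have h4 := mul_nonneg hr.le h2
      linarith)
  have htElim : Tendsto (fun t => t * (f (x t) - f z + ‖x' t‖^2/2)) atTop
      (𝓝 (L + (-mV')/2 - r * mM)) := by
    have h := (hL.add (hVlim.div_const 2)).sub (hmM.const_mul r)
    exact h.congr (fun t => by ring)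
  have hlim0 : L + (-mV')/2 - r * mM = 0 := by
    set aa := L + (-mV')/2 - r * mM with haa
    have ha0 : 0 ≤ aa := ge_of_tendsto htElim (by
      filter_upwards [eventually_ge_atTop (0:ℝ)] with t ht
      exact mul_nonneg ht (hEnn t))
    by_contra hne
    have hapos : 0 < aa := ha0.lt_of_ne (Ne.symm hne)
    have hev := htElim.eventually (eventually_gt_nhds (half_lt_self hapos))
    obtain ⟨T0, hT0⟩ := eventually_atTop.1 hev
    set T := max T0 1 with hTdef
    have hT1 : (1:ℝ) ≤ T := le_max_right _ _
    have hTpos : (0:ℝ) < T := lt_of_lt_of_le one_pos hT1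
    set Bd : ℝ := r * (‖x 0 - z + r⁻¹ • x' 0‖^2/2 + (f (x 0) - f z)/r^2)
        + (f (x 0) - f z + ‖x' 0‖^2/2)/r/2 with hBd
    have hbd : ∀ S, T ≤ S → aa/2 * Real.log (S/T) ≤ Bd := by
      intro S hS
      have hSpos : 0 < S := lt_of_lt_of_le hTpos hS
      have hpt : ∀ u ∈ Set.Icc T S, aa/2 * u⁻¹ ≤ f (x u) - f z + ‖x' u‖^2/2 := by
        intro u hu
        have hu0 : 0 < u := lt_of_lt_of_le hTpos hu.1
        have h5 := hT0 u (le_trans (le_max_left _ _) hu.1)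
        rw [← div_eq_mul_inv, div_le_iff₀ hu0]
        have h6 : (f (x u) - f z + ‖x' u‖^2/2) * u
            = u * (f (x u) - f z + ‖x' u‖^2/2) := mul_comm _ _
        linarith
      have hint1 : IntervalIntegrable (fun u : ℝ => aa/2 * u⁻¹)
          MeasureTheory.volume T S := by
        apply IntervalIntegrable.const_mul
        apply intervalIntegral.intervalIntegrable_inv (f := fun u : ℝ => u)
        · intro u hu
          rw [Set.uIcc_of_le hS] at hu
          exact (lt_of_lt_of_le hTpos hu.1).ne'
        · exact continuousOn_id
      have hint2 : IntervalIntegrable (fun u : ℝ => f (x u) - f z + ‖x' u‖^2/2)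
          MeasureTheory.volume T S := hII (hgc.add (hvc.div_const 2)) hTpos.le hS
      have hmono := intervalIntegral.integral_mono_on hS hint1 hint2 hpt
      have heval : (∫ u in T..S, aa/2 * u⁻¹) = aa/2 * Real.log (S/T) := by
        rw [intervalIntegral.integral_const_mul, integral_inv_of_pos hTpos hSpos]
      have hR1 : (∫ u in T..S, (f (x u) - f z + ‖x' u‖^2/2))
          = (∫ u in T..S, (f (x u) - f z)) + (∫ u in T..S, ‖x' u‖^2)/2 := by
        rw [intervalIntegral.integral_add (hII hgc hTpos.le hS)
          ((hII hvc hTpos.le hS).div_const 2), intervalIntegral.integral_div]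
      have hR2 := (key z hz T S hTpos.le hS).1
      have hR3 := (key z hz 0 T le_rfl hTpos.le).2.1
      have hR3' := mul_le_mul_of_nonneg_left hR3 hr.le
      have hR4 := hVle T S hTpos.le hS
      have hR5 := hEanti 0 T le_rfl hTpos.le
      have hR6 : (f (x T) - f z + ‖x' T‖^2/2)/r ≤ (f (x 0) - f z + ‖x' 0‖^2/2)/r :=
        (div_le_div_iff_of_pos_right hr).mpr hR5
      rw [heval, hR1] at hmono
      rw [hBd]
      linarith
    have hgrow : Tendsto (fun S => aa/2 * Real.log (S/T)) atTop atTop := by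
      apply Tendsto.const_mul_atTop (half_pos hapos)
      exact Real.tendsto_log_atTop.comp (Tendsto.atTop_div_const hTpos tendsto_id)
    obtain ⟨S, hS1, hS2⟩ := ((hgrow.eventually_gt_atTop Bd).and
      (eventually_ge_atTop T)).exists
    exact absurd (hbd S hS2) (not_le.mpr hS1)
  rw [hlim0] at htElim
  first
  | -- t * (f (x t) - f z) → 0
    (apply squeeze_zero' ?_ ?_ htElim
     · filter_upwards [eventually_ge_atTop (0:ℝ)] with t ht
       exact mul_nonneg ht (hgnn t)
     · filter_upwards [eventually_ge_atTop (0:ℝ)] with t ht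
       have h2 : 0 ≤ t * (‖x' t‖^2/2) := by positivity
       have e : t * (f (x t) - f z + ‖x' t‖^2/2)
          = t * (f (x t) - f z) + t*(‖x' t‖^2/2) := by ring
       linarith)
  | -- sqrt t * ‖x' t‖ → 0
    (have htv0 : Tendsto (fun t => t * ‖x' t‖^2) atTop (𝓝 0) := by
       apply squeeze_zero' ?_ ?_ (show Tendsto
           (fun t => 2 * (t * (f (x t) - f z + ‖x' t‖^2/2))) atTop (𝓝 0) by
         simpa using htElim.const_mul 2)
       · filter_upwards [eventually_ge_atTop (0:ℝ)] with t ht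
         exact mul_nonneg ht (sq_nonneg _)
       · filter_upwards [eventually_ge_atTop (0:ℝ)] with t ht
         have h1 := mul_nonneg ht (hgnn t)
         have e : 2 * (t * (f (x t) - f z + ‖x' t‖^2/2))
            = 2*(t*(f (x t) - f z)) + t*‖x' t‖^2 := by ring
         linarith
     have hsq : Tendsto (fun t => Real.sqrt (t * ‖x' t‖^2)) atTop (𝓝 0) := by
       have h := (Real.continuous_sqrt.tendsto 0).comp htv0
       simpa only [Function.comp_def, Real.sqrt_zero] using h
     refine hsq.congr' ?_
     filter_upwards [eventually_ge_atTop (0:ℝ)] with t ht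
     rw [Real.sqrt_mul ht, Real.sqrt_sq (norm_nonneg _)]) }


/-- **Heavy Ball with Friction: convergence rates (Theorem 2.1).**
If `f` is a convex `C¹` function on a real Hilbert space with a minimizer `z`,
and `x` is a `C²` solution on `[0,∞)` of `ẍ + r ẋ + ∇f(x) = 0` with `x(0) = x₀`,
`ẋ(0) = x₁`, then the values and the velocity satisfy the integral estimates (i),
the pointwise rates (ii) with constant `C(x₀,x₁)`, and the `o`-rates (iii). -/
theorem hbf_convergence_rates
    {H : Type*} [NormedAddCommGroup H] [InnerProductSpace ℝ H] [CompleteSpace H]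
    (f : H → ℝ) (hf : ContDiff ℝ 1 f) (hconv : ConvexOn ℝ Set.univ f)
    (r : ℝ) (hr : 0 < r)
    (z : H) (hz : ∀ y, f z ≤ f y)
    (x x' x'' : ℝ → H)
    (hx : ∀ t ∈ Set.Ici (0:ℝ), HasDerivWithinAt x (x' t) (Set.Ici 0) t)
    (hx' : ∀ t ∈ Set.Ici (0:ℝ), HasDerivWithinAt x' (x'' t) (Set.Ici 0) t)
    (hx''c : ContinuousOn x'' (Set.Ici 0))
    (heq : ∀ t ∈ Set.Ici (0:ℝ), x'' t + r • x' t + gradient f (x t) = 0)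
    (x₀ x₁ : H) (hx0 : x 0 = x₀) (hx1 : x' 0 = x₁)
    (C : ℝ)
    (hC : C = (3 / (2 * r)) * (f x₀ - f z)
        + r * (Metric.infDist x₀ {w : H | ∀ y, f w ≤ f y}) ^ 2
        + (5 / (4 * r)) * ‖x₁‖ ^ 2) :
    (MeasureTheory.IntegrableOn (fun t => f (x t) - f z) (Set.Ioi 0) ∧
        MeasureTheory.IntegrableOn (fun t => t * ‖x' t‖ ^ 2) (Set.Ioi 0)) ∧
    (∀ t : ℝ, 0 < t →
        f (x t) - f z ≤ C / t ∧ ‖x' t‖ ≤ Real.sqrt (2 * C) / Real.sqrt t) ∧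
    (Tendsto (fun t => t * (f (x t) - f z)) atTop (𝓝 0) ∧
        Tendsto (fun t => Real.sqrt t * ‖x' t‖) atTop (𝓝 0)) := by
  exact hbf_convergence_rates_aux f hf hconv r hr z hz x x' x'' hx hx' hx''c heq
    x₀ x₁ hx0 hx1 C hC
end
end

section
/- Let H be a real Hilbert space and let f : H → ℝ be of class C¹ and μ-strongly convex for some μ > 0, with unique minimizer x*. Let x : [0,∞) → H be twice continuously differentiable and satisfy ẍ(t) + 2√μ ẋ(t) + ∇f(x(t)) = 0 for all t ≥ 0, with x(0) = x₀ and ẋ(0) = x₁. Then for all t ≥ 0, f(x(t)) − f(x*) ≤ C e^{−√μ t}, where C := f(x₀) − f(x*) + μ‖x₀ − x*‖² + ‖x₁‖². -/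
open Set Filter Topology MeasureTheory Metric Bornology
open scoped RealInnerProductSpace NNReal

noncomputable section

lemma grad_lower_bound {H : Type*} [NormedAddCommGroup H] [InnerProductSpace ℝ H]
    [CompleteSpace H] (f : H → ℝ) (hf : ContDiff ℝ 1 f) (μ : ℝ)
    (hsc : ConvexOn ℝ Set.univ (fun y => f y - μ / 2 * ‖y‖ ^ 2)) (a b : H) :
    f a + ⟪gradient f a, b - a⟫ + μ / 2 * ‖b - a‖ ^ 2 ≤ f b := by
  set v := b - a with hv
  have hline : ∀ s : ℝ, HasDerivAt (fun s : ℝ => a + s • v) v s := by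
    intro s
    simpa using ((hasDerivAt_id s).smul_const v).const_add a
  have hfd : HasDerivAt (fun s : ℝ => f (a + s • v)) ⟪gradient f a, v⟫ 0 := by
    have h0 : HasGradientAt f (gradient f a) a :=
      ((hf.differentiable one_ne_zero) a).hasGradientAt
    have h0' : HasFDerivAt f ((InnerProductSpace.toDual ℝ H) (gradient f a)) (a + (0:ℝ) • v) := by
      simpa using h0.hasFDerivAt
    have := h0'.comp_hasDerivAt 0 (hline 0)
    rw [InnerProductSpace.toDual_apply_apply] at this; exact this
  have hnd : HasDerivAt (fun s : ℝ => ‖a + s • v‖ ^ 2) (2 * ⟪a, v⟫) 0 := by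
    have h := (hline 0).inner ℝ (hline 0)
    simp only [zero_smul, add_zero] at h
    have : (fun s : ℝ => ‖a + s • v‖ ^ 2) = fun s : ℝ => ⟪a + s • v, a + s • v⟫ := by
      funext s; rw [real_inner_self_eq_norm_sq]
    rw [this]
    exact h.congr_deriv (by rw [real_inner_comm]; ring)
  have hφd : HasDerivAt (fun s : ℝ => f (a + s • v) - μ / 2 * ‖a + s • v‖ ^ 2)
      (⟪gradient f a, v⟫ - μ / 2 * (2 * ⟪a, v⟫)) 0 := hfd.sub (hnd.const_mul (μ / 2))
  have hφc : ConvexOn ℝ Set.univ (fun s : ℝ => f (a + s • v) - μ / 2 * ‖a + s • v‖ ^ 2) := by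
    have := hsc.comp_affineMap (AffineMap.lineMap a b)
    have he : ∀ s : ℝ, AffineMap.lineMap a b s = a + s • v := by
      intro s; simp [AffineMap.lineMap_apply_module, hv]; module
    have hset : (AffineMap.lineMap a b : ℝ →ᵃ[ℝ] H) ⁻¹' Set.univ = Set.univ := by simp
    rw [hset] at this
    simpa only [Function.comp_def, he] using this
  have hslope := hφc.le_slope_of_hasDerivAt (mem_univ (0:ℝ)) (mem_univ 1) one_pos hφd
  simp only [slope_def_field, one_smul, zero_smul, add_zero] at hslope
  have hb : a + v = b := by simp [hv]
  rw [hb] at hslope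
  rw [sub_zero, div_one] at hslope
  have hnorm : ‖b‖ ^ 2 = ‖a‖ ^ 2 + 2 * ⟪a, v⟫ + ‖v‖ ^ 2 := by
    rw [← hb, norm_add_sq_real]
  have hmu : μ / 2 * ‖b‖ ^ 2 = μ / 2 * ‖a‖ ^ 2 + μ * ⟪a, v⟫ + μ / 2 * ‖v‖ ^ 2 := by
    rw [hnorm]; ring
  linarith [hslope, hmu]

lemma key_alg {H : Type*} [NormedAddCommGroup H] [InnerProductSpace ℝ H]
    (r : ℝ) (hr : 0 < r) (u w g : H) (F : ℝ)
    (hsc : F + r ^ 2 / 2 * ‖w‖ ^ 2 ≤ ⟪g, w⟫) :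
    ⟪g, u⟫ + ⟪u + r • w, -(r • u) - g⟫ + r * (F + 1 / 2 * ⟪u + r • w, u + r • w⟫) ≤ 0 := by
  have h1 : ⟪u + r • w, -(r • u) - g⟫
      = -(r * ⟪u, u⟫) - ⟪u, g⟫ - r ^ 2 * ⟪w, u⟫ - r * ⟪w, g⟫ := by
    simp [inner_add_left, inner_sub_right, inner_neg_right, real_inner_smul_left,
      real_inner_smul_right]
    ring
  have h2 : ⟪u + r • w, u + r • w⟫
      = ⟪u, u⟫ + r * ⟪u, w⟫ + r * ⟪w, u⟫ + r ^ 2 * ⟪w, w⟫ := by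
    simp only [inner_add_left, inner_add_right, real_inner_smul_left, real_inner_smul_right]
    ring
  rw [h1, h2]
  have c1 : ⟪u, g⟫ = ⟪g, u⟫ := real_inner_comm g u
  have c2 : ⟪u, w⟫ = ⟪w, u⟫ := real_inner_comm w u
  have c3 : ⟪w, g⟫ = ⟪g, w⟫ := real_inner_comm g w
  have c4 : ⟪w, w⟫ = ‖w‖ ^ 2 := real_inner_self_eq_norm_sq w
  have huu : (0:ℝ) ≤ ⟪u, u⟫ := real_inner_self_nonneg
  have heq : ⟪g, u⟫ + (-(r * ⟪u, u⟫) - ⟪u, g⟫ - r ^ 2 * ⟪w, u⟫ - r * ⟪w, g⟫)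
      + r * (F + 1 / 2 * (⟪u, u⟫ + r * ⟪u, w⟫ + r * ⟪w, u⟫ + r ^ 2 * ⟪w, w⟫))
      = -(r * ⟪u, u⟫) / 2 + r * (F + r ^ 2 / 2 * ‖w‖ ^ 2) - r * ⟪g, w⟫ := by
    simp only [c1, c2, c3, c4]; ring
  rw [heq]
  have hm : r * (F + r ^ 2 / 2 * ‖w‖ ^ 2) ≤ r * ⟪g, w⟫ := mul_le_mul_of_nonneg_left hsc hr.le
  have hA : 0 ≤ r * ⟪u, u⟫ := mul_nonneg hr.le huu
  linarith [hm, hA]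

lemma half_sq_le {H : Type*} [NormedAddCommGroup H] [InnerProductSpace ℝ H]
    (r : ℝ) (hr2 : 0 ≤ r) (a d : H) :
    1 / 2 * ⟪a + r • d, a + r • d⟫ ≤ ‖a‖ ^ 2 + r ^ 2 * ‖d‖ ^ 2 := by
  have h1 := norm_add_sq_real a (r • d)
  have h2 := norm_sub_sq_real a (r • d)
  have h3 : ‖r • d‖ ^ 2 = r ^ 2 * ‖d‖ ^ 2 := by
    rw [norm_smul, Real.norm_eq_abs, mul_pow, sq_abs]
  rw [real_inner_self_eq_norm_sq]
  nlinarith [sq_nonneg (‖a - r • d‖), h1, h2, h3]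

/-- **Heavy ball with friction, strongly convex case (Theorem 2.2).**
If `f` is `C¹` and `μ`-strongly convex (i.e. `f - (μ/2)‖·‖²` is convex), with unique
minimizer `x*`, and `x` is a `C²` solution of `ẍ + 2√μ ẋ + ∇f(x) = 0` on `[0,∞)` with
`x(0)=x₀`, `ẋ(0)=x₁`, then `f(x(t)) - f(x*) ≤ C e^{-√μ t}` where
`C = f(x₀) - f(x*) + μ‖x₀ - x*‖² + ‖x₁‖²`. -/
theorem hbf_strongly_convex_exponential_rate
    {H : Type*} [NormedAddCommGroup H] [InnerProductSpace ℝ H] [CompleteSpace H]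
    (f : H → ℝ) (hf : ContDiff ℝ 1 f)
    (μ : ℝ) (hμ : 0 < μ)
    (hsc : ConvexOn ℝ Set.univ (fun y => f y - μ / 2 * ‖y‖ ^ 2))
    (xstar : H) (hxstar : ∀ y, f xstar ≤ f y)
    (x x' x'' : ℝ → H)
    (hx : ∀ t ∈ Set.Ici (0:ℝ), HasDerivWithinAt x (x' t) (Set.Ici 0) t)
    (hx' : ∀ t ∈ Set.Ici (0:ℝ), HasDerivWithinAt x' (x'' t) (Set.Ici 0) t)
    (hx''c : ContinuousOn x'' (Set.Ici 0))
    (heq : ∀ t ∈ Set.Ici (0:ℝ),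
        x'' t + (2 * Real.sqrt μ) • x' t + gradient f (x t) = 0)
    (x₀ x₁ : H) (hx0 : x 0 = x₀) (hx1 : x' 0 = x₁)
    (C : ℝ) (hC : C = f x₀ - f xstar + μ * ‖x₀ - xstar‖ ^ 2 + ‖x₁‖ ^ 2) :
    ∀ t ∈ Set.Ici (0:ℝ), f (x t) - f xstar ≤ C * Real.exp (-(Real.sqrt μ) * t) := by
  set r := Real.sqrt μ with hrdef
  have hr : 0 < r := Real.sqrt_pos.mpr hμ
  have hr2 : r ^ 2 = μ := Real.sq_sqrt hμ.le
  set v : ℝ → H := fun s => x' s + r • (x s - xstar) with hvdef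
  set E : ℝ → ℝ := fun s => f (x s) - f xstar + 1 / 2 * ⟪v s, v s⟫ with hEdef
  set E' : ℝ → ℝ := fun s => ⟪gradient f (x s), x' s⟫ + ⟪v s, x'' s + r • x' s⟫ with hE'def
  set G : ℝ → ℝ := fun s => E s * Real.exp (r * s) with hGdef
  -- derivative of v
  have hvd : ∀ s ∈ Ici (0:ℝ), HasDerivWithinAt v (x'' s + r • x' s) (Ici 0) s := by
    intro s hs
    exact (hx' s hs).add (((hx s hs).sub_const xstar).const_smul r)
  -- derivative of E
  have hEd : ∀ s ∈ Ici (0:ℝ), HasDerivWithinAt E (E' s) (Ici 0) s := by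
    intro s hs
    have hgrad : HasGradientAt f (gradient f (x s)) (x s) :=
      ((hf.differentiable one_ne_zero) (x s)).hasGradientAt
    have h1 : HasDerivWithinAt (fun t => f (x t))
        ⟪gradient f (x s), x' s⟫ (Ici 0) s := by
      have := hgrad.hasFDerivAt.comp_hasDerivWithinAt s (hx s hs)
      rw [InnerProductSpace.toDual_apply_apply] at this; exact this
    have h2 : HasDerivWithinAt (fun t => ⟪v t, v t⟫)
        (⟪v s, x'' s + r • x' s⟫ + ⟪x'' s + r • x' s, v s⟫) (Ici 0) s :=
      (hvd s hs).inner ℝ (hvd s hs)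
    have h3 := (h1.sub_const (f xstar)).add (h2.const_mul (1 / 2))
    have hcc : ⟪x'' s + r • x' s, v s⟫ = ⟪v s, x'' s + r • x' s⟫ :=
      real_inner_comm _ _
    have : ⟪gradient f (x s), x' s⟫ + 1 / 2 *
        (⟪v s, x'' s + r • x' s⟫ + ⟪x'' s + r • x' s, v s⟫) = E' s := by
      rw [hcc, hE'def]; ring
    rw [← this]
    exact h3
  -- derivative of G
  have hGd : ∀ s ∈ Ici (0:ℝ), HasDerivWithinAt G
      (E' s * Real.exp (r * s) + E s * (Real.exp (r * s) * r)) (Ici 0) s := by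
    intro s hs
    have hexp : HasDerivWithinAt (fun t : ℝ => Real.exp (r * t))
        (Real.exp (r * s) * r) (Ici 0) s := by
      simpa using (((hasDerivAt_id s).const_mul r).exp).hasDerivWithinAt (s := Ici 0)
    exact (hEd s hs).mul hexp
  -- key inequality : E' s + r * E s ≤ 0 on Ici 0
  have key : ∀ s ∈ Ici (0:ℝ), E' s + r * E s ≤ 0 := by
    intro s hs
    have hcomb : x'' s + r • x' s = -(r • x' s) - gradient f (x s) := by
      have h := heq s hs
      rw [add_assoc] at h
      have hx2 : x'' s = -((2 * r) • x' s + gradient f (x s)) :=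
        eq_neg_of_add_eq_zero_left h
      rw [hx2]
      module
    have hsc' : (f (x s) - f xstar) + r ^ 2 / 2 * ‖x s - xstar‖ ^ 2
        ≤ ⟪gradient f (x s), x s - xstar⟫ := by
      have h := grad_lower_bound f hf μ hsc (x s) xstar
      have hneg : xstar - x s = -(x s - xstar) := by abel
      rw [hneg, inner_neg_right, norm_neg] at h
      rw [hr2]
      linarith
    have := key_alg r hr (x' s) (x s - xstar) (gradient f (x s))
      (f (x s) - f xstar) hsc'
    simp only [hE'def, hEdef, hvdef, hcomb]
    convert this using 3
  -- G is antitone on Ici 0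
  have hGanti : AntitoneOn G (Ici 0) := by
    apply antitoneOn_of_hasDerivWithinAt_nonpos (convex_Ici 0)
    · exact fun s hs => ((hGd s hs).continuousWithinAt)
    · intro s hs
      rw [interior_Ici] at hs ⊢
      exact (hGd s (Ioi_subset_Ici_self hs)).mono Set.Ioi_subset_Ici_self
    · intro s hs
      rw [interior_Ici] at hs
      have h1 := key s (Ioi_subset_Ici_self hs)
      have h2 : (0:ℝ) < Real.exp (r * s) := Real.exp_pos _
      nlinarith [h1, h2]
  -- E 0 ≤ C
  have hE0 : E 0 ≤ C := by
    have hhalf := half_sq_le r hr.le x₁ (x₀ - xstar)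
    have hEq : E 0 = f x₀ - f xstar + 1 / 2 * ⟪x₁ + r • (x₀ - xstar), x₁ + r • (x₀ - xstar)⟫ := by
      simp only [hEdef, hvdef, hx0, hx1]
    rw [hEq, hC, ← hr2]
    linarith [hhalf]
  -- conclude
  intro t ht
  have hGle : G t ≤ G 0 := hGanti (self_mem_Ici) ht ht
  have hG0 : G 0 = E 0 := by simp [hGdef]
  have hEt : E t * Real.exp (r * t) ≤ C := by
    rw [hG0] at hGle
    calc E t * Real.exp (r * t) = G t := rfl
    _ ≤ E 0 := hGle
    _ ≤ C := hE0
  have hfE : f (x t) - f xstar ≤ E t := by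
    have : (0:ℝ) ≤ ⟪v t, v t⟫ := real_inner_self_nonneg
    simp only [hEdef]
    linarith
  have hexp : (0:ℝ) < Real.exp (r * t) := Real.exp_pos _
  have hfinal : E t ≤ C * Real.exp (-r * t) := by
    rw [neg_mul, Real.exp_neg, mul_comm C, ← div_eq_inv_mul, le_div_iff₀ hexp]
    exact hEt
  calc f (x t) - f xstar ≤ E t := hfE
  _ ≤ C * Real.exp (-r * t) := hfinal
end
end

section
/- Let H be a real Hilbert space, let f : H → ℝ be differentiable with ∇f Lipschitz continuous on every bounded subset of H and inf_H f > −∞, let φ : H → [0,∞) be a damping potential, and let x : [0,∞) → H be a strong global solution of the differential inclusion 0 ∈ ẍ(t) + ∂φ(ẋ(t)) + ∇f(x(t)). Then: (i) the global energy t ↦ f(x(t)) − inf_H f + (1/2)‖ẋ(t)‖² is nonincreasing on [0,∞); (ii) sup_{t≥0} ‖ẋ(t)‖ < ∞ and ∫₀^∞ φ(ẋ(t)) dt < ∞; (iii) if moreover the trajectory x is bounded, then ẋ is Lipschitz continuous on [0,∞) (equivalently, the acceleration ẍ is essentially bounded on [0,∞)); (iv) if in addition there exist p ≥ 1 and r >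 0 with φ(u) ≥ r‖u‖^p for all u ∈ H, then ‖ẋ(t)‖ → 0 as t → ∞. -/
open Set Filter Topology MeasureTheory Metric Bornology
open scoped RealInnerProductSpace NNReal

/-- Core real FTC-type inequality: a Lipschitz function with a.e. derivative bounded
above by a continuous function `m` satisfies `g b - g a ≤ ∫ m`. -/
lemma lip_ae_deriv_le {g m : ℝ → ℝ} {a b : ℝ} {L : ℝ≥0} (hab : a < b)
    (hg : LipschitzOnWith L g (Set.Icc a b))
    (hm : ContinuousOn m (Set.Icc a b))
    (hae : ∀ᵐ t ∂(volume : Measure ℝ), t ∈ Set.Ioo a b →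
      ∃ g', HasDerivAt g g' t ∧ g' ≤ m t) :
    g b - g a ≤ ∫ t in a..b, m t := by
  obtain ⟨Mm, hMm⟩ := isCompact_Icc.exists_bound_of_continuousOn hm
  have hMm0 : 0 ≤ Mm := le_trans (norm_nonneg _) (hMm a ⟨le_rfl, hab.le⟩)
  set c : ℝ := (L : ℝ) + Mm + 1 with hc_def
  have hc : 0 < c := by positivity
  have hmInt : IntervalIntegrable m volume a b := by
    apply ContinuousOn.intervalIntegrable
    rwa [Set.uIcc_of_le hab.le]
  refine le_of_forall_pos_le_add fun ε hε => ?_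
  set ε0 : ℝ := ε / (2 * (b - a)) with hε0_def
  have hε0 : 0 < ε0 := by
    apply div_pos hε; nlinarith
  -- the bad set
  set N : Set ℝ := {t | ¬ (t ∈ Set.Ioo a b → ∃ g', HasDerivAt g g' t ∧ g' ≤ m t)} with hN_def
  have hNnull : volume (N ∪ {a}) = 0 := by
    rw [MeasureTheory.ae_iff] at hae
    refine le_antisymm ?_ zero_le
    calc volume (N ∪ {a}) ≤ volume N + volume ({a} : Set ℝ) := measure_union_le _ _
    _ = 0 := by rw [hae, Real.volume_singleton]; simp
  obtain ⟨U, hNU, hUopen, hUvol⟩ :=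
    Set.exists_isOpen_lt_of_lt (N ∪ {a}) (ENNReal.ofReal (ε / (2 * c)))
      (by rw [hNnull]; exact ENNReal.ofReal_pos.2 (by positivity))
  have hUfin : volume U ≠ ⊤ := (hUvol.trans_le le_top).ne
  -- the auxiliary monotone Lipschitz function ν
  set ν : ℝ → ℝ := fun t => (volume (U ∩ Set.Ioc a t)).toReal with hν_def
  have hνfin : ∀ t, volume (U ∩ Set.Ioc a t) ≠ ⊤ :=
    fun t => (lt_of_le_of_lt (measure_mono Set.inter_subset_left) (hUvol.trans
      ENNReal.ofReal_lt_top)).ne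
  have hνadd : ∀ s t : ℝ, a ≤ s → s ≤ t →
      ν t - ν s = (volume (U ∩ Set.Ioc s t)).toReal := by
    intro s t has hst
    have hsplit : U ∩ Set.Ioc a t = (U ∩ Set.Ioc a s) ∪ (U ∩ Set.Ioc s t) := by
      rw [← Set.inter_union_distrib_left, Set.Ioc_union_Ioc_eq_Ioc has hst]
    have hdisj : Disjoint (U ∩ Set.Ioc a s) (U ∩ Set.Ioc s t) := by
      refine Set.disjoint_left.2 fun z hz hz' => ?_
      exact absurd hz'.2.1 (not_lt.2 hz.2.2)
    have hmeas : MeasurableSet (U ∩ Set.Ioc s t) :=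
      (hUopen.measurableSet.inter measurableSet_Ioc)
    have := measure_union (μ := (volume : MeasureTheory.Measure ℝ)) hdisj hmeas
    rw [← hsplit] at this
    rw [hν_def]
    simp only
    rw [this, ENNReal.toReal_add (hνfin s) ((lt_of_le_of_lt (measure_mono
      Set.inter_subset_left) (hUvol.trans ENNReal.ofReal_lt_top)).ne)]
    ring
  have hνslope : ∀ s t : ℝ, a ≤ s → s ≤ t → 0 ≤ ν t - ν s ∧ ν t - ν s ≤ t - s := by
    intro s t has hst
    rw [hνadd s t has hst]
    constructor
    · exact ENNReal.toReal_nonneg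
    · have : volume (U ∩ Set.Ioc s t) ≤ ENNReal.ofReal (t - s) := by
        refine le_trans (measure_mono Set.inter_subset_right) ?_
        rw [Real.volume_Ioc]
      calc (volume (U ∩ Set.Ioc s t)).toReal ≤ (ENNReal.ofReal (t - s)).toReal :=
            ENNReal.toReal_mono ENNReal.ofReal_ne_top this
        _ = t - s := ENNReal.toReal_ofReal (by linarith)
  have hνcont : ContinuousOn ν (Set.Icc a b) := by
    have : LipschitzOnWith 1 ν (Set.Icc a b) := by
      refine LipschitzOnWith.of_dist_le_mul fun s hs t ht => ?_
      rw [NNReal.coe_one, one_mul, Real.dist_eq, Real.dist_eq]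
      rcases le_total s t with h | h
      · obtain ⟨h1, h2⟩ := hνslope s t hs.1 h
        rw [abs_of_nonpos (by linarith), abs_of_nonpos (by linarith)]; linarith
      · obtain ⟨h1, h2⟩ := hνslope t s ht.1 h
        rw [abs_of_nonneg (by linarith), abs_of_nonneg (by linarith)]; linarith
    exact this.continuousOn
  -- the fencing argument
  set F : ℝ → ℝ := fun t => g t - c * ν t with hF_def
  set B : ℝ → ℝ := fun t => g a + (∫ s in a..t, m s) + ε0 * (t - a) with hB_def
  set F' : ℝ → ℝ := fun t => m t + ε0 / 2 with hF'_def
  set B' : ℝ → ℝ := fun t => m t + ε0 with hB'_def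
  have key : F b ≤ B b := by
    refine image_le_of_liminf_slope_right_lt_deriv_boundary'
      (f := F) (f' := F') (B := B) (B' := B') ?hf ?hf' ?ha ?hB ?hB' ?bound ⟨hab.le, le_rfl⟩
    case hf => exact (hg.continuousOn.sub ((continuousOn_const.mul hνcont)))
    case ha =>
      have : ν a = 0 := by
        rw [hν_def]; simp
      simp [hF_def, hB_def, this]
    case hB =>
      refine (continuousOn_const.add ?_).add ((continuousOn_const.mul
        (continuousOn_id.sub continuousOn_const)))
      have := intervalIntegral.continuousOn_primitive_interval
        (f := m) (a := a) (b := b) (μ := volume) ?_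
      · rwa [Set.uIcc_of_le hab.le] at this
      · rw [Set.uIcc_of_le hab.le]
        exact hm.integrableOn_compact isCompact_Icc
    case hB' =>
      intro t ht
      have hInt : IntervalIntegrable m volume a t := by
        refine hmInt.mono_set ?_
        rw [Set.uIcc_of_le ht.1, Set.uIcc_of_le hab.le]
        exact Set.Icc_subset_Icc le_rfl ht.2.le
      have hmeas : StronglyMeasurableAtFilter m (𝓝[Set.Ioi t] t) volume := by
        refine ⟨Set.Icc a b, ?_, (hm.aestronglyMeasurable measurableSet_Icc)⟩
        refine Filter.mem_of_superset (inter_mem_nhdsWithin (Set.Ioi t)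
          (Iic_mem_nhds ht.2)) ?_
        exact fun z hz => ⟨ht.1.trans hz.1.le, hz.2⟩
      have hcw : ContinuousWithinAt m (Set.Ioi t) t := by
        have h1 : ContinuousWithinAt m (Set.Icc a b) t := hm t ⟨ht.1, ht.2.le⟩
        refine h1.mono_of_mem_nhdsWithin ?_
        refine Filter.mem_of_superset (inter_mem_nhdsWithin (Set.Ioi t)
          (Iio_mem_nhds ht.2)) ?_
        exact fun z hz => ⟨ht.1.trans hz.1.le, hz.2.le⟩
      have h1 : HasDerivWithinAt (fun u => ∫ s in a..u, m s) (m t) (Set.Ici t) t :=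
        intervalIntegral.integral_hasDerivWithinAt_right hInt hmeas hcw
      have h2 : HasDerivWithinAt (fun u => ε0 * (u - a)) ε0 (Set.Ici t) t := by
        simpa using (((hasDerivAt_id t).sub_const a).const_mul ε0).hasDerivWithinAt
      have h3 := ((hasDerivWithinAt_const t (Set.Ici t) (g a)).add h1).add h2
      rw [zero_add] at h3
      exact h3
    case bound =>
      intro t _ _
      simp only [hF'_def, hB'_def]
      linarith
    case hf' =>
      intro t ht r hr
      by_cases htU : t ∈ U
      · -- inside the open set: the ν term decreases the slope by c
        obtain ⟨η, hη, hball⟩ := Metric.isOpen_iff.1 hUopen t htU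
        have hmin : t < min b (t + η) := lt_min ht.2 (by linarith)
        refine Filter.Eventually.frequently ?_
        filter_upwards [Ioo_mem_nhdsGT_of_mem (Set.left_mem_Ico.mpr hmin)] with z hz
        have htz : t < z := hz.1
        have hzb : z ≤ b := (hz.2.trans_le (min_le_left _ _)).le
        have hsub : Set.Ioc t z ⊆ U := by
          intro w hw
          have hzη : z < t + η := lt_of_lt_of_le hz.2 (min_le_right _ _)
          have : dist w t < η := by
            rw [Real.dist_eq, abs_of_pos (by linarith [hw.1])]
            linarith [hw.2]
          exact hball (Metric.mem_ball.mpr this)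
        have hν_eq : ν z - ν t = z - t := by
          rw [hνadd t z ht.1 htz.le, Set.inter_eq_right.2 hsub, Real.volume_Ioc,
            ENNReal.toReal_ofReal (by linarith)]
        have hgz : g z - g t ≤ (L : ℝ) * (z - t) := by
          have := hg.dist_le_mul z ⟨ht.1.trans htz.le, hzb⟩ t ⟨ht.1, ht.2.le⟩
          rw [Real.dist_eq, Real.dist_eq] at this
          calc g z - g t ≤ |g z - g t| := le_abs_self _
            _ ≤ (L : ℝ) * |z - t| := this
            _ = (L : ℝ) * (z - t) := by rw [abs_of_pos (by linarith)]
        have hslope : slope F t z ≤ (L : ℝ) - c := by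
          rw [slope_def_field]
          have hFz : F z - F t ≤ ((L : ℝ) - c) * (z - t) := by
            simp only [hF_def]
            have : c * (ν z - ν t) = c * (z - t) := by rw [hν_eq]
            nlinarith [hν_eq]
          rw [div_le_iff₀ (by linarith)]
          linarith [hFz]
        have hmt : |m t| ≤ Mm := by
          have := hMm t ⟨ht.1, ht.2.le⟩
          rwa [Real.norm_eq_abs] at this
        calc slope F t z ≤ (L : ℝ) - c := hslope
          _ = -Mm - 1 := by rw [hc_def]; ring
          _ < m t + ε0 / 2 := by
              have : -Mm ≤ m t := by cases abs_le.1 hmt; linarith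
              linarith
          _ < r := hr
      · -- outside: the derivative exists and is ≤ m t
        have htN : t ∉ N ∪ {a} := fun h => htU (hNU h)
        have hta : t ≠ a := fun h => htN (Or.inr h)
        have htIoo : t ∈ Set.Ioo a b := ⟨lt_of_le_of_ne ht.1 (Ne.symm hta), ht.2⟩
        have htN' : t ∉ N := fun h => htN (Or.inl h)
        have hder : ∃ g', HasDerivAt g g' t ∧ g' ≤ m t := by
          by_contra h
          exact htN' (by rw [hN_def]; exact fun h' => absurd (h' htIoo) h)
        obtain ⟨g', hd, hle⟩ := hder
        have hgr : g' < r := by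
          have hr' : m t + ε0 / 2 < r := by simpa only [hF'_def] using hr
          linarith
        have hslope_g : ∀ᶠ z in 𝓝[>] t, slope g t z < r := by
          have h1 : Tendsto (slope g t) (𝓝[≠] t) (𝓝 g') := hasDerivAt_iff_tendsto_slope.1 hd
          have h2 : ∀ᶠ z in 𝓝[≠] t, slope g t z < r := h1.eventually_lt_const hgr
          exact h2.filter_mono (nhdsWithin_mono t fun z hz => ne_of_gt hz)
        refine Filter.Eventually.frequently ?_
        filter_upwards [hslope_g, self_mem_nhdsWithin] with z hz1 hz2
        have htz : t < z := hz2
        have hν_nonneg : 0 ≤ ν z - ν t := (hνslope t z ht.1 htz.le).1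
        have hsl : slope F t z ≤ slope g t z := by
          rw [slope_def_field, slope_def_field]
          have hFz : F z - F t = (g z - g t) - c * (ν z - ν t) := by
            simp only [hF_def]; ring
          rw [hFz, sub_div]
          have : 0 ≤ c * (ν z - ν t) / (z - t) := by
            apply div_nonneg (by positivity) (by linarith)
          linarith
        linarith
  -- conclude
  have hνb : ν b ≤ ε / (2 * c) := by
    have h1 : volume (U ∩ Set.Ioc a b) ≤ ENNReal.ofReal (ε / (2 * c)) :=
      le_trans (measure_mono Set.inter_subset_left) hUvol.le
    calc ν b ≤ (ENNReal.ofReal (ε / (2 * c))).toReal :=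
          ENNReal.toReal_mono ENNReal.ofReal_ne_top h1
      _ = ε / (2 * c) := ENNReal.toReal_ofReal (by positivity)
  have hνb0 : 0 ≤ ν b := ENNReal.toReal_nonneg
  have hε0b : ε0 * (b - a) = ε / 2 := by
    rw [hε0_def]
    have hba : b - a ≠ 0 := by have := hab; intro h; linarith [sub_eq_zero.1 h]
    field_simp
  have hcν : c * ν b ≤ ε / 2 := by
    have h2 : c * ν b ≤ c * (ε / (2 * c)) := mul_le_mul_of_nonneg_left hνb hc.le
    have h3 : c * (ε / (2 * c)) = ε / 2 := by
      field_simp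
    linarith
  have hkey2 : g b - c * ν b ≤ (g a + ∫ s in a..b, m s) + ε0 * (b - a) := key
  clear_value ν ε0 c
  linarith

noncomputable section

variable {H : Type*} [NormedAddCommGroup H] [InnerProductSpace ℝ H] [CompleteSpace H]

/-- The convex subdifferential of `φ` at `u`. -/
def subdiff (φ : H → ℝ) (u : H) : Set H :=
  {ξ : H | ∀ v : H, φ u + ⟪ξ, v - u⟫ ≤ φ v}

/-- A damping potential: a nonnegative convex continuous function vanishing (and
minimal) at the origin, whose minimal section of the subdifferential is bounded on
bounded sets (expressed through the existence of subgradients of uniformly bounded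
norm). -/
structure IsDampingPotential (φ : H → ℝ) : Prop where
  nonneg : ∀ u, 0 ≤ φ u
  convexOn : ConvexOn ℝ Set.univ φ
  continuous : Continuous φ
  map_zero : φ 0 = 0
  minimalSectionBounded : ∀ R : ℝ, 0 < R →
    ∃ M : ℝ, ∀ u : H, ‖u‖ ≤ R → ∃ ξ ∈ subdiff φ u, ‖ξ‖ ≤ M

/-- A strong global solution of the differential inclusion
`0 ∈ ẍ(t) + ∂φ(ẋ(t)) + ∇f(x(t))` on `[0,∞)`: `x` is `C¹` on `[0,∞)` with derivative
`x'`, `x'` is Lipschitz continuous on bounded intervals, and for almost every `t > 0`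
the acceleration exists and the inclusion holds. -/
structure IsStrongSolutionV (f φ : H → ℝ) (x x' : ℝ → H) : Prop where
  hasDeriv : ∀ t ∈ Set.Ici (0:ℝ), HasDerivWithinAt x (x' t) (Set.Ici 0) t
  contDeriv : ContinuousOn x' (Set.Ici 0)
  lipDeriv : ∀ T : ℝ, 0 < T → ∃ K : ℝ≥0, LipschitzOnWith K x' (Set.Icc 0 T)
  inclusion : ∀ᵐ t ∂(volume : Measure ℝ), t ∈ Set.Ioi (0:ℝ) →
    ∃ a : H, HasDerivAt x' a t ∧
      ∃ ξ ∈ subdiff φ (x' t), a + ξ + gradient f (x t) = 0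

/-- **(ADIGE-V) energy estimates (Proposition 4.1).**
For a strong global solution of `0 ∈ ẍ + ∂φ(ẋ) + ∇f(x)`:
(i) the global energy `f(x(t)) - inf f + ½‖ẋ(t)‖²` is nonincreasing on `[0,∞)`;
(ii) the velocity is bounded and `∫₀^∞ φ(ẋ(t)) dt < ∞`;
(iii) if the trajectory is bounded then `ẋ` is Lipschitz on `[0,∞)`;
(iv) if furthermore `φ(u) ≥ r‖u‖^p` for some `p ≥ 1`, `r > 0`, then `‖ẋ(t)‖ → 0`. -/
theorem adigeV_energy_estimates
    (f : H → ℝ) (hfdiff : Differentiable ℝ f)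
    (hflip : ∀ s : Set H, IsBounded s → ∃ K : ℝ≥0, LipschitzOnWith K (gradient f) s)
    (hfbdd : BddBelow (Set.range f))
    (φ : H → ℝ) (hφ : IsDampingPotential φ)
    (x x' : ℝ → H) (hsol : IsStrongSolutionV f φ x x') :
    AntitoneOn (fun t => f (x t) - sInf (Set.range f) + (1/2) * ‖x' t‖ ^ 2)
        (Set.Ici 0) ∧
    (∃ M : ℝ, ∀ t ∈ Set.Ici (0:ℝ), ‖x' t‖ ≤ M) ∧
    MeasureTheory.IntegrableOn (fun t => φ (x' t)) (Set.Ioi 0) ∧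
    ((∃ R : ℝ, ∀ t ∈ Set.Ici (0:ℝ), ‖x t‖ ≤ R) →
        ∃ K : ℝ≥0, LipschitzOnWith K x' (Set.Ici 0)) ∧
    ((∃ R : ℝ, ∀ t ∈ Set.Ici (0:ℝ), ‖x t‖ ≤ R) →
        (∃ p : ℝ, 1 ≤ p ∧ ∃ r : ℝ, 0 < r ∧ ∀ u : H, r * ‖u‖ ^ p ≤ φ u) →
        Tendsto (fun t => ‖x' t‖) atTop (𝓝 0)) := by
  set E : ℝ → ℝ := fun t => f (x t) - sInf (Set.range f) + (1/2) * ‖x' t‖ ^ 2 with hE_def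
  have hxcont : ContinuousOn x (Set.Ici 0) :=
    fun τ hτ => (hsol.hasDeriv τ hτ).continuousWithinAt
  have hgradnorm : ∀ u : H, ‖gradient f u‖ = ‖fderiv ℝ f u‖ := by
    intro u
    rw [gradient]
    exact LinearIsometryEquiv.norm_map _ _
  -- nonnegativity of the energy
  have hEnonneg : ∀ t, 0 ≤ E t := by
    intro t
    have h1 : sInf (Set.range f) ≤ f (x t) := csInf_le hfbdd ⟨x t, rfl⟩
    have h2 : (0:ℝ) ≤ (1/2) * ‖x' t‖ ^ 2 := by positivity
    simp only [hE_def]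
    linarith
  have hEge : ∀ t, (1/2) * ‖x' t‖ ^ 2 ≤ E t := by
    intro t
    have h1 : sInf (Set.range f) ≤ f (x t) := csInf_le hfbdd ⟨x t, rfl⟩
    simp only [hE_def]
    linarith
  -- a.e. the energy has a derivative bounded by `-φ (x' t)`
  have hEae : ∀ᵐ t ∂(volume : Measure ℝ), t ∈ Set.Ioi (0:ℝ) →
      ∃ E', HasDerivAt E E' t ∧ E' ≤ -(φ (x' t)) := by
    filter_upwards [hsol.inclusion] with t ht htpos
    obtain ⟨a, ha, ξ, hξ, heq⟩ := ht htpos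
    have hxt : HasDerivAt x (x' t) t :=
      (hsol.hasDeriv t (Set.mem_Ici.2 (le_of_lt htpos))).hasDerivAt (Ici_mem_nhds htpos)
    have h1 : HasDerivAt (fun τ => f (x τ)) ⟪gradient f (x t), x' t⟫ t := by
      have h0 := ((hfdiff (x t)).hasGradientAt.hasFDerivAt).comp_hasDerivAt t hxt
      exact h0.congr_deriv (by rw [gradient, InnerProductSpace.toDual_symm_apply, LinearIsometryEquiv.apply_symm_apply])
    have h2 : HasDerivAt (fun τ => ⟪x' τ, x' τ⟫) (⟪x' t, a⟫ + ⟪a, x' t⟫) t :=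
      ha.inner ℝ ha
    have h2' : HasDerivAt (fun τ => (1/2 : ℝ) * ‖x' τ‖ ^ 2) ⟪x' t, a⟫ t := by
      have heqf : (fun τ => (1/2 : ℝ) * ‖x' τ‖ ^ 2)
          = fun τ => (1/2 : ℝ) * ⟪x' τ, x' τ⟫ := by
        funext τ
        rw [real_inner_self_eq_norm_sq]
      rw [heqf]
      have h3 := h2.const_mul (1/2 : ℝ)
      refine h3.congr_deriv ?_
      rw [real_inner_comm (x' t) a]
      ring
    refine ⟨⟪gradient f (x t), x' t⟫ + ⟪x' t, a⟫, ?_, ?_⟩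
    · have h4 := (h1.sub_const (sInf (Set.range f))).add h2'
      exact h4
    · have hsub := hξ 0
      rw [hφ.map_zero, zero_sub, inner_neg_right] at hsub
      have hinner : φ (x' t) ≤ ⟪ξ, x' t⟫ := by linarith
      have hsum : gradient f (x t) + a = -ξ := by
        have h5 : a + ξ + gradient f (x t) = 0 := heq
        have : gradient f (x t) + a = -ξ := by
          apply eq_neg_of_add_eq_zero_left
          calc gradient f (x t) + a + ξ = a + ξ + gradient f (x t) := by abel
            _ = 0 := h5
        exact this
      calc ⟪gradient f (x t), x' t⟫ + ⟪x' t, a⟫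
            = ⟪gradient f (x t) + a, x' t⟫ := by
              rw [inner_add_left, real_inner_comm (x' t) a]
        _ = ⟪-ξ, x' t⟫ := by rw [hsum]
        _ = -⟪ξ, x' t⟫ := by rw [inner_neg_left]
        _ ≤ -(φ (x' t)) := by linarith
  -- the energy is Lipschitz on bounded intervals
  have hElip : ∀ T : ℝ, 0 < T → ∃ L : ℝ≥0, LipschitzOnWith L E (Set.Icc 0 T) := by
    intro T hT
    -- bound on the velocity on [0, T]
    obtain ⟨M1, hM1⟩ := isCompact_Icc.exists_bound_of_continuousOn
      (hsol.contDeriv.mono (Set.Icc_subset_Ici_self : Set.Icc (0:ℝ) T ⊆ Set.Ici 0))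
    have hM1' : ∀ τ ∈ Set.Icc (0:ℝ) T, ‖x' τ‖ ≤ max M1 0 :=
      fun τ hτ => le_trans (hM1 τ hτ) (le_max_left _ _)
    -- x is Lipschitz on [0, T]
    have hxlip : LipschitzOnWith (max M1 0).toNNReal x (Set.Icc 0 T) := by
      refine (convex_Icc (0:ℝ) T).lipschitzOnWith_of_nnnorm_hasDerivWithin_le
        (f' := x') (fun τ hτ => (hsol.hasDeriv τ hτ.1).mono Set.Icc_subset_Ici_self) ?_
      intro τ hτ
      rw [← NNReal.coe_le_coe, coe_nnnorm, Real.coe_toNNReal _ (le_max_right _ _)]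
      exact hM1' τ hτ
    -- bound on the trajectory on [0, T]
    obtain ⟨R1, hR1⟩ := isCompact_Icc.exists_bound_of_continuousOn
      (hxcont.mono (Set.Icc_subset_Ici_self : Set.Icc (0:ℝ) T ⊆ Set.Ici 0))
    have hR1' : ∀ τ ∈ Set.Icc (0:ℝ) T, ‖x τ‖ ≤ max R1 0 + 1 := fun τ hτ =>
      le_trans (hR1 τ hτ) (by linarith [le_max_left R1 (0:ℝ)])
    set S : Set H := Metric.closedBall 0 (max R1 0 + 1) with hS_def
    obtain ⟨K, hK⟩ := hflip S (isBounded_closedBall)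
    -- gradient bound on S
    have hGrad : ∀ u ∈ S, ‖gradient f u‖ ≤
        ‖gradient f (0:H)‖ + K * (max R1 0 + 1) := by
      intro u hu
      have h1 := hK.dist_le_mul u hu 0 (Metric.mem_closedBall_self (by positivity))
      rw [dist_eq_norm] at h1
      have h2 : dist u (0:H) ≤ max R1 0 + 1 := Metric.mem_closedBall.1 hu
      rw [dist_eq_norm, sub_zero] at h2
      have h3 : ‖gradient f u‖ - ‖gradient f 0‖ ≤ ‖gradient f u - gradient f 0‖ :=
        norm_sub_norm_le _ _
      have h4 : (K:ℝ) * dist u (0:H) ≤ K * (max R1 0 + 1) := by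
        rw [dist_eq_norm, sub_zero]
        exact mul_le_mul_of_nonneg_left h2 K.coe_nonneg
      rw [dist_eq_norm, sub_zero] at h4
      calc ‖gradient f u‖ ≤ ‖gradient f 0‖ + ‖gradient f u - gradient f 0‖ := by linarith
        _ ≤ ‖gradient f 0‖ + K * (max R1 0 + 1) := by
            have h5 : ‖gradient f u - gradient f 0‖ ≤ (K:ℝ) * ‖u‖ := by
              rw [dist_eq_norm, sub_zero] at h1
              exact h1
            have h6 : ‖gradient f u - gradient f 0‖ ≤ (K:ℝ) * (max R1 0 + 1) :=
              le_trans h5 h4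
            linarith
    set G : ℝ := ‖gradient f (0:H)‖ + K * (max R1 0 + 1) with hG_def
    have hG0 : 0 ≤ G := le_trans (norm_nonneg _) (by
      have : (0:ℝ) ≤ K * (max R1 0 + 1) := by positivity
      linarith)
    -- f is Lipschitz on S
    have hflipS : LipschitzOnWith G.toNNReal f S := by
      refine (convex_closedBall (0:H) (max R1 0 + 1)).lipschitzOnWith_of_nnnorm_hasFDerivWithin_le
        (f' := fun u => fderiv ℝ f u) (fun u _ => (hfdiff u).hasFDerivAt.hasFDerivWithinAt) ?_
      intro u hu
      rw [← NNReal.coe_le_coe, coe_nnnorm, Real.coe_toNNReal _ hG0]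
      rw [← hgradnorm]
      exact hGrad u hu
    have hmapsx : Set.MapsTo x (Set.Icc 0 T) S := by
      intro τ hτ
      rw [hS_def, Metric.mem_closedBall, dist_eq_norm, sub_zero]
      exact hR1' τ hτ
    have hfx_lip : LipschitzOnWith (G.toNNReal * (max M1 0).toNNReal)
        (f ∘ x) (Set.Icc 0 T) := hflipS.comp hxlip hmapsx
    -- the half-norm-squared map is Lipschitz on the ball of radius max M1 0
    set Q : H → ℝ := fun u => (1/2 : ℝ) * ‖u‖ ^ 2 with hQ_def
    have hQlip : LipschitzOnWith (max M1 0).toNNReal Q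
        (Metric.closedBall 0 (max M1 0)) := by
      refine LipschitzOnWith.of_dist_le_mul fun u hu v hv => ?_
      rw [Metric.mem_closedBall, dist_eq_norm, sub_zero] at hu hv
      rw [Real.dist_eq, dist_eq_norm, Real.coe_toNNReal _ (le_max_right _ _)]
      have h1 : Q u - Q v = (1/2) * ((‖u‖ + ‖v‖) * (‖u‖ - ‖v‖)) := by
        rw [hQ_def]; ring
      have h2 : |Q u - Q v| ≤ (1/2) * ((‖u‖ + ‖v‖) * |‖u‖ - ‖v‖|) := by
        rw [h1, abs_mul, abs_mul, abs_of_nonneg (by positivity : (0:ℝ) ≤ (1/2:ℝ)),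
          abs_of_nonneg (by positivity : (0:ℝ) ≤ ‖u‖ + ‖v‖)]
      have h3 : |‖u‖ - ‖v‖| ≤ ‖u - v‖ := abs_norm_sub_norm_le _ _
      have h4 : ‖u‖ + ‖v‖ ≤ 2 * max M1 0 := by linarith
      calc |Q u - Q v| ≤ (1/2) * ((‖u‖ + ‖v‖) * ‖u - v‖) := by
            refine h2.trans ?_
            have := mul_le_mul_of_nonneg_left h3 (by positivity : (0:ℝ) ≤ ‖u‖ + ‖v‖)
            nlinarith [norm_nonneg (u - v)]
        _ ≤ max M1 0 * ‖u - v‖ := by nlinarith [norm_nonneg (u - v), h4]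
    obtain ⟨KT, hKT⟩ := hsol.lipDeriv T hT
    have hmapsx' : Set.MapsTo x' (Set.Icc 0 T) (Metric.closedBall 0 (max M1 0)) := by
      intro τ hτ
      rw [Metric.mem_closedBall, dist_eq_norm, sub_zero]
      exact hM1' τ hτ
    have hQx'_lip : LipschitzOnWith ((max M1 0).toNNReal * KT)
        (Q ∘ x') (Set.Icc 0 T) := hQlip.comp hKT hmapsx'
    -- combine
    refine ⟨G.toNNReal * (max M1 0).toNNReal + (max M1 0).toNNReal * KT,
      LipschitzOnWith.of_dist_le_mul fun u hu v hv => ?_⟩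
    have d1 := hfx_lip.dist_le_mul u hu v hv
    have d2 := hQx'_lip.dist_le_mul u hu v hv
    simp only [Function.comp_apply, Real.dist_eq] at d1 d2 ⊢
    have hEuv : E u - E v = (f (x u) - f (x v)) + (Q (x' u) - Q (x' v)) := by
      simp only [hE_def, hQ_def]
      ring
    rw [hEuv]
    push_cast
    calc |f (x u) - f (x v) + (Q (x' u) - Q (x' v))|
        ≤ |f (x u) - f (x v)| + |Q (x' u) - Q (x' v)| := abs_add_le _ _
      _ ≤ (G.toNNReal * (max M1 0).toNNReal : ℝ≥0) * |u - v|
          + ((max M1 0).toNNReal * KT : ℝ≥0) * |u - v| := add_le_add d1 d2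
      _ = ((G.toNNReal * (max M1 0).toNNReal : ℝ≥0) + ((max M1 0).toNNReal * KT : ℝ≥0)) *
          |u - v| := by push_cast; ring
  -- key energy estimate
  have hkey : ∀ s t : ℝ, 0 ≤ s → s < t → E t - E s ≤ ∫ u in s..t, -(φ (x' u)) := by
    intro s t hs hst
    obtain ⟨L, hL⟩ := hElip t (by linarith)
    refine lip_ae_deriv_le hst (hL.mono (Set.Icc_subset_Icc hs le_rfl)) ?_ ?_
    · exact (hφ.continuous.comp_continuousOn
        (hsol.contDeriv.mono (Set.Icc_subset_Ici_self.trans (Set.Ici_subset_Ici.2 hs)))).neg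
    · filter_upwards [hEae] with u hu huIoo
      exact hu (lt_of_le_of_lt hs huIoo.1)
  -- part (i)
  have part1 : AntitoneOn E (Set.Ici 0) := by
    intro s hs t ht hst
    rcases eq_or_lt_of_le hst with rfl | hlt
    · exact le_rfl
    have h1 := hkey s t hs hlt
    have h2 : (∫ u in s..t, -(φ (x' u))) ≤ 0 := by
      rw [intervalIntegral.integral_neg]
      have : (0:ℝ) ≤ ∫ u in s..t, φ (x' u) :=
        intervalIntegral.integral_nonneg hlt.le (fun u _ => hφ.nonneg _)
      linarith
    linarith
  -- part (ii): velocity bound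
  set M : ℝ := Real.sqrt (2 * E 0) with hM_def
  have hM0 : 0 ≤ M := Real.sqrt_nonneg _
  have hvel : ∀ t ∈ Set.Ici (0:ℝ), ‖x' t‖ ≤ M := by
    intro t ht
    have h1 : E t ≤ E 0 := part1 (Set.self_mem_Ici) ht ht
    have h2 : ‖x' t‖ ^ 2 ≤ 2 * E 0 := by
      have h3 := hEge t
      have h4 : (1:ℝ)/2 * ‖x' t‖ ^ 2 ≤ E 0 := le_trans h3 h1
      calc ‖x' t‖ ^ 2 = 2 * ((1:ℝ)/2 * ‖x' t‖ ^ 2) := by ring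
        _ ≤ 2 * E 0 := mul_le_mul_of_nonneg_left h4 (by norm_num)
    calc ‖x' t‖ = Real.sqrt (‖x' t‖ ^ 2) := (Real.sqrt_sq (norm_nonneg _)).symm
      _ ≤ M := by rw [hM_def]; exact Real.sqrt_le_sqrt h2
  -- part (ii): integrability
  have hφx'cont : ContinuousOn (fun u => φ (x' u)) (Set.Ici 0) :=
    hφ.continuous.comp_continuousOn hsol.contDeriv
  have hIntIcc : ∀ s t : ℝ, 0 ≤ s → s ≤ t →
      IntervalIntegrable (fun u => φ (x' u)) volume s t := by
    intro s t hs hst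
    apply ContinuousOn.intervalIntegrable
    apply hφx'cont.mono
    rw [Set.uIcc_of_le hst]
    exact fun u hu => hs.trans hu.1
  have hIntBound : ∀ T : ℝ, 0 ≤ T → (∫ u in (0:ℝ)..T, φ (x' u)) ≤ E 0 := by
    intro T hT
    rcases eq_or_lt_of_le hT with rfl | hT
    · rw [intervalIntegral.integral_same]
      exact hEnonneg 0
    have h1 := hkey 0 T le_rfl hT
    rw [intervalIntegral.integral_neg] at h1
    have h2 := hEnonneg T
    linarith
  have part2 : MeasureTheory.IntegrableOn (fun t => φ (x' t)) (Set.Ioi 0) := by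
    refine MeasureTheory.integrableOn_Ioi_of_intervalIntegral_norm_bounded
      (E 0) 0 (b := fun n : ℕ => (n : ℝ)) (l := atTop) ?_ tendsto_natCast_atTop_atTop ?_
    · intro n
      exact ((hIntIcc 0 n le_rfl (Nat.cast_nonneg n)).1)
    · filter_upwards with n
      have heq : (fun u => ‖φ (x' u)‖) = fun u => φ (x' u) := by
        funext u
        exact Real.norm_of_nonneg (hφ.nonneg _)
      rw [heq]
      exact hIntBound n (Nat.cast_nonneg n)
  -- part (iii)
  have part3 : (∃ R : ℝ, ∀ t ∈ Set.Ici (0:ℝ), ‖x t‖ ≤ R) →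
      ∃ C : ℝ, 0 ≤ C ∧ ∀ s t : ℝ, 0 ≤ s → s ≤ t → ‖x' t - x' s‖ ≤ C * (t - s) := by
    rintro ⟨R, hR⟩
    -- gradient bound along the trajectory
    obtain ⟨Kg, hKg⟩ := hflip (Metric.closedBall (0:H) (max R 0 + 1)) isBounded_closedBall
    set C1 : ℝ := ‖gradient f (x 0)‖ + Kg * (2 * (max R 0 + 1)) with hC1_def
    have hxmem : ∀ t ∈ Set.Ici (0:ℝ), x t ∈ Metric.closedBall (0:H) (max R 0 + 1) := by
      intro t ht
      rw [Metric.mem_closedBall, dist_eq_norm, sub_zero]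
      exact le_trans (hR t ht) (by linarith [le_max_left R (0:ℝ)])
    have hC1 : ∀ t ∈ Set.Ici (0:ℝ), ‖gradient f (x t)‖ ≤ C1 := by
      intro t ht
      have h1 := hKg.dist_le_mul (x t) (hxmem t ht) (x 0) (hxmem 0 Set.self_mem_Ici)
      rw [dist_eq_norm, dist_eq_norm] at h1
      have h2 : ‖x t - x 0‖ ≤ 2 * (max R 0 + 1) := by
        have h2a := le_trans (hR t ht) (by linarith [le_max_left R (0:ℝ)] :
          R ≤ max R 0 + 1)
        have h2b := le_trans (hR 0 Set.self_mem_Ici) (by linarith [le_max_left R (0:ℝ)] :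
          R ≤ max R 0 + 1)
        calc ‖x t - x 0‖ ≤ ‖x t‖ + ‖x 0‖ := norm_sub_le _ _
          _ ≤ 2 * (max R 0 + 1) := by linarith
      have h3 : ‖gradient f (x t)‖ - ‖gradient f (x 0)‖ ≤ ‖gradient f (x t) - gradient f (x 0)‖ :=
        norm_sub_norm_le _ _
      have h4 : (Kg:ℝ) * ‖x t - x 0‖ ≤ Kg * (2 * (max R 0 + 1)) :=
        mul_le_mul_of_nonneg_left h2 Kg.coe_nonneg
      rw [hC1_def]
      linarith [le_trans h1 h4]
    -- subgradient bound at velocities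
    obtain ⟨M', hM'⟩ := hφ.minimalSectionBounded (M + 1) (by linarith)
    have hM'0 : 0 ≤ M' := by
      obtain ⟨ξ', _, hn⟩ := hM' 0 (by rw [norm_zero]; linarith)
      exact le_trans (norm_nonneg _) hn
    have hφb : ∀ v : H, ‖v‖ ≤ M + 1 → φ v ≤ M' * (M + 1) := by
      intro v hv
      obtain ⟨ξ', hξ'mem, hξ'n⟩ := hM' v hv
      have h1 := hξ'mem 0
      rw [hφ.map_zero, zero_sub, inner_neg_right] at h1
      have h2 : ⟪ξ', v⟫ ≤ ‖ξ'‖ * ‖v‖ := real_inner_le_norm _ _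
      have h3 : ‖ξ'‖ * ‖v‖ ≤ M' * (M + 1) := by
        apply mul_le_mul hξ'n hv (norm_nonneg _) hM'0
      linarith
    have hξb : ∀ (u ξ : H), ‖u‖ ≤ M → ξ ∈ subdiff φ u → ‖ξ‖ ≤ M' * (M + 1) := by
      intro u ξ hu hξmem
      rcases eq_or_ne ξ 0 with rfl | hne
      · rw [norm_zero]; positivity
      · set wb : H := ‖ξ‖⁻¹ • ξ with hwb_def
        have hξn : ‖ξ‖ ≠ 0 := norm_ne_zero_iff.2 hne
        have hwb : ‖wb‖ = 1 := by
          rw [hwb_def, norm_smul, norm_inv, norm_norm]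
          field_simp
        have h3 := hξmem (u + wb)
        have h4 : ⟪ξ, (u + wb) - u⟫ = ‖ξ‖ := by
          rw [add_sub_cancel_left, hwb_def, real_inner_smul_right,
            real_inner_self_eq_norm_sq]
          field_simp
        have h5 : φ (u + wb) ≤ M' * (M + 1) := by
          apply hφb
          calc ‖u + wb‖ ≤ ‖u‖ + ‖wb‖ := norm_add_le _ _
            _ ≤ M + 1 := by rw [hwb]; linarith
        have h6 : 0 ≤ φ u := hφ.nonneg u
        rw [h4] at h3
        linarith
    set C : ℝ := C1 + M' * (M + 1) with hC_def
    have hC1nn : 0 ≤ C1 := le_trans (norm_nonneg _) (hC1 0 Set.self_mem_Ici)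
    have hC0 : 0 ≤ C := by
      have : (0:ℝ) ≤ M' * (M + 1) := by positivity
      linarith
    -- almost everywhere bound on the acceleration
    have haeb : ∀ᵐ τ ∂(volume : Measure ℝ), τ ∈ Set.Ioi (0:ℝ) →
        ∃ aτ : H, HasDerivAt x' aτ τ ∧ ‖aτ‖ ≤ C := by
      filter_upwards [hsol.inclusion] with τ h hτ
      obtain ⟨a, ha, ξ, hξ, heq⟩ := h hτ
      refine ⟨a, ha, ?_⟩
      have h2 : a = -(ξ + gradient f (x τ)) := by
        apply eq_neg_of_add_eq_zero_left
        rw [← add_assoc]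
        exact heq
      calc ‖a‖ = ‖ξ + gradient f (x τ)‖ := by rw [h2, norm_neg]
        _ ≤ ‖ξ‖ + ‖gradient f (x τ)‖ := norm_add_le _ _
        _ ≤ M' * (M + 1) + C1 :=
            add_le_add (hξb _ _ (hvel τ (Set.mem_Ici.2 (le_of_lt hτ))) hξ) (hC1 τ (Set.mem_Ici.2 (le_of_lt hτ)))
        _ = C := by rw [hC_def]; ring
    refine ⟨C, hC0, ?_⟩
    intro s t hs hst
    rcases eq_or_lt_of_le hst with rfl | hlt
    · simp
    rcases eq_or_ne (x' t - x' s) 0 with hw0 | hw0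
    · rw [hw0, norm_zero]
      have : 0 ≤ t - s := by linarith
      positivity
    set w : H := x' t - x' s with hw_def
    set wb : H := ‖w‖⁻¹ • w with hwb_def
    have hwn : ‖w‖ ≠ 0 := norm_ne_zero_iff.2 hw0
    have hwb1 : ‖wb‖ = 1 := by
      rw [hwb_def, norm_smul, norm_inv, norm_norm]
      field_simp
    obtain ⟨KT, hKT⟩ := hsol.lipDeriv t (lt_of_le_of_lt hs hlt)
    set g : ℝ → ℝ := fun τ => ⟪wb, x' τ⟫ with hg_def
    have hglip : LipschitzOnWith (‖innerSL ℝ wb‖₊ * KT) g (Set.Icc s t) := by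
      have h1 := (innerSL ℝ wb).lipschitz.comp_lipschitzOnWith
        (hKT.mono (Set.Icc_subset_Icc hs le_rfl))
      exact h1
    have hgkey : g t - g s ≤ ∫ u in s..t, (fun _ : ℝ => C) u := by
      refine lip_ae_deriv_le hlt hglip continuousOn_const ?_
      filter_upwards [haeb] with τ hτ hτm
      obtain ⟨aτ, haτ, hn⟩ := hτ (hs.trans_lt hτm.1)
      refine ⟨⟪wb, aτ⟫, ?_, ?_⟩
      · have h1 := (hasDerivAt_const τ wb).inner ℝ haτ
        simpa [hg_def] using h1
      · calc ⟪wb, aτ⟫ ≤ ‖wb‖ * ‖aτ‖ := real_inner_le_norm _ _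
          _ = ‖aτ‖ := by rw [hwb1, one_mul]
          _ ≤ C := hn
    rw [intervalIntegral.integral_const, smul_eq_mul] at hgkey
    have hgts : g t - g s = ‖w‖ := by
      rw [hg_def]
      simp only
      rw [← inner_sub_right, ← hw_def, hwb_def, real_inner_smul_left,
        real_inner_self_eq_norm_sq, sq]
      field_simp
    rw [hgts] at hgkey
    rw [hw_def] at hgkey
    linarith
  have part3' : (∃ R : ℝ, ∀ t ∈ Set.Ici (0:ℝ), ‖x t‖ ≤ R) →
      ∃ K : ℝ≥0, LipschitzOnWith K x' (Set.Ici 0) := by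
    intro hR
    obtain ⟨C, hC0, hC⟩ := part3 hR
    refine ⟨C.toNNReal, LipschitzOnWith.of_dist_le_mul fun s hs t ht => ?_⟩
    have hcoe : (C.toNNReal : ℝ) = C := Real.coe_toNNReal _ hC0
    rw [dist_eq_norm, Real.dist_eq, hcoe]
    rcases le_total s t with h | h
    · rw [abs_of_nonpos (by linarith), ← norm_neg]
      simpa using (hC s t hs h).trans_eq (by ring)
    · rw [abs_of_nonneg (by linarith)]
      exact (hC t s ht h).trans_eq (by ring)
  -- part (iv)
  have part4 : (∃ R : ℝ, ∀ t ∈ Set.Ici (0:ℝ), ‖x t‖ ≤ R) →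
      (∃ p : ℝ, 1 ≤ p ∧ ∃ r : ℝ, 0 < r ∧ ∀ u : H, r * ‖u‖ ^ p ≤ φ u) →
      Tendsto (fun t => ‖x' t‖) atTop (𝓝 0) := by
    rintro hRb ⟨p, hp, r, hr, hphi⟩
    obtain ⟨C, hC0, hC⟩ := part3 hRb
    rw [Metric.tendsto_atTop]
    intro ε hε
    set δ : ℝ := ε / (2 * (C + 1)) with hδ_def
    have hδ : 0 < δ := by
      apply div_pos hε
      nlinarith
    set c : ℝ := r * (ε/2) ^ p with hc_def
    have hcpos : 0 < c := mul_pos hr (Real.rpow_pos_of_pos (by positivity) p)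
    have htail : Tendsto (fun T : ℝ => ∫ u in (0:ℝ)..T, φ (x' u)) atTop
        (𝓝 (∫ u in Set.Ioi (0:ℝ), φ (x' u))) :=
      MeasureTheory.intervalIntegral_tendsto_integral_Ioi 0 part2 tendsto_id
    have hshift : Tendsto (fun T : ℝ => ∫ u in (0:ℝ)..(T + δ), φ (x' u)) atTop
        (𝓝 (∫ u in Set.Ioi (0:ℝ), φ (x' u))) :=
      htail.comp (tendsto_atTop_add_const_right atTop δ tendsto_id)
    have hdiff : Tendsto (fun T : ℝ =>
        (∫ u in (0:ℝ)..(T + δ), φ (x' u)) - ∫ u in (0:ℝ)..T, φ (x' u)) atTop (𝓝 0) := by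
      have h1 := hshift.sub htail
      simpa using h1
    have hev : ∀ᶠ T in atTop, ((∫ u in (0:ℝ)..(T + δ), φ (x' u))
        - ∫ u in (0:ℝ)..T, φ (x' u)) < c * δ :=
      hdiff.eventually_lt_const (by positivity)
    obtain ⟨N, hN⟩ := eventually_atTop.1 (hev.and (eventually_ge_atTop (0:ℝ)))
    refine ⟨N, fun T hT => ?_⟩
    obtain ⟨h1, h2⟩ := hN T hT
    rw [Real.dist_eq, sub_zero, abs_norm]
    by_contra hcon
    push_neg at hcon
    -- then the velocity stays ≥ ε/2 on [T, T+δ]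
    have hlow : ∀ u ∈ Set.Icc T (T + δ), ε/2 ≤ ‖x' u‖ := by
      intro u hu
      have h3 : ‖x' u - x' T‖ ≤ C * (u - T) := hC T u h2 hu.1
      have h4 : C * (u - T) ≤ C * δ :=
        mul_le_mul_of_nonneg_left (by linarith [hu.2]) hC0
      have h5 : C * δ ≤ ε/2 := by
        rw [hδ_def]
        have h5a : C * (ε / (2 * (C + 1))) = (C * ε) / (2 * (C + 1)) := by ring
        rw [h5a, div_le_div_iff₀ (by positivity) (by norm_num : (0:ℝ) < 2)]
        nlinarith
      have h6 : ‖x' T‖ - ‖x' u‖ ≤ ‖x' u - x' T‖ := by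
        rw [norm_sub_rev]
        exact norm_sub_norm_le _ _
      linarith
    have hφlow : ∀ u ∈ Set.Icc T (T + δ), c ≤ φ (x' u) := by
      intro u hu
      have h7 : (ε/2) ^ p ≤ ‖x' u‖ ^ p :=
        Real.rpow_le_rpow (by positivity) (hlow u hu) (by linarith)
      calc c = r * (ε/2) ^ p := rfl
        _ ≤ r * ‖x' u‖ ^ p := mul_le_mul_of_nonneg_left h7 hr.le
        _ ≤ φ (x' u) := hphi _
    have hint1 := hIntIcc 0 T le_rfl h2
    have hint2 := hIntIcc T (T + δ) h2 (by linarith)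
    have hadd := intervalIntegral.integral_add_adjacent_intervals hint1 hint2
    have hlowint : c * δ ≤ ∫ u in T..(T + δ), φ (x' u) := by
      have h8 : (∫ _u in T..(T + δ), c) ≤ ∫ u in T..(T + δ), φ (x' u) :=
        intervalIntegral.integral_mono_on (by linarith)
          intervalIntegrable_const hint2 (fun u hu => hφlow u hu)
      rw [intervalIntegral.integral_const, smul_eq_mul] at h8
      have h9 : (T + δ - T) * c = c * δ := by ring
      linarith [h8, h9.symm.le]
    linarith
  exact ⟨part1, ⟨M, hvel⟩, part2, part3', part4⟩
end
end

section
/- Let H be a real Hilbert space, let μ > 0, and let f : H → ℝ be differentiable and μ-strongly convex with ∇f Lipschitz continuous on every bounded subset of H; let x̄ be its unique minimizer. Let φ : H → [0,∞) be a damping potential which is differentiable with ∇φ Lipschitz continuous on every bounded subset of H, and assume: (i) there exist α > 0 and ρ > 0 such that ⟨∇φ(u), u⟩ ≥ α‖u‖² whenever ‖u‖ ≤ ρ; (ii) there exist p ≥ 1 and c > 0 such that φ(u) ≥ c‖u‖^p for all u ∈ H. Then for every twice continuously differentiable solution x : [0,∞) → H of ẍ(t) + ∇φ(ẋ(t)) +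 ∇f(x(t)) = 0, there exist constants K ≥ 0 and λ > 0 such that for all t ≥ 0: f(x(t)) − f(x̄) ≤ K e^{−λt}, ‖x(t) − x̄‖ ≤ K e^{−λt}, and ‖ẋ(t)‖ ≤ K e^{−λt}. -/
open Set Filter Topology MeasureTheory Metric Bornology
open scoped RealInnerProductSpace NNReal

noncomputable section

variable {H : Type*} [NormedAddCommGroup H] [InnerProductSpace ℝ H] [CompleteSpace H]

/-- Subgradient inequality for a convex differentiable function. -/
lemma convexOn_grad_ineq {g : H → ℝ} (hg : ConvexOn ℝ Set.univ g) {ξ z : H}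
    (hξ : HasGradientAt g ξ z) (y : H) : g z + ⟪ξ, y - z⟫ ≤ g y := by
  set h : ℝ → ℝ := fun s => g (z + s • (y - z)) with hh
  have hconv : ConvexOn ℝ Set.univ h := by
    have := hg.comp_affineMap (AffineMap.lineMap z y)
    have he : h = g ∘ (AffineMap.lineMap z y) := by
      funext s
      simp [hh, AffineMap.lineMap_apply, add_comm]
    rw [he]
    simpa using this
  have hderiv : HasDerivAt h ⟪ξ, y - z⟫ 0 := by
    have hc : HasDerivAt (fun s : ℝ => z + s • (y - z)) (y - z) 0 := by
      simpa using ((hasDerivAt_id (0:ℝ)).smul_const (y - z)).const_add z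
    have hξ' : HasFDerivAt g ((InnerProductSpace.toDual ℝ H) ξ) (z + (0:ℝ) • (y - z)) := by
      simpa using hξ.hasFDerivAt
    have := hξ'.comp_hasDerivAt 0 hc
    simpa [InnerProductSpace.toDual_apply_apply, hh, Function.comp_def] using this
  have hs := hconv.le_slope_of_hasDerivAt (mem_univ 0) (mem_univ 1) one_pos hderiv
  have : slope h 0 1 = g y - g z := by
    simp [slope_def_field, hh]
  rw [this] at hs
  linarith

/-- The gradient of `y ↦ μ/2 * ⟪y,y⟫`. -/
lemma hasGradientAt_half_inner_self (μ : ℝ) (z : H) :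
    HasGradientAt (fun y : H => μ / 2 * ⟪y, y⟫) (μ • z) z := by
  have h1 : HasFDerivAt (fun y : H => ⟪y, y⟫)
      ((fderivInnerCLM ℝ (z, z)).comp ((ContinuousLinearMap.id ℝ H).prod
        (ContinuousLinearMap.id ℝ H))) z := by
    simpa using (hasFDerivAt_id z).inner ℝ (hasFDerivAt_id z)
  have h2 := h1.const_smul (μ / 2)
  have he : (μ / 2) • ((fderivInnerCLM ℝ (z, z)).comp ((ContinuousLinearMap.id ℝ H).prod
        (ContinuousLinearMap.id ℝ H))) = (InnerProductSpace.toDual ℝ H) (μ • z) := by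
    ext v
    simp [fderivInnerCLM_apply, InnerProductSpace.toDual_apply_apply, real_inner_smul_left,
      real_inner_comm]
    ring
  rw [hasGradientAt_iff_hasFDerivAt, ← he]
  exact h2

/-- Strong convexity inequality. -/
lemma strong_convex_ineq {μ : ℝ} {f : H → ℝ} (hfdiff : Differentiable ℝ f)
    (hsc : ConvexOn ℝ Set.univ (fun y => f y - μ / 2 * ‖y‖ ^ 2))
    (z y : H) : f z + ⟪gradient f z, y - z⟫ + μ / 2 * ‖y - z‖ ^ 2 ≤ f y := by
  set g : H → ℝ := fun y => f y - μ / 2 * ‖y‖ ^ 2 with hg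
  have hgd : HasGradientAt g (gradient f z - μ • z) z := by
    have h1 := (hfdiff z).hasGradientAt
    have h2 := hasGradientAt_half_inner_self (H := H) μ z
    have h2' : HasGradientAt (fun y : H => μ / 2 * ‖y‖ ^ 2) (μ • z) z := by
      simpa [real_inner_self_eq_norm_sq] using h2
    rw [hasGradientAt_iff_hasFDerivAt] at h1 h2' ⊢
    have := h1.sub h2'
    rw [map_sub]
    exact this
  have := convexOn_grad_ineq hsc hgd y
  simp only [hg] at this
  rw [inner_sub_left] at this
  have key : μ / 2 * ‖y - z‖ ^ 2 = μ / 2 * ‖y‖ ^ 2 - μ / 2 * ‖z‖ ^ 2 - ⟪μ • z, y - z⟫ := by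
    rw [norm_sub_sq_real, real_inner_smul_left, inner_sub_right,
      real_inner_self_eq_norm_sq, real_inner_comm z y]
    ring
  linarith

/-- Gradient vanishes at a global minimizer. -/
lemma gradient_eq_zero_of_isMinOn {f : H → ℝ} {z : H}
    (hz : ∀ y, f z ≤ f y) : gradient f z = 0 := by
  have hmin : IsLocalMin f z := Filter.Eventually.of_forall fun y => hz y
  have := hmin.fderiv_eq_zero
  rw [gradient, this, map_zero]

/-- Exponential decay from a differential inequality (Gronwall-type). -/
lemma gronwall_decay {V Vd : ℝ → ℝ} (lam : ℝ)
    (hV : ∀ t ∈ Ici (0:ℝ), HasDerivWithinAt V (Vd t) (Ici 0) t)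
    (hineq : ∀ t ∈ Ici (0:ℝ), Vd t + lam * V t ≤ 0) :
    ∀ t ∈ Ici (0:ℝ), V t ≤ V 0 * Real.exp (-lam * t) := by
  intro t ht
  set g : ℝ → ℝ := fun s => V s * Real.exp (lam * s) with hgdef
  have hanti : AntitoneOn g (Ici 0) := by
    apply antitoneOn_of_hasDerivWithinAt_nonpos (convex_Ici 0)
    · exact fun s hs => ((hV s hs).continuousWithinAt.mul
        ((Real.continuous_exp.comp (continuous_const.mul continuous_id)).continuousWithinAt))
    · intro s hs
      rw [interior_Ici] at hs ⊢
      exact ((hV s (Set.mem_Ici.mpr (le_of_lt (Set.mem_Ioi.mp hs)))).mono Ioi_subset_Ici_self).mul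
        (((Real.hasDerivAt_exp (lam * s)).comp s
          ((hasDerivAt_id s).const_mul lam)).hasDerivWithinAt)
    · intro s hs
      rw [interior_Ici] at hs
      have h1 := hineq s (Set.mem_Ici.mpr (le_of_lt (Set.mem_Ioi.mp hs)))
      have h2 : (0:ℝ) < Real.exp (lam * s) := Real.exp_pos _
      have : Vd s * Real.exp (lam * s) + V s * (Real.exp (lam * s) * (lam * 1)) =
          (Vd s + lam * V s) * Real.exp (lam * s) := by ring
      rw [this]
      exact mul_nonpos_of_nonpos_of_nonneg h1 h2.le
  have := hanti (self_mem_Ici) ht ht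
  have h0 : g 0 = V 0 := by simp [hgdef]
  rw [h0] at this
  have h2 : V t = g t * Real.exp (-lam * t) := by
    simp only [hgdef]
    rw [mul_assoc, ← Real.exp_add]
    simp
  rw [h2]
  exact mul_le_mul_of_nonneg_right this (Real.exp_pos _).le

set_option maxHeartbeats 1000000

/-- **(ADIGE-V) strongly convex case: exponential convergence rate (Theorem 5.1).**
If `f` is differentiable, `μ`-strongly convex, with `∇f` Lipschitz on bounded sets,
`x̄` is its (unique) minimizer, and `φ` is a differentiable damping potential with
`∇φ` Lipschitz on bounded sets, satisfying the local growth
`⟪∇φ(u), u⟫ ≥ α‖u‖²` for `‖u‖ ≤ ρ` and the global growth `φ(u) ≥ c‖u‖^p`, then every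
`C²` solution of `ẍ + ∇φ(ẋ) + ∇f(x) = 0` converges exponentially: values, distance
to the minimizer and velocity. -/
theorem adigeV_strongly_convex_exponential_rate
    (μ : ℝ) (hμ : 0 < μ)
    (f : H → ℝ) (hfdiff : Differentiable ℝ f)
    (hsc : ConvexOn ℝ Set.univ (fun y => f y - μ / 2 * ‖y‖ ^ 2))
    (hflip : ∀ s : Set H, IsBounded s → ∃ K : ℝ≥0, LipschitzOnWith K (gradient f) s)
    (xbar : H) (hxbar : ∀ y, f xbar ≤ f y)
    (φ : H → ℝ) (hφ : IsDampingPotential φ) (hφdiff : Differentiable ℝ φ)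
    (hφlip : ∀ s : Set H, IsBounded s → ∃ K : ℝ≥0, LipschitzOnWith K (gradient φ) s)
    (α ρ : ℝ) (hα : 0 < α) (hρ : 0 < ρ)
    (hloc : ∀ u : H, ‖u‖ ≤ ρ → α * ‖u‖ ^ 2 ≤ ⟪gradient φ u, u⟫)
    (p c : ℝ) (hp : 1 ≤ p) (hc : 0 < c) (hgrow : ∀ u : H, c * ‖u‖ ^ p ≤ φ u)
    (x x' x'' : ℝ → H)
    (hx : ∀ t ∈ Set.Ici (0:ℝ), HasDerivWithinAt x (x' t) (Set.Ici 0) t)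
    (hx' : ∀ t ∈ Set.Ici (0:ℝ), HasDerivWithinAt x' (x'' t) (Set.Ici 0) t)
    (hx''c : ContinuousOn x'' (Set.Ici 0))
    (heq : ∀ t ∈ Set.Ici (0:ℝ), x'' t + gradient φ (x' t) + gradient f (x t) = 0) :
    ∃ K : ℝ, 0 ≤ K ∧ ∃ lam : ℝ, 0 < lam ∧ ∀ t ∈ Set.Ici (0:ℝ),
      f (x t) - f xbar ≤ K * Real.exp (-lam * t) ∧
      ‖x t - xbar‖ ≤ K * Real.exp (-lam * t) ∧
      ‖x' t‖ ≤ K * Real.exp (-lam * t) := by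
    -- gradients vanish at minimizers
  have hgf0 : gradient f xbar = 0 := gradient_eq_zero_of_isMinOn hxbar
  have hgφ0 : gradient φ 0 = 0 := gradient_eq_zero_of_isMinOn
    (fun y => by rw [hφ.map_zero]; exact hφ.nonneg y)
  -- strong convexity
  have hsci : ∀ z y : H, f z + ⟪gradient f z, y - z⟫ + μ / 2 * ‖y - z‖ ^ 2 ≤ f y :=
    strong_convex_ineq hfdiff hsc
  have hquad : ∀ y : H, f xbar + μ / 2 * ‖y - xbar‖ ^ 2 ≤ f y := by
    intro y
    have := hsci xbar y
    rw [hgf0] at this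
    simpa using this
  -- φ subgradient inequality
  have hφsub : ∀ v : H, φ v ≤ ⟪gradient φ v, v⟫ := by
    intro v
    have := convexOn_grad_ineq hφ.convexOn (hφdiff v).hasGradientAt 0
    rw [hφ.map_zero, zero_sub, inner_neg_right] at this
    linarith
  -- the energy function
  set E : ℝ → ℝ := fun t => f (x t) - f xbar + (1/2) * ⟪x' t, x' t⟫ with hEdef
  set Ed : ℝ → ℝ := fun t => -⟪gradient φ (x' t), x' t⟫ with hEddef
  have hEt : ∀ s : ℝ, E s = f (x s) - f xbar + (1/2) * ⟪x' s, x' s⟫ := fun s => rfl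
  have hEdt : ∀ s : ℝ, Ed s = -⟪gradient φ (x' s), x' s⟫ := fun s => rfl
  clear_value E Ed
  have hxpp : ∀ t ∈ Ici (0:ℝ), x'' t = -gradient φ (x' t) - gradient f (x t) := by
    intro t ht
    have h := heq t ht
    rw [add_assoc] at h
    rw [eq_neg_of_add_eq_zero_left h]
    abel
  have hfd : ∀ t ∈ Ici (0:ℝ), HasDerivWithinAt (fun s => f (x s))
      ⟪gradient f (x t), x' t⟫ (Ici 0) t := by
    intro t ht
    have := (hfdiff (x t)).hasGradientAt.hasFDerivAt.comp_hasDerivWithinAt t (hx t ht)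
    simpa [InnerProductSpace.toDual_apply_apply, Function.comp_def] using this
  have hEderiv : ∀ t ∈ Ici (0:ℝ), HasDerivWithinAt E (Ed t) (Ici 0) t := by
    intro t ht
    have h2 : HasDerivWithinAt (fun s => ⟪x' s, x' s⟫)
        (⟪x' t, x'' t⟫ + ⟪x'' t, x' t⟫) (Ici 0) t := (hx' t ht).inner ℝ (hx' t ht)
    have h3 := ((hfd t ht).sub_const (f xbar)).add
      (HasDerivWithinAt.const_mul (1/2 : ℝ) h2)
    have hval : ⟪gradient f (x t), x' t⟫ + 1/2 * (⟪x' t, x'' t⟫ + ⟪x'' t, x' t⟫) = Ed t := by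
      rw [hxpp t ht, hEdt t]
      simp only [inner_sub_left, inner_neg_left, inner_sub_right, inner_neg_right]
      have h1 := real_inner_comm (x' t) (gradient φ (x' t))
      have h2 := real_inner_comm (x' t) (gradient f (x t))
      linarith
    rw [hval] at h3
    rw [hEdef]
    exact h3
  have hEdnonpos : ∀ t ∈ Ici (0:ℝ), Ed t + 0 * E t ≤ 0 := by
    intro t ht
    have h1 := hφsub (x' t)
    have h2 := hφ.nonneg (x' t)
    rw [hEdt t]
    simp only [zero_mul, add_zero]
    linarith
  have hEmono : ∀ t ∈ Ici (0:ℝ), E t ≤ E 0 := by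
    intro t ht
    have := gronwall_decay 0 hEderiv hEdnonpos t ht
    simpa using this
  have hFnonneg : ∀ t : ℝ, 0 ≤ f (x t) - f xbar := fun t => sub_nonneg.mpr (hxbar (x t))
  have hEnonneg : ∀ t : ℝ, 0 ≤ E t := by
    intro t
    have := real_inner_self_nonneg (x := x' t)
    have := hFnonneg t
    rw [hEt t]
    have h3 : (0:ℝ) ≤ ⟪x' t, x' t⟫ := real_inner_self_nonneg
    have h4 := hFnonneg t
    linarith
  -- velocity and position bounds
  have hvel2 : ∀ t ∈ Ici (0:ℝ), ‖x' t‖ ^ 2 ≤ 2 * E 0 := by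
    intro t ht
    have h1 := hEmono t ht
    have h2 := hFnonneg t
    have h3 : ⟪x' t, x' t⟫ = ‖x' t‖ ^ 2 := real_inner_self_eq_norm_sq _
    have h4 := hEt t
    linarith
  have hpos2 : ∀ t ∈ Ici (0:ℝ), μ / 2 * ‖x t - xbar‖ ^ 2 ≤ E 0 := by
    intro t ht
    have h1 := hEmono t ht
    have h2 := hquad (x t)
    have h3 : (0:ℝ) ≤ ⟪x' t, x' t⟫ := real_inner_self_nonneg
    have h4 := hEt t
    linarith
  -- a uniform bound on velocity norm
  set R : ℝ := max ρ (Real.sqrt (2 * E 0)) with hRdef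
  have hRpos : 0 < R := lt_of_lt_of_le hρ (le_max_left _ _)
  have hρR : ρ ≤ R := le_max_left _ _
  have hsqR : Real.sqrt (2 * E 0) ≤ R := le_max_right _ _
  clear_value R
  clear hRdef
  have hvelR : ∀ t ∈ Ici (0:ℝ), ‖x' t‖ ≤ R := by
    intro t ht
    have h1 := hvel2 t ht
    have h2 : ‖x' t‖ ≤ Real.sqrt (2 * E 0) := by
      rw [show ‖x' t‖ = Real.sqrt (‖x' t‖ ^ 2) by rw [Real.sqrt_sq (norm_nonneg _)]]
      exact Real.sqrt_le_sqrt h1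
    exact le_trans h2 hsqR
  -- local Lipschitz constant of the gradient of φ
  obtain ⟨L, hL⟩ := hφlip (closedBall 0 R) (isBounded_closedBall)
  have hLφ : ∀ v : H, ‖v‖ ≤ R → ‖gradient φ v‖ ≤ (L:ℝ) * ‖v‖ := by
    intro v hv
    have h0m : (0:H) ∈ closedBall (0:H) R := by simp [hRpos.le]
    have hvm : v ∈ closedBall (0:H) R := by simpa [mem_closedBall, dist_zero_right] using hv
    have := hL.dist_le_mul v hvm 0 h0m
    simpa [hgφ0, dist_eq_norm] using this
  -- uniform ellipticity of the damping
  set α' : ℝ := min α (c * ρ ^ p / R ^ 2) with hα'def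
  have hα'pos : 0 < α' := lt_min hα
    (div_pos (mul_pos hc (Real.rpow_pos_of_pos hρ p)) (pow_pos hRpos 2))
  have hα'α : α' ≤ α := min_le_left _ _
  have hα'r : α' ≤ c * ρ ^ p / R ^ 2 := min_le_right _ _
  clear_value α'
  clear hα'def
  have hunif : ∀ v : H, ‖v‖ ≤ R → α' * ‖v‖ ^ 2 ≤ ⟪gradient φ v, v⟫ := by
    intro v hv
    rcases le_or_gt ‖v‖ ρ with h | h
    · have h1 := hloc v h
      have h2 := hα'α
      nlinarith [sq_nonneg ‖v‖]
    · have h1 := hφsub v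
      have h2 := hgrow v
      have h3 : ρ ^ p ≤ ‖v‖ ^ p := Real.rpow_le_rpow hρ.le h.le (le_trans zero_le_one hp)
      have h4 := hα'r
      have h5 : ‖v‖ ^ 2 ≤ R ^ 2 := by nlinarith [norm_nonneg v]
      have h6 : (0:ℝ) < R ^ 2 := pow_pos hRpos 2
      have h7 : c * ρ ^ p / R ^ 2 * ‖v‖ ^ 2 ≤ c * ρ ^ p := by
        rw [div_mul_eq_mul_div, div_le_iff₀ h6]
        have hcp : 0 ≤ c * ρ ^ p := le_of_lt (mul_pos hc (Real.rpow_pos_of_pos hρ p))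
        nlinarith
      have h8 : c * ρ ^ p ≤ c * ‖v‖ ^ p := mul_le_mul_of_nonneg_left h3 hc.le
      nlinarith [sq_nonneg ‖v‖]
  -- choice of the coupling parameter
  set ε : ℝ := min (min (1/2) (μ/2)) (α' / (2 * (1 + (L:ℝ)^2/μ))) with hεdef
  have hDpos : (0:ℝ) < 1 + (L:ℝ)^2/μ := by positivity
  have hεpos : 0 < ε := lt_min (lt_min one_half_pos (half_pos hμ))
    (div_pos hα'pos (by positivity))
  have hεhalf : ε ≤ 1/2 := le_trans (min_le_left _ _) (min_le_left _ _)
  have hεμ : ε ≤ μ/2 := le_trans (min_le_left _ _) (min_le_right _ _)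
  have hεD : ε * (1 + (L:ℝ)^2/μ) ≤ α'/2 := by
    have h : ε ≤ α' / (2 * (1 + (L:ℝ)^2/μ)) := min_le_right _ _
    have h2 : α' / (2 * (1 + (L:ℝ)^2/μ)) * (1 + (L:ℝ)^2/μ) = α'/2 := by
      field_simp
    calc ε * (1 + (L:ℝ)^2/μ) ≤ α' / (2 * (1 + (L:ℝ)^2/μ)) * (1 + (L:ℝ)^2/μ) :=
          mul_le_mul_of_nonneg_right h hDpos.le
      _ = α'/2 := h2
  clear_value ε
  clear hεdef
  -- decay rate
  set lam : ℝ := min ε (min (α'/(1+ε)) (μ/2)) with hlamdef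
  have h1εpos : (0:ℝ) < 1 + ε := by linarith
  have hlampos : 0 < lam := lt_min hεpos (lt_min (div_pos hα'pos h1εpos) (half_pos hμ))
  have hlamε : lam ≤ ε := min_le_left _ _
  have hlamα : lam * (1 + ε) ≤ α' := by
    have h : lam ≤ α'/(1+ε) :=
      le_trans (min_le_right ε (min (α'/(1+ε)) (μ/2))) (min_le_left (α'/(1+ε)) (μ/2))
    calc lam * (1 + ε) ≤ α'/(1+ε) * (1+ε) := mul_le_mul_of_nonneg_right h h1εpos.le
      _ = α' := div_mul_cancel₀ _ (ne_of_gt h1εpos)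
  have hlamμ : lam ≤ μ/2 := le_trans (min_le_right _ _) (min_le_right _ _)
  clear_value lam
  clear hlamdef
  -- the Lyapunov function
  set V : ℝ → ℝ := fun t => E t + ε * ⟪x t - xbar, x' t⟫ with hVdef
  set Vd : ℝ → ℝ := fun t => Ed t + ε * (⟪x t - xbar, x'' t⟫ + ⟪x' t, x' t⟫) with hVddef
  have hVt : ∀ s : ℝ, V s = E s + ε * ⟪x s - xbar, x' s⟫ := fun s => rfl
  have hVdt : ∀ s : ℝ, Vd s = Ed s + ε * (⟪x s - xbar, x'' s⟫ + ⟪x' s, x' s⟫) := fun s => rfl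
  clear_value V Vd
  have hVderiv : ∀ t ∈ Ici (0:ℝ), HasDerivWithinAt V (Vd t) (Ici 0) t := by
    intro t ht
    have h1 : HasDerivWithinAt (fun s => x s - xbar) (x' t) (Ici 0) t := (hx t ht).sub_const xbar
    have h2 := h1.inner ℝ (hx' t ht)
    have h3 := (hEderiv t ht).add (HasDerivWithinAt.const_mul ε h2)
    rw [hVdef, hVdt t]
    exact h3
  -- main differential inequality
  have hmain : ∀ t ∈ Ici (0:ℝ), Vd t + lam * V t ≤ 0 := by
    intro t ht
    have hF : (0:ℝ) ≤ f (x t) - f xbar := hFnonneg t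
    have haF : μ/2 * ‖x t - xbar‖^2 ≤ f (x t) - f xbar := by
      have := hquad (x t); linarith
    have hinn : ⟪x' t, x' t⟫ = ‖x' t‖^2 := real_inner_self_eq_norm_sq _
    have hEdle : Ed t ≤ -(α' * ‖x' t‖^2) := by
      rw [hEdt t]
      have := hunif (x' t) (hvelR t ht)
      linarith
    have hqb : ‖gradient φ (x' t)‖ ≤ (L:ℝ) * ‖x' t‖ := hLφ (x' t) (hvelR t ht)
    have hw : ⟪x t - xbar, x'' t⟫ ≤
        (L:ℝ) * ‖x t - xbar‖ * ‖x' t‖ - (f (x t) - f xbar) - μ/2 * ‖x t - xbar‖^2 := by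
      rw [hxpp t ht, inner_sub_right, inner_neg_right]
      have hCS : |⟪x t - xbar, gradient φ (x' t)⟫| ≤ ‖x t - xbar‖ * ‖gradient φ (x' t)‖ :=
        abs_real_inner_le_norm _ _
      have h1 : -⟪x t - xbar, gradient φ (x' t)⟫ ≤ (L:ℝ) * ‖x t - xbar‖ * ‖x' t‖ := by
        have h2 : ‖x t - xbar‖ * ‖gradient φ (x' t)‖ ≤ ‖x t - xbar‖ * ((L:ℝ) * ‖x' t‖) :=
          mul_le_mul_of_nonneg_left hqb (norm_nonneg _)
        have h3 := neg_abs_le ⟪x t - xbar, gradient φ (x' t)⟫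
        linarith [hCS, h2, h3]
      have h4 := hsci (x t) xbar
      have h5 : ⟪gradient f (x t), xbar - x t⟫ = -⟪x t - xbar, gradient f (x t)⟫ := by
        rw [show xbar - x t = -(x t - xbar) by abel, inner_neg_right,
          real_inner_comm]
      have h6 : ‖xbar - x t‖ = ‖x t - xbar‖ := norm_sub_rev _ _
      rw [h5, h6] at h4
      linarith
    have hVub : V t ≤ (f (x t) - f xbar) + (1/2 + ε/2) * ‖x' t‖^2
        + (ε/2) * ‖x t - xbar‖^2 := by
      have h1 : ⟪x t - xbar, x' t⟫ ≤ (‖x t - xbar‖^2 + ‖x' t‖^2)/2 := by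
        nlinarith [le_abs_self ⟪x t - xbar, x' t⟫, abs_real_inner_le_norm (x t - xbar) (x' t),
          sq_nonneg (‖x t - xbar‖ - ‖x' t‖)]
      have h2 := mul_le_mul_of_nonneg_left h1 hεpos.le
      rw [hVt t, hEt t, hinn]
      linarith
    have hyoung : (L:ℝ) * ‖x t - xbar‖ * ‖x' t‖ ≤
        μ/4 * ‖x t - xbar‖^2 + (L:ℝ)^2/μ * ‖x' t‖^2 := by
      have key : μ * ((L:ℝ) * ‖x t - xbar‖ * ‖x' t‖) ≤
          μ * (μ/4 * ‖x t - xbar‖^2 + (L:ℝ)^2/μ * ‖x' t‖^2) := by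
        have hexp : μ * (μ/4 * ‖x t - xbar‖^2 + (L:ℝ)^2/μ * ‖x' t‖^2)
            = μ^2/4 * ‖x t - xbar‖^2 + (L:ℝ)^2 * ‖x' t‖^2 := by
          field_simp
        rw [hexp]
        nlinarith [sq_nonneg (μ/2 * ‖x t - xbar‖ - (L:ℝ) * ‖x' t‖)]
      exact le_of_mul_le_mul_left key hμ
    have h5 : ε * (⟪x t - xbar, x'' t⟫ + ⟪x' t, x' t⟫) ≤
        ε * (((L:ℝ) * ‖x t - xbar‖ * ‖x' t‖ - (f (x t) - f xbar) - μ/2 * ‖x t - xbar‖^2)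
          + ‖x' t‖^2) :=
      mul_le_mul_of_nonneg_left (by linarith) hεpos.le
    have h6 : lam * V t ≤ lam * ((f (x t) - f xbar) + (1/2 + ε/2) * ‖x' t‖^2
        + (ε/2) * ‖x t - xbar‖^2) := mul_le_mul_of_nonneg_left hVub hlampos.le
    have h7 : ε * ((L:ℝ) * ‖x t - xbar‖ * ‖x' t‖) ≤
        ε * (μ/4 * ‖x t - xbar‖^2 + (L:ℝ)^2/μ * ‖x' t‖^2) :=
      mul_le_mul_of_nonneg_left hyoung hεpos.le
    have h10 := mul_le_mul_of_nonneg_right hεD (sq_nonneg ‖x' t‖)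
    have h9 : lam * (1/2 + ε/2) ≤ α'/2 := by linarith
    have h11 := mul_le_mul_of_nonneg_right h9 (sq_nonneg ‖x' t‖)
    have h12 : lam * (ε/2) * ‖x t - xbar‖^2 ≤ (μ/2) * (ε/2) * ‖x t - xbar‖^2 :=
      mul_le_mul_of_nonneg_right (mul_le_mul_of_nonneg_right hlamμ (by positivity))
        (sq_nonneg _)
    have h13 : lam * (f (x t) - f xbar) ≤ ε * (f (x t) - f xbar) :=
      mul_le_mul_of_nonneg_right hlamε hF
    rw [hVdt t]
    linarith [h5, h6, h7, h10, h11, h12, h13, hEdle]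
  -- exponential decay of the Lyapunov function
  have hVdecay := gronwall_decay lam hVderiv hmain
  -- lower bound for V
  have hVlb : ∀ t ∈ Ici (0:ℝ), (1/2) * (f (x t) - f xbar) + (1/4) * ‖x' t‖^2 ≤ V t := by
    intro t ht
    have hF : (0:ℝ) ≤ f (x t) - f xbar := hFnonneg t
    have haF : μ/2 * ‖x t - xbar‖^2 ≤ f (x t) - f xbar := by
      have := hquad (x t); linarith
    have hinn : ⟪x' t, x' t⟫ = ‖x' t‖^2 := real_inner_self_eq_norm_sq _
    have h1 : -⟪x t - xbar, x' t⟫ ≤ (‖x t - xbar‖^2 + ‖x' t‖^2)/2 := by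
      nlinarith [neg_abs_le ⟪x t - xbar, x' t⟫, abs_real_inner_le_norm (x t - xbar) (x' t),
        sq_nonneg (‖x t - xbar‖ - ‖x' t‖)]
    have h2 := mul_le_mul_of_nonneg_left h1 hεpos.le
    have h4 : ε * ‖x t - xbar‖^2 ≤ f (x t) - f xbar := by
      have h4a : ε * ‖x t - xbar‖^2 ≤ (μ/2) * ‖x t - xbar‖^2 :=
        mul_le_mul_of_nonneg_right hεμ (sq_nonneg _)
      linarith
    have h5 : ε * ‖x' t‖^2 ≤ (1/2) * ‖x' t‖^2 :=
      mul_le_mul_of_nonneg_right hεhalf (sq_nonneg _)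
    rw [hVt t, hEt t, hinn]
    linarith
  have hV0 : 0 ≤ V 0 := by
    have := hVlb 0 self_mem_Ici
    linarith [hFnonneg 0, sq_nonneg ‖x' 0‖]
  -- conclusion
  refine ⟨2 * V 0 + 2 * Real.sqrt (V 0) + 2 * Real.sqrt (V 0 / μ), ?_, lam/2,
    half_pos hlampos, ?_⟩
  · have := Real.sqrt_nonneg (V 0)
    have := Real.sqrt_nonneg (V 0 / μ)
    linarith
  intro t ht
  have ht' : (0:ℝ) ≤ t := ht
  have hVd := hVdecay t ht
  have hlb := hVlb t ht
  have hexple : Real.exp (-lam * t) ≤ Real.exp (-(lam/2) * t) := by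
    apply Real.exp_le_exp.mpr
    nlinarith
  have hexp2 : Real.exp (-lam * t) = (Real.exp (-(lam/2) * t))^2 := by
    rw [sq, ← Real.exp_add]
    congr 1
    ring
  have he2pos : (0:ℝ) < Real.exp (-(lam/2) * t) := Real.exp_pos _
  have hF : (0:ℝ) ≤ f (x t) - f xbar := hFnonneg t
  have haF : μ/2 * ‖x t - xbar‖^2 ≤ f (x t) - f xbar := by
    have := hquad (x t); linarith
  -- value bound
  have hVe2 : V 0 * Real.exp (-lam * t) ≤ V 0 * Real.exp (-(lam/2) * t) :=
    mul_le_mul_of_nonneg_left hexple hV0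
  have c1 : f (x t) - f xbar ≤ 2 * (V 0 * Real.exp (-lam * t)) := by
    nlinarith [sq_nonneg ‖x' t‖]
  have hgoal1 : f (x t) - f xbar ≤
      (2 * V 0 + 2 * Real.sqrt (V 0) + 2 * Real.sqrt (V 0 / μ)) * Real.exp (-(lam/2) * t) := by
    have h2 : 2 * V 0 ≤ 2 * V 0 + 2 * Real.sqrt (V 0) + 2 * Real.sqrt (V 0 / μ) := by
      have := Real.sqrt_nonneg (V 0)
      have := Real.sqrt_nonneg (V 0 / μ)
      linarith
    have h3 := mul_le_mul_of_nonneg_right h2 he2pos.le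
    nlinarith
  -- velocity bound
  have hs1 : (Real.sqrt (V 0))^2 = V 0 := Real.sq_sqrt hV0
  have c2 : ‖x' t‖^2 ≤ (2 * Real.sqrt (V 0) * Real.exp (-(lam/2) * t))^2 := by
    have heq2 : (2 * Real.sqrt (V 0) * Real.exp (-(lam/2) * t))^2
        = 4 * (V 0 * Real.exp (-lam * t)) := by
      rw [hexp2]
      linear_combination (4 * (Real.exp (-(lam/2) * t))^2) * hs1
    rw [heq2]
    nlinarith
  have c2' : ‖x' t‖ ≤ 2 * Real.sqrt (V 0) * Real.exp (-(lam/2) * t) := by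
    have hb := Real.sqrt_le_sqrt c2
    rwa [Real.sqrt_sq (norm_nonneg _), Real.sqrt_sq (by positivity)] at hb
  have hgoal3 : ‖x' t‖ ≤
      (2 * V 0 + 2 * Real.sqrt (V 0) + 2 * Real.sqrt (V 0 / μ)) * Real.exp (-(lam/2) * t) := by
    have h2 : 2 * Real.sqrt (V 0) ≤ 2 * V 0 + 2 * Real.sqrt (V 0) + 2 * Real.sqrt (V 0 / μ) := by
      have := Real.sqrt_nonneg (V 0 / μ)
      linarith
    have h3 := mul_le_mul_of_nonneg_right h2 he2pos.le
    linarith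
  -- position bound
  have hs2 : (Real.sqrt (V 0 / μ))^2 = V 0 / μ := Real.sq_sqrt (by positivity)
  have c3 : ‖x t - xbar‖^2 ≤ (2 * Real.sqrt (V 0 / μ) * Real.exp (-(lam/2) * t))^2 := by
    have heq3 : (2 * Real.sqrt (V 0 / μ) * Real.exp (-(lam/2) * t))^2
        = 4 * (V 0 / μ) * Real.exp (-lam * t) := by
      rw [hexp2]
      linear_combination (4 * (Real.exp (-(lam/2) * t))^2) * hs2
    rw [heq3]
    have key : μ * ‖x t - xbar‖^2 ≤ μ * (4 * (V 0 / μ) * Real.exp (-lam * t)) := by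
      have hexpμ : μ * (4 * (V 0 / μ) * Real.exp (-lam * t))
          = 4 * (V 0 * Real.exp (-lam * t)) := by
        field_simp
      rw [hexpμ]
      linarith
    exact le_of_mul_le_mul_left key hμ
  have c3' : ‖x t - xbar‖ ≤ 2 * Real.sqrt (V 0 / μ) * Real.exp (-(lam/2) * t) := by
    have hb := Real.sqrt_le_sqrt c3
    rwa [Real.sqrt_sq (norm_nonneg _), Real.sqrt_sq (by positivity)] at hb
  have hgoal2 : ‖x t - xbar‖ ≤
      (2 * V 0 + 2 * Real.sqrt (V 0) + 2 * Real.sqrt (V 0 / μ)) * Real.exp (-(lam/2) * t) := by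
    have h2 : 2 * Real.sqrt (V 0 / μ) ≤
        2 * V 0 + 2 * Real.sqrt (V 0) + 2 * Real.sqrt (V 0 / μ) := by
      have := Real.sqrt_nonneg (V 0)
      linarith
    have h3 := mul_le_mul_of_nonneg_right h2 he2pos.le
    linarith
  exact ⟨hgoal1, hgoal2, hgoal3⟩
end
end

section
/- Let c > 0 and let v : [0,∞) → ℝ be twice continuously differentiable with v̇(0) > 0 and v̈(t) ≥ −c·v̇(t)² for all t ≥ 0. Then v̇(t) > 0 for all t ≥ 0 (so v is increasing), and v(t) → +∞ as t → ∞. -/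
open Set Filter Topology

noncomputable section

/-- **Lemma 6.1.**  If `v : [0,∞) → ℝ` is twice continuously differentiable with
`v̇(0) > 0` and `v̈(t) ≥ -c v̇(t)²` for all `t ≥ 0` (with `c > 0`), then `v̇ > 0` on
`[0,∞)` (so `v` is increasing) and `v(t) → +∞` as `t → ∞`. -/
theorem increasing_to_infinity
    (c : ℝ) (hc : 0 < c) (v v' v'' : ℝ → ℝ)
    (hv : ∀ t ∈ Set.Ici (0:ℝ), HasDerivWithinAt v (v' t) (Set.Ici 0) t)
    (hv' : ∀ t ∈ Set.Ici (0:ℝ), HasDerivWithinAt v' (v'' t) (Set.Ici 0) t)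
    (hv''c : ContinuousOn v'' (Set.Ici 0))
    (h0 : 0 < v' 0)
    (hineq : ∀ t ∈ Set.Ici (0:ℝ), -c * (v' t) ^ 2 ≤ v'' t) :
    (∀ t ∈ Set.Ici (0:ℝ), 0 < v' t) ∧
      Tendsto v atTop atTop := by
  -- y = exp (c * v), g = y' = c * v' * exp (c * v)
  set y : ℝ → ℝ := fun t => Real.exp (c * v t) with hy_def
  set g : ℝ → ℝ := fun t => c * v' t * Real.exp (c * v t) with hg_def
  have hyd : ∀ t ∈ Set.Ici (0:ℝ), HasDerivWithinAt y (g t) (Set.Ici 0) t := by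
    intro t ht
    have := (((hv t ht).const_mul c)).exp
    convert this using 1
    ring
  have hgd : ∀ t ∈ Set.Ici (0:ℝ),
      HasDerivWithinAt g ((c * v'' t + c ^ 2 * (v' t) ^ 2) * Real.exp (c * v t))
        (Set.Ici 0) t := by
    intro t ht
    have := ((hv' t ht).const_mul c).mul (((hv t ht).const_mul c).exp)
    exact this.congr_deriv (by ring)
  have hderiv_nonneg : ∀ t ∈ Set.Ici (0:ℝ),
      0 ≤ (c * v'' t + c ^ 2 * (v' t) ^ 2) * Real.exp (c * v t) := by
    intro t ht
    apply mul_nonneg _ (Real.exp_nonneg _)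
    have h1 := hineq t ht
    nlinarith [sq_nonneg (v' t)]
  have hgcont : ContinuousOn g (Set.Ici 0) :=
    fun t ht => ((hgd t ht).continuousWithinAt)
  have hycont : ContinuousOn y (Set.Ici 0) :=
    fun t ht => ((hyd t ht).continuousWithinAt)
  -- g is monotone on Ici 0
  have hmono : MonotoneOn g (Set.Ici (0:ℝ)) := by
    apply monotoneOn_of_deriv_nonneg (convex_Ici (0:ℝ)) hgcont
    · intro t ht
      rw [interior_Ici] at ht
      exact ((hgd t (Ioi_subset_Ici_self ht)).hasDerivAt (Ici_mem_nhds ht)).differentiableAt.differentiableWithinAt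
    · intro t ht
      rw [interior_Ici] at ht
      rw [((hgd t (Ioi_subset_Ici_self ht)).hasDerivAt (Ici_mem_nhds ht)).deriv]
      exact hderiv_nonneg t (Ioi_subset_Ici_self ht)
  have hg0 : 0 < g 0 := by
    simp only [hg_def]
    positivity
  have hglb : ∀ t ∈ Set.Ici (0:ℝ), g 0 ≤ g t := fun t ht =>
    hmono (le_refl (0:ℝ)) ht ht
  have hpos : ∀ t ∈ Set.Ici (0:ℝ), 0 < v' t := by
    intro t ht
    have h1 : 0 < c * v' t * Real.exp (c * v t) := lt_of_lt_of_le hg0 (hglb t ht)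
    by_contra h
    push_neg at h
    have h2 : c * v' t * Real.exp (c * v t) ≤ 0 :=
      mul_nonpos_of_nonpos_of_nonneg
        (mul_nonpos_of_nonneg_of_nonpos hc.le h) (Real.exp_nonneg _)
    linarith
  refine ⟨hpos, ?_⟩
  -- y t - y 0 ≥ g 0 * t
  have hkey : ∀ t ∈ Set.Ici (0:ℝ), g 0 * t ≤ y t - y 0 := by
    have := (convex_Ici (0:ℝ)).mul_sub_le_image_sub_of_le_deriv hycont
      (fun t ht => by
        rw [interior_Ici] at ht
        exact ((hyd t (Ioi_subset_Ici_self ht)).hasDerivAt (Ici_mem_nhds ht)).differentiableAt.differentiableWithinAt)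
      (fun t ht => by
        rw [interior_Ici] at ht
        rw [((hyd t (Ioi_subset_Ici_self ht)).hasDerivAt (Ici_mem_nhds ht)).deriv]
        exact hglb t (Ioi_subset_Ici_self ht))
    intro t ht
    have := this 0 (self_mem_Ici) t ht ht
    simpa using this
  have hytop : Tendsto y atTop atTop := by
    apply tendsto_atTop_mono' atTop
      (show ∀ᶠ t in atTop, y 0 + g 0 * t ≤ y t by
        filter_upwards [eventually_ge_atTop (0:ℝ)] with t ht
        have := hkey t ht
        linarith)
    exact tendsto_atTop_add_const_left _ _ (Tendsto.const_mul_atTop hg0 tendsto_id)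
  have hcv : Tendsto (fun t => c * v t) atTop atTop := by
    rwa [← Real.tendsto_exp_comp_atTop]
  have : Tendsto (fun t => c * v t / c) atTop atTop := hcv.atTop_div_const hc
  have heq : (fun t => c * v t / c) = v := funext fun t => by
    field_simp
  rwa [heq] at this
end
end

section
/- Let f : ℝ → ℝ be a convex function of class C¹ which is coercive (f(x) → +∞ as |x| → ∞) and attains its minimum exactly on a segment [a,b] with a < b (i.e., argmin f = [a,b]). Let p ≥ 3 and let x : [0,∞) → ℝ be a twice continuously differentiable, non-constant solution of ẍ(t) + |ẋ(t)|^{p−2} ẋ(t) + f′(x(t)) = 0 on [0,∞). Then the trajectory passes through the points a and b infinitely many times: for every T ≥ 0 there exist t ≥ T and s ≥ T with x(t) = a and x(s) = b. -/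
open Set Filter Topology

noncomputable section


lemma wdo_pow_helper {p : ℝ} (hp : 3 ≤ p) (v : ℝ) :
    |v| ^ (p-2) * v * v = |v| ^ p := by
  rcases eq_or_ne v 0 with rfl | hv
  · rw [abs_zero, Real.zero_rpow (by linarith : p - 2 ≠ 0),
      Real.zero_rpow (by linarith : p ≠ 0)]
    ring
  · have habs : (0:ℝ) < |v| := abs_pos.mpr hv
    have h2 : v * v = |v| ^ (2:ℝ) := by
      rw [Real.rpow_two, sq, abs_mul_abs_self]
    rw [mul_assoc, h2, ← Real.rpow_add habs]
    norm_num

/-- Monotonicity from `HasDerivAt` on a convex set. -/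
lemma wdo_monoOn {S : Set ℝ} (hS : Convex ℝ S) (g g' : ℝ → ℝ)
    (hc : ContinuousOn g S)
    (hd : ∀ t ∈ interior S, HasDerivAt g (g' t) t)
    (h0 : ∀ t ∈ interior S, 0 ≤ g' t) : MonotoneOn g S := by
  apply monotoneOn_of_deriv_nonneg hS hc
  · exact fun t ht => (hd t ht).differentiableAt.differentiableWithinAt
  · intro t ht; rw [(hd t ht).deriv]; exact h0 t ht

lemma wdo_deriv_ge_linear (y y' : ℝ → ℝ) (T c : ℝ)
    (hd : ∀ t ∈ Ici T, HasDerivAt y (y' t) t)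
    (h : ∀ t ∈ Ici T, c ≤ y' t) :
    ∀ t ∈ Ici T, y T + c * (t - T) ≤ y t := by
  have hm : MonotoneOn (fun t => y t - c * t) (Ici T) := by
    apply wdo_monoOn (convex_Ici T) _ (fun t => y' t - c)
    · exact fun t ht => ((hd t ht).continuousAt).continuousWithinAt.sub
        ((continuous_const.mul continuous_id).continuousOn t ht)
    · intro t ht
      exact ((hd t (interior_subset ht))).sub ((hasDerivAt_id t).const_mul c |>.congr_deriv (by ring))
    · intro t ht; have := h t (interior_subset ht); linarith
  intro t ht
  have := hm (self_mem_Ici) ht ht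
  simp only at this
  linarith

lemma wdo_same_sign (v : ℝ → ℝ) (T : ℝ) (hc : ContinuousOn v (Ici T))
    (hnz : ∀ t ∈ Ici T, v t ≠ 0) :
    (∀ t ∈ Ici T, 0 < v t) ∨ (∀ t ∈ Ici T, v t < 0) := by
  rcases lt_or_gt_of_ne (hnz T self_mem_Ici) with h | h
  · right
    intro t ht
    rcases lt_or_gt_of_ne (hnz t ht) with h' | h'
    · exact h'
    · exfalso
      have hTt : T ≤ t := ht
      have : (0:ℝ) ∈ Icc (v T) (v t) := ⟨le_of_lt h, le_of_lt h'⟩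
      obtain ⟨s, hs, hvs⟩ := intermediate_value_Icc hTt (hc.mono Icc_subset_Ici_self) this
      exact hnz s hs.1 hvs
  · left
    intro t ht
    rcases lt_or_gt_of_ne (hnz t ht) with h' | h'
    · exfalso
      have hTt : T ≤ t := ht
      have : (0:ℝ) ∈ Icc (v t) (v T) := ⟨le_of_lt h', le_of_lt h⟩
      obtain ⟨s, hs, hvs⟩ := intermediate_value_Icc' hTt (hc.mono Icc_subset_Ici_self) this
      exact hnz s hs.1 hvs
    · exact h'

lemma wdo_mono_limit (y : ℝ → ℝ) (T M : ℝ) (hmono : MonotoneOn y (Ici T))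
    (hbdd : ∀ t ∈ Ici T, y t ≤ M) :
    ∃ L, Tendsto y atTop (𝓝 L) ∧ (∀ t ∈ Ici T, y t ≤ L) ∧ L ≤ M := by
  set Y : ℝ → ℝ := fun s => y (max s T) with hY
  have hYm : Monotone Y := fun s s' hss' =>
    hmono (le_max_right s T) (le_max_right s' T) (max_le_max hss' le_rfl)
  have hYb : BddAbove (range Y) := ⟨M, by rintro _ ⟨s, rfl⟩; exact hbdd _ (le_max_right s T)⟩
  refine ⟨⨆ s, Y s, ?_, ?_, ?_⟩
  · have := tendsto_atTop_ciSup hYm hYb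
    apply this.congr'
    filter_upwards [eventually_ge_atTop T] with s hs
    simp [hY, max_eq_left hs]
  · intro t ht
    have : Y t ≤ ⨆ s, Y s := le_ciSup hYb t
    simpa [hY, max_eq_left (mem_Ici.mp ht)] using this
  · exact ciSup_le fun s => hbdd _ (le_max_right s T)

/-- Key comparison: if `w > 0` and `w' ≥ -w^(p-1)` with `p ≥ 3`, and `y' = w`, then
`y` tends to infinity (weak friction cannot stop the particle). -/
lemma wdo_escape {p : ℝ} (hp : 3 ≤ p) (w w' y : ℝ → ℝ) (T₁ : ℝ)
    (hdw : ∀ t ∈ Ici T₁, HasDerivAt w (w' t) t)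
    (hdy : ∀ t ∈ Ici T₁, HasDerivAt y (w t) t)
    (hpos : ∀ t ∈ Ici T₁, 0 < w t)
    (hineq : ∀ t ∈ Ici T₁, -(w t ^ (p-1)) ≤ w' t) :
    Tendsto y atTop atTop := by
  have hp2 : (0:ℝ) < p - 2 := by linarith
  set e : ℝ := 2 - p with he
  have hene : e ≠ 0 := by rw [he]; intro h; linarith [sub_eq_zero.mp h]
  set g : ℝ → ℝ := fun t => w t ^ e with hg
  set A : ℝ := g T₁ with hA
  have hApos : 0 < A := Real.rpow_pos_of_pos (hpos T₁ self_mem_Ici) e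
  set B : ℝ → ℝ := fun t => A + (p-2) * (t - T₁) with hB
  have hBpos : ∀ t ∈ Ici T₁, 0 < B t := by
    intro t ht
    have : (0:ℝ) ≤ (p-2) * (t - T₁) := mul_nonneg (le_of_lt hp2) (by linarith [mem_Ici.mp ht])
    simp only [hB]; linarith
  -- derivative of g
  have hdg : ∀ t ∈ Ici T₁, HasDerivAt g (w' t * e * w t ^ (e - 1)) t := by
    intro t ht
    exact (hdw t ht).rpow_const (Or.inl (ne_of_gt (hpos t ht)))
  -- g' ≤ p - 2
  have hgbound : ∀ t ∈ Ici T₁, w' t * e * w t ^ (e - 1) ≤ p - 2 := by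
    intro t ht
    have hwt : 0 < w t := hpos t ht
    have hrp : (0:ℝ) < w t ^ (e - 1) := Real.rpow_pos_of_pos hwt _
    have h1 : w' t * e ≤ (-(w t ^ (p-1))) * e := by
      have := hineq t ht
      have hel : e < 0 := by rw [he]; linarith
      nlinarith
    calc w' t * e * w t ^ (e-1) ≤ (-(w t ^ (p-1))) * e * w t ^ (e-1) := by
          exact mul_le_mul_of_nonneg_right h1 (le_of_lt hrp)
      _ = (-e) * (w t ^ (p-1) * w t ^ (e-1)) := by ring
      _ = (-e) * w t ^ ((p-1) + (e-1)) := by rw [← Real.rpow_add hwt]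
      _ = (-e) * w t ^ (0:ℝ) := by rw [show (p-1)+(e-1) = (0:ℝ) by rw [he]; ring]
      _ = p - 2 := by rw [Real.rpow_zero, he]; ring
  -- g t ≤ B t on Ici T₁
  have hgB : ∀ t ∈ Ici T₁, g t ≤ B t := by
    have hm : MonotoneOn (fun t => (p-2) * (t - T₁) + A - g t) (Ici T₁) := by
      apply wdo_monoOn (convex_Ici T₁) _
        (fun t => (p-2) - w' t * e * w t ^ (e - 1))
      · intro t ht
        exact (((continuous_const.mul (continuous_id.sub continuous_const)).continuousOn t
          ht).add continuousWithinAt_const).sub ((hdg t ht).continuousAt.continuousWithinAt)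
      · intro t ht
        rw [interior_Ici] at ht
        have h1 : HasDerivAt (fun t => (p-2) * (t - T₁) + A) (p-2) t := by
          simpa using (((hasDerivAt_id t).sub_const T₁).const_mul (p-2)).add_const A
        exact h1.sub (hdg t (mem_Ici.mpr (le_of_lt ht)))
      · intro t ht
        rw [interior_Ici] at ht
        have := hgbound t (mem_Ici.mpr (le_of_lt ht))
        linarith
    intro t ht
    have := hm self_mem_Ici ht (mem_Ici.mp ht)
    simp only [sub_self, mul_zero, zero_add] at this
    simp only [hB]
    linarith
  -- lower bound for w
  have hwB : ∀ t ∈ Ici T₁, B t ^ (1/e) ≤ w t := by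
    intro t ht
    have hwt : 0 < w t := hpos t ht
    have h1 : B t ^ (1/e) ≤ (w t ^ e) ^ (1/e) := by
      apply Real.rpow_le_rpow_of_nonpos (Real.rpow_pos_of_pos hwt e) (hgB t ht)
      rw [he]; simp only [one_div, inv_nonpos]; linarith
    calc B t ^ (1/e) ≤ (w t ^ e) ^ (1/e) := h1
      _ = w t ^ (e * (1/e)) := by rw [← Real.rpow_mul (le_of_lt hwt)]
      _ = w t := by rw [mul_one_div_cancel hene, Real.rpow_one]
  -- choose T₂ where B ≥ 1
  set T₂ : ℝ := max T₁ (T₁ + (1 - A)/(p-2)) with hT₂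
  have hT₂T₁ : T₁ ≤ T₂ := le_max_left _ _
  have hB1 : ∀ t ∈ Ici T₂, 1 ≤ B t := by
    intro t ht
    have h2 : T₁ + (1 - A)/(p-2) ≤ t := le_trans (le_max_right _ _) ht
    have h3 : (1 - A)/(p-2) ≤ t - T₁ := by linarith
    have h4 : 1 - A ≤ (p-2) * (t - T₁) := by
      rw [div_le_iff₀ hp2] at h3; linarith [h3]
    simp only [hB]; linarith
  -- w ≥ 1/B on Ici T₂
  have hwB' : ∀ t ∈ Ici T₂, (B t)⁻¹ ≤ w t := by
    intro t ht
    have htT₁ : t ∈ Ici T₁ := le_trans hT₂T₁ ht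
    have h1 : B t ^ (-1 : ℝ) ≤ B t ^ (1/e) := by
      apply Real.rpow_le_rpow_of_exponent_le (hB1 t ht)
      rw [he, le_div_iff_of_neg (by linarith : (2:ℝ)-p < 0)]
      linarith
    calc (B t)⁻¹ = B t ^ (-1:ℝ) := by rw [Real.rpow_neg_one]
      _ ≤ B t ^ (1/e) := h1
      _ ≤ w t := hwB t htT₁
  -- the potential function ψ
  have hBd : ∀ t : ℝ, HasDerivAt B (p-2) t := by
    intro t
    exact ((((hasDerivAt_id t).sub_const T₁).const_mul (p-2)).const_add A).congr_deriv (mul_one _)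
  have hlogd : ∀ t ∈ Ici T₂, HasDerivAt (fun t => (1/(p-2)) * Real.log (B t)) ((B t)⁻¹) t := by
    intro t ht
    have hBne : B t ≠ 0 := ne_of_gt (hBpos t (le_trans hT₂T₁ ht))
    have h1 : HasDerivAt (fun t => Real.log (B t)) ((B t)⁻¹ * (p-2)) t :=
      (Real.hasDerivAt_log hBne).comp t (hBd t)
    have h2 := h1.const_mul (1/(p-2))
    exact h2.congr_deriv (by rw [one_div, mul_comm, mul_assoc, mul_inv_cancel₀ (ne_of_gt hp2), mul_one])
  have hψm : MonotoneOn (fun t => y t - (1/(p-2)) * Real.log (B t)) (Ici T₂) := by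
    apply wdo_monoOn (convex_Ici T₂) _ (fun t => w t - (B t)⁻¹)
    · intro t ht
      exact ((hdy t (le_trans hT₂T₁ ht)).continuousAt.continuousWithinAt).sub
        ((hlogd t ht).continuousAt.continuousWithinAt)
    · intro t ht
      rw [interior_Ici] at ht
      exact (hdy t (le_trans hT₂T₁ (le_of_lt ht))).sub (hlogd t (mem_Ici.mpr (le_of_lt ht)))
    · intro t ht
      rw [interior_Ici] at ht
      have := hwB' t (mem_Ici.mpr (le_of_lt ht))
      linarith
  -- conclude
  have hBtend : Tendsto B atTop atTop := by
    apply tendsto_atTop_add_const_left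
    exact (tendsto_atTop_add_const_right atTop (-T₁) tendsto_id).const_mul_atTop hp2
  have hlogtend : Tendsto (fun t => (y T₂ - (1/(p-2)) * Real.log (B T₂))
      + (1/(p-2)) * Real.log (B t)) atTop atTop := by
    apply tendsto_atTop_add_const_left
    apply Tendsto.const_mul_atTop (by positivity : (0:ℝ) < 1/(p-2))
    exact Real.tendsto_log_atTop.comp hBtend
  apply tendsto_atTop_mono' atTop _ hlogtend
  filter_upwards [eventually_ge_atTop T₂] with t ht
  have := hψm self_mem_Ici (mem_Ici.mpr ht) ht
  simp only at this
  linarith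
/-- If every zero of `v` on `[T,∞)` has strictly negative derivative, then after
any zero, `v` stays strictly negative. -/
lemma wdo_stays_neg (v v' : ℝ → ℝ) (T : ℝ)
    (hd : ∀ t ∈ Ici T, HasDerivAt v (v' t) t)
    (hz : ∀ t ∈ Ici T, v t = 0 → v' t < 0)
    (t0 : ℝ) (ht0 : T ≤ t0) (h0 : v t0 = 0) :
    ∀ t, t0 < t → v t < 0 := by
  by_contra hcon
  push_neg at hcon
  obtain ⟨t2, ht2, hvt2⟩ := hcon
  -- just after t0, v is negative
  have hslope : Tendsto (slope v t0) (𝓝[≠] t0) (𝓝 (v' t0)) :=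
    hasDerivAt_iff_tendsto_slope.mp (hd t0 ht0)
  have hv't0 : v' t0 < 0 := hz t0 ht0 h0
  have hev : ∀ᶠ s in 𝓝[>] t0, slope v t0 s < 0 :=
    (hslope.mono_left (nhdsWithin_mono t0 (fun s hs => ne_of_gt hs))).eventually_lt_const hv't0
  have hIoo : Ioo t0 t2 ∈ 𝓝[>] t0 := Ioo_mem_nhdsGT_of_mem ⟨le_rfl, ht2⟩
  obtain ⟨t1, hsl1, ht1⟩ := (hev.and (eventually_mem_set.mpr hIoo)).exists
  have hvt1 : v t1 < 0 := by
    have h1 : slope v t0 t1 = v t1 / (t1 - t0) := by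
      rw [slope_def_field, h0, sub_zero]
    rw [h1] at hsl1
    have h2 : 0 < t1 - t0 := by linarith [ht1.1]
    by_contra hge
    push_neg at hge
    exact absurd hsl1 (not_lt.mpr (div_nonneg hge (le_of_lt h2)))
  -- the set of zeros in [t1, t2]
  have hvc : ContinuousOn v (Icc t1 t2) := fun s hs =>
    (hd s (le_trans ht0 (le_trans (le_of_lt ht1.1) hs.1))).continuousAt.continuousWithinAt
  set Z : Set ℝ := Icc t1 t2 ∩ v ⁻¹' {0} with hZdef
  have hZc : IsClosed Z := hvc.preimage_isClosed_of_isClosed isClosed_Icc isClosed_singleton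
  have hZne : Z.Nonempty := by
    have h12 : t1 ≤ t2 := le_of_lt ht1.2
    have : (0:ℝ) ∈ Icc (v t1) (v t2) := ⟨le_of_lt hvt1, hvt2⟩
    obtain ⟨s, hs, hvs⟩ := intermediate_value_Icc h12 hvc this
    exact ⟨s, hs, by simpa using hvs⟩
  have hZbdd : BddBelow Z := ⟨t1, fun z hz => hz.1.1⟩
  set t3 : ℝ := sInf Z with ht3def
  have ht3Z : t3 ∈ Z := hZc.csInf_mem hZne hZbdd
  have hvt3 : v t3 = 0 := by simpa using ht3Z.2
  have ht3mem : t3 ∈ Icc t1 t2 := ht3Z.1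
  have ht13 : t1 < t3 := lt_of_le_of_ne ht3mem.1 (by intro h; rw [← h] at hvt3; linarith)
  have hneg : ∀ s ∈ Ico t1 t3, v s < 0 := by
    intro s hs
    rcases lt_trichotomy (v s) 0 with h | h | h
    · exact h
    · exfalso
      have : s ∈ Z := ⟨⟨hs.1, le_trans (le_of_lt hs.2) ht3mem.2⟩, by simpa using h⟩
      exact absurd (csInf_le hZbdd this) (not_le.mpr hs.2)
    · exfalso
      have h1s : t1 ≤ s := hs.1
      have : (0:ℝ) ∈ Icc (v t1) (v s) := ⟨le_of_lt hvt1, le_of_lt h⟩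
      obtain ⟨s', hs', hvs'⟩ := intermediate_value_Icc h1s
        (hvc.mono (Icc_subset_Icc le_rfl (le_trans (le_of_lt hs.2) ht3mem.2))) this
      have : s' ∈ Z := ⟨⟨hs'.1, le_trans hs'.2 (le_trans (le_of_lt hs.2) ht3mem.2)⟩,
        by simpa using hvs'⟩
      have := csInf_le hZbdd this
      have : s' < t3 := lt_of_le_of_lt hs'.2 hs.2
      linarith [csInf_le hZbdd ‹s' ∈ Z›]
  -- derivative at t3 must be ≥ 0 from the left, contradiction
  have hT3 : T ≤ t3 := le_trans ht0 (le_trans (le_of_lt ht1.1) ht3mem.1)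
  have hv't3 : v' t3 < 0 := hz t3 hT3 hvt3
  have hslope3 : Tendsto (slope v t3) (𝓝[<] t3) (𝓝 (v' t3)) :=
    (hasDerivAt_iff_tendsto_slope.mp (hd t3 hT3)).mono_left
      (nhdsWithin_mono t3 (fun s hs => ne_of_lt hs))
  have hev3 : ∀ᶠ s in 𝓝[<] t3, 0 ≤ slope v t3 s := by
    filter_upwards [eventually_mem_set.mpr (Ioo_mem_nhdsLT_of_mem (⟨ht13, le_rfl⟩ : t3 ∈ Ioc t1 t3))] with s hs
    have h1 : slope v t3 s = v s / (s - t3) := by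
      rw [slope_def_field, hvt3, sub_zero]
    rw [h1]
    have h2 : v s < 0 := hneg s ⟨le_of_lt hs.1, hs.2⟩
    have h3 : s - t3 < 0 := by linarith [hs.2]
    exact le_of_lt (div_pos_of_neg_of_neg h2 h3)
  have : 0 ≤ v' t3 := ge_of_tendsto hslope3 hev3
  linarith
lemma wdo_linear_unbounded (y y' : ℝ → ℝ) (T c M : ℝ) (hc : 0 < c)
    (hd : ∀ t ∈ Ici T, HasDerivAt y (y' t) t)
    (h : ∀ t ∈ Ici T, c ≤ y' t)
    (hb : ∀ t ∈ Ici T, y t ≤ M) : False := by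
  set t : ℝ := max T (T + (M - y T)/c + 1) with htdef
  have ht : T ≤ t := le_max_left _ _
  have h1 := wdo_deriv_ge_linear y y' T c hd h t ht
  have h2 : T + (M - y T)/c + 1 ≤ t := le_max_right _ _
  have h3 : (M - y T)/c + 1 ≤ t - T := by linarith
  have h4 : c * ((M - y T)/c + 1) ≤ c * (t - T) :=
    mul_le_mul_of_nonneg_left h3 (le_of_lt hc)
  have h5 : c * ((M - y T)/c + 1) = (M - y T) + c := by field_simp
  have h6 := hb t ht
  linarith
lemma wdo_vel_limit (E fx v : ℝ → ℝ) (T₁ Einf FL : ℝ)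
    (hE : Tendsto E atTop (𝓝 Einf)) (hfx : Tendsto fx atTop (𝓝 FL))
    (hv : ∀ t ∈ Ici T₁, v t = Real.sqrt (2*(E t - fx t))) :
    Tendsto v atTop (𝓝 (Real.sqrt (2*(Einf - FL)))) := by
  have h1 : Tendsto (fun t => Real.sqrt (2*(E t - fx t))) atTop
      (𝓝 (Real.sqrt (2*(Einf - FL)))) :=
    (Real.continuous_sqrt.tendsto _).comp ((hE.sub hfx).const_mul 2)
  exact h1.congr' (by filter_upwards [eventually_ge_atTop T₁] with t ht using (hv t ht).symm)
set_option maxHeartbeats 1000000 in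
theorem wdo_master
    (f : ℝ → ℝ) (hf : ContDiff ℝ 1 f) (hconv : ConvexOn ℝ Set.univ f)
    (hcoercive : Tendsto f (cocompact ℝ) atTop)
    (a b : ℝ) (hab : a < b)
    (hargmin : {z : ℝ | ∀ y, f z ≤ f y} = Set.Icc a b)
    (p : ℝ) (hp : 3 ≤ p)
    (x x' x'' : ℝ → ℝ)
    (hx : ∀ t ∈ Set.Ici (0:ℝ), HasDerivWithinAt x (x' t) (Set.Ici 0) t)
    (hx' : ∀ t ∈ Set.Ici (0:ℝ), HasDerivWithinAt x' (x'' t) (Set.Ici 0) t)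
    (hx''c : ContinuousOn x'' (Set.Ici 0))
    (heq : ∀ t ∈ Set.Ici (0:ℝ),
        x'' t + |x' t| ^ (p - 2) * x' t + deriv f (x t) = 0)
    (hnonconst : ¬ ∀ s ∈ Set.Ici (0:ℝ), ∀ t ∈ Set.Ici (0:ℝ), x s = x t) :
    ∀ T ∈ Set.Ici (0:ℝ), ∃ t, T ≤ t ∧ x t = a := by
  have hfd : Differentiable ℝ f := hf.differentiable one_ne_zero
  have hf'c : Continuous (deriv f) := hf.continuous_deriv le_rfl
  set m : ℝ := f a with hm
  -- basic facts about argmin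
  have hargmin' : ∀ z : ℝ, (∀ y, f z ≤ f y) ↔ z ∈ Icc a b := fun z => by
    rw [← hargmin]; rfl
  have hmin : ∀ y, m ≤ f y := (hargmin' a).mpr ⟨le_rfl, le_of_lt hab⟩
  have hminIcc : ∀ z ∈ Icc a b, f z = m :=
    fun z hz => le_antisymm ((hargmin' z).mpr hz a) (hmin z)
  have hfgt : ∀ z : ℝ, z ∉ Icc a b → m < f z := by
    intro z hz
    rcases lt_or_ge m (f z) with h | h
    · exact h
    · exact absurd ((hargmin' z).mp (fun y => le_trans h (hmin y))) hz
  -- derivative facts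
  have hf'mono : Monotone (deriv f) :=
    monotoneOn_univ.mp (hconv.monotoneOn_deriv (fun z _ => hfd z))
  have hf'zero : ∀ z ∈ Icc a b, deriv f z = 0 := by
    intro z hz
    exact IsLocalMin.deriv_eq_zero
      (Filter.Eventually.of_forall (fun y => (hargmin' z).mpr hz y))
  have hf'a : deriv f a = 0 := hf'zero a ⟨le_rfl, le_of_lt hab⟩
  have hf'b : deriv f b = 0 := hf'zero b ⟨le_of_lt hab, le_rfl⟩
  have hf'neg : ∀ z, z < a → deriv f z < 0 := by
    intro z hz
    rcases lt_or_ge (deriv f z) 0 with h | h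
    · exact h
    · exfalso
      have hmonoz : MonotoneOn f (Ici z) := by
        apply wdo_monoOn (convex_Ici z) f (deriv f)
          (hfd.continuous.continuousOn) (fun t _ => (hfd t).hasDerivAt)
        intro t ht
        rw [interior_Ici] at ht
        exact le_trans h (hf'mono (le_of_lt ht))
      have : f z ≤ f a := hmonoz self_mem_Ici (mem_Ici.mpr (le_of_lt hz)) (le_of_lt hz)
      have : z ∈ Icc a b := (hargmin' z).mp (fun y => le_trans this (hmin y))
      linarith [this.1]
  have hf'pos : ∀ z, b < z → 0 < deriv f z := by
    intro z hz
    rcases lt_or_ge 0 (deriv f z) with h | h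
    · exact h
    · exfalso
      have hmonoz : MonotoneOn (fun t => -f t) (Iic z) := by
        apply wdo_monoOn (convex_Iic z) _ (fun t => -(deriv f t))
          (hfd.continuous.neg.continuousOn) (fun t _ => (hfd t).hasDerivAt.neg)
        intro t ht
        rw [interior_Iic] at ht
        have := hf'mono (le_of_lt ht)
        simp only [neg_nonneg]
        linarith
      have hbz : b ≤ z := le_of_lt hz
      have : -f b ≤ -f z := hmonoz (mem_Iic.mpr hbz) self_mem_Iic hbz
      have hfzb : f z ≤ f b := by linarith
      have : z ∈ Icc a b := (hargmin' z).mp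
        (fun y => le_trans (le_trans hfzb (le_of_eq (hminIcc b ⟨le_of_lt hab, le_rfl⟩))) (hmin y))
      linarith [this.2]
  -- solution continuity and derivatives
  have hxc : ContinuousOn x (Ici 0) := fun t ht => (hx t ht).continuousWithinAt
  have hx'c : ContinuousOn x' (Ici 0) := fun t ht => (hx' t ht).continuousWithinAt
  have hD : ∀ t : ℝ, 0 < t → HasDerivAt x (x' t) t := fun t ht =>
    (hx t (le_of_lt ht)).hasDerivAt (Ici_mem_nhds ht)
  have hD' : ∀ t : ℝ, 0 < t → HasDerivAt x' (x'' t) t := fun t ht =>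
    (hx' t (le_of_lt ht)).hasDerivAt (Ici_mem_nhds ht)
  -- energy
  set E : ℝ → ℝ := fun t => (x' t)^2/2 + f (x t) with hE
  have hEc : ContinuousOn E (Ici 0) :=
    (((hx'c.pow 2).div_const 2).add (hfd.continuous.comp_continuousOn hxc))
  have hEd : ∀ t : ℝ, 0 < t → HasDerivAt E (-(|x' t| ^ p)) t := by
    intro t ht
    have h1 : HasDerivAt (fun s => (x' s)^2/2) (x' t * x'' t) t := by
      have := ((hD' t ht).pow 2).div_const 2
      exact this.congr_deriv (by simp; ring)
    have h2 : HasDerivAt (fun s => f (x s)) (deriv f (x t) * x' t) t :=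
      (hfd (x t)).hasDerivAt.comp t (hD t ht)
    have h3 := h1.add h2
    refine h3.congr_deriv ?_
    have h4 := heq t (le_of_lt ht)
    have h5 := wdo_pow_helper hp (x' t)
    have h6 : x'' t = -(|x' t| ^ (p-2) * x' t) - deriv f (x t) := by linarith
    rw [h6, ← h5]; ring
  have hEanti : AntitoneOn E (Ici 0) := by
    have := wdo_monoOn (convex_Ici (0:ℝ)) (fun t => -E t) (fun t => |x' t| ^ p)
      hEc.neg
      (fun t ht => by rw [interior_Ici] at ht; exact ((hEd t ht).neg).congr_deriv (neg_neg _))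
      (fun t ht => Real.rpow_nonneg (abs_nonneg _) p)
    intro s hs t ht hst
    have := this hs ht hst
    simpa using this
  have hEm : ∀ t : ℝ, m ≤ E t := by
    intro t
    have := hmin (x t)
    have hsq : (0:ℝ) ≤ (x' t)^2/2 := by positivity
    simp only [hE]; linarith
  have hv2 : ∀ t : ℝ, (x' t)^2 = 2*(E t - f (x t)) := by
    intro t; simp only [hE]; ring
  -- boundedness of the trajectory
  obtain ⟨M, hM⟩ : ∃ M : ℝ, ∀ t ∈ Ici (0:ℝ), |x t| ≤ M := by
    have hev : ∀ᶠ z in cocompact ℝ, E 0 < f z := hcoercive.eventually_gt_atTop (E 0)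
    rw [hasBasis_cocompact.eventually_iff] at hev
    obtain ⟨K, hK, hKf⟩ := hev
    obtain ⟨r, hr⟩ := hK.isBounded.subset_closedBall 0
    refine ⟨r, fun t ht => ?_⟩
    have h1 : f (x t) ≤ E t := by
      have hsq : (0:ℝ) ≤ (x' t)^2/2 := by positivity
      simp only [hE]; linarith
    have h2 : f (x t) ≤ E 0 := le_trans h1 (hEanti self_mem_Ici ht ht)
    by_contra hcon
    push_neg at hcon
    have : x t ∉ K := fun hmem => by
      have := hr hmem
      rw [Metric.mem_closedBall, Real.dist_eq, sub_zero] at this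
      linarith
    exact absurd h2 (not_le.mpr (hKf this))
  -- nonconstancy gives a time with energy above the minimum
  have hs0 : ∃ s0 ∈ Ici (0:ℝ), m < E s0 := by
    by_contra hcon
    push_neg at hcon
    have hzero : ∀ s ∈ Ici (0:ℝ), x' s = 0 := by
      intro s hs
      have h1 : E s = m := le_antisymm (hcon s hs) (hEm s)
      have h2 := hmin (x s)
      have h3 : (x' s)^2 = 2*(E s - f (x s)) := hv2 s
      nlinarith [sq_nonneg (x' s)]
    apply hnonconst
    have hmono : MonotoneOn x (Ici 0) := by
      apply wdo_monoOn (convex_Ici 0) x x' hxc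
        (fun t ht => hD t (by rwa [interior_Ici] at ht))
      intro t ht
      rw [interior_Ici] at ht
      rw [hzero t (mem_Ici.mpr (le_of_lt ht))]
    have hanti : AntitoneOn x (Ici 0) := by
      intro s hs t ht hst
      have := wdo_monoOn (convex_Ici (0:ℝ)) (fun t => -x t) (fun t => -x' t)
        hxc.neg (fun t ht => by rw [interior_Ici] at ht; exact (hD t ht).neg)
        (fun t ht => by rw [interior_Ici] at ht; simp [hzero t (mem_Ici.mpr (le_of_lt ht))])
      have := this hs ht hst
      simpa using this
    intro s hs t ht
    rcases le_total s t with h | h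
    · exact le_antisymm (hmono hs ht h) (hanti hs ht h)
    · exact le_antisymm (hanti ht hs h) (hmono ht hs h)
  obtain ⟨s0, hs0mem, hEs0⟩ := hs0
  -- the energy never reaches the minimum (weak damping comparison)
  have hEgt : ∀ t ∈ Ici (0:ℝ), m < E t := by
    intro t ht
    rcases le_or_gt t s0 with hts | hts
    · exact lt_of_lt_of_le hEs0 (hEanti ht hs0mem hts)
    by_contra hcon
    push_neg at hcon
    have hEt : E t = m := le_antisymm hcon (hEm t)
    -- first zero of E - m after s0
    set Z : Set ℝ := Icc s0 t ∩ E ⁻¹' {m} with hZdef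
    have hZc : IsClosed Z :=
      (hEc.mono (fun z hz => le_trans hs0mem hz.1)).preimage_isClosed_of_isClosed
        isClosed_Icc isClosed_singleton
    have hZne : Z.Nonempty := ⟨t, ⟨⟨le_of_lt hts, le_rfl⟩, by simpa using hEt⟩⟩
    have hZbdd : BddBelow Z := ⟨s0, fun z hz => hz.1.1⟩
    set t1 : ℝ := sInf Z with ht1def
    have ht1Z : t1 ∈ Z := hZc.csInf_mem hZne hZbdd
    have hEt1 : E t1 = m := by simpa using ht1Z.2
    have ht1mem : t1 ∈ Icc s0 t := ht1Z.1
    have hs0t1 : s0 < t1 := lt_of_le_of_ne ht1mem.1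
      (by intro h; rw [← h] at hEt1; linarith)
    have hψpos : ∀ s ∈ Ico s0 t1, m < E s := by
      intro s hs
      rcases lt_or_ge m (E s) with h | h
      · exact h
      · exfalso
        have hsZ : s ∈ Z := ⟨⟨hs.1, le_trans (le_of_lt hs.2) ht1mem.2⟩,
          by simp [le_antisymm h (hEm s)]⟩
        exact absurd (csInf_le hZbdd hsZ) (not_le.mpr hs.2)
    -- comparison function g = (E - m)^(1 - p/2)
    set e2 : ℝ := 1 - p/2 with he2
    have he2neg : e2 < 0 := by rw [he2]; linarith
    have he2ne : e2 ≠ 0 := ne_of_lt he2neg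
    set C : ℝ := (p/2 - 1) * (2:ℝ) ^ (p/2) with hC
    have hCpos : 0 < C := by
      apply mul_pos (by linarith) (Real.rpow_pos_of_pos (by norm_num) _)
    set g : ℝ → ℝ := fun s => (E s - m) ^ e2 with hg
    -- bound |x'|^p ≤ 2^(p/2) (E-m)^(p/2)
    have hvp : ∀ s : ℝ, |x' s| ^ p ≤ (2:ℝ)^(p/2) * (E s - m) ^ (p/2) := by
      intro s
      have h1 : |x' s| ^ p = ((x' s)^2) ^ (p/2) := by
        rw [← sq_abs, ← Real.rpow_natCast (|x' s|) 2, ← Real.rpow_mul (abs_nonneg _)]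
        rw [show ((2:ℕ):ℝ) * (p/2) = p by push_cast; ring]
      have h2 : (x' s)^2 ≤ 2 * (E s - m) := by
        have := hv2 s
        have := hmin (x s)
        nlinarith
      calc |x' s| ^ p = ((x' s)^2) ^ (p/2) := h1
        _ ≤ (2 * (E s - m)) ^ (p/2) :=
            Real.rpow_le_rpow (sq_nonneg _) h2 (by linarith)
        _ = (2:ℝ)^(p/2) * (E s - m) ^ (p/2) := by
            apply Real.mul_rpow (by norm_num)
            nlinarith [hv2 s, hmin (x s), sq_nonneg (x' s)]
    -- g grows at most linearly on [s0, s] for s < t1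
    have hgbd : ∀ s ∈ Ico s0 t1, g s ≤ g s0 + C * (s - s0) := by
      intro s hs
      have hmono : MonotoneOn (fun u => C * u - g u) (Icc s0 s) := by
        apply wdo_monoOn (convex_Icc s0 s) _
          (fun u => C - (-(|x' u| ^ p)) * e2 * (E u - m)^(e2 - 1))
        · intro u hu
          apply ContinuousWithinAt.sub
            ((continuous_const.mul continuous_id).continuousOn u hu)
          have hu0 : u ∈ Ici (0:ℝ) := le_trans hs0mem hu.1
          have hupos : 0 < E u - m := by
            have : u ∈ Ico s0 t1 := ⟨hu.1, lt_of_le_of_lt hu.2 hs.2⟩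
            linarith [hψpos u this]
          apply ContinuousWithinAt.rpow_const
          · exact ((hEc u hu0).mono (fun z hz => le_trans hs0mem hz.1)).sub
              continuousWithinAt_const
          · exact Or.inl (ne_of_gt hupos)
        · intro u hu
          rw [interior_Icc] at hu
          have hu0 : (0:ℝ) < u := lt_of_le_of_lt hs0mem hu.1
          have hupos : E u - m ≠ 0 := by
            have : u ∈ Ico s0 t1 := ⟨le_of_lt hu.1, lt_of_lt_of_le hu.2 (le_of_lt hs.2)⟩
            have := hψpos u this
            intro hc; rw [sub_eq_zero] at hc; rw [hc] at this; linarith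
          have h1 : HasDerivAt (fun u => E u - m) (-(|x' u| ^ p)) u :=
            (hEd u hu0).sub_const m
          have h2 : HasDerivAt (fun u => (E u - m) ^ e2)
              ((-(|x' u| ^ p)) * e2 * (E u - m)^(e2 - 1)) u :=
            h1.rpow_const (Or.inl hupos)
          have h3 := ((hasDerivAt_id u).const_mul C).sub h2
          exact h3.congr_deriv (by ring)
        · intro u hu
          rw [interior_Icc] at hu
          have huIco : u ∈ Ico s0 t1 := ⟨le_of_lt hu.1, lt_of_lt_of_le hu.2 (le_of_lt hs.2)⟩
          have hupos : 0 < E u - m := by linarith [hψpos u huIco]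
          have h3 : (-(|x' u| ^ p)) * e2 * (E u - m)^(e2 - 1) ≤ C := by
            have hrp : (0:ℝ) < (E u - m) ^ (e2 - 1) := Real.rpow_pos_of_pos hupos _
            have h4 : (-(|x' u| ^ p)) * e2 ≤ ((2:ℝ)^(p/2) * (E u - m) ^ (p/2)) * (-e2) := by
              have := hvp u
              nlinarith
            calc (-(|x' u| ^ p)) * e2 * (E u - m)^(e2 - 1)
                ≤ ((2:ℝ)^(p/2) * (E u - m) ^ (p/2)) * (-e2) * (E u - m)^(e2 - 1) :=
                  mul_le_mul_of_nonneg_right h4 (le_of_lt hrp)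
              _ = (-e2) * (2:ℝ)^(p/2) * ((E u - m) ^ (p/2) * (E u - m)^(e2 - 1)) := by ring
              _ = (-e2) * (2:ℝ)^(p/2) * (E u - m) ^ (p/2 + (e2 - 1)) := by
                  rw [← Real.rpow_add hupos]
              _ = (-e2) * (2:ℝ)^(p/2) * (E u - m) ^ (0:ℝ) := by
                  rw [show p/2 + (e2 - 1) = (0:ℝ) by rw [he2]; ring]
              _ = C := by rw [Real.rpow_zero, hC, he2]; ring
          linarith
      have := hmono (left_mem_Icc.mpr hs.1) (right_mem_Icc.mpr hs.1) hs.1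
      simp only at this
      linarith
    -- hence E - m is bounded below by a positive constant on [s0, t1)
    set G : ℝ := g s0 + C * (t1 - s0) with hG
    have hgs0pos : 0 < g s0 := Real.rpow_pos_of_pos (by linarith) e2
    have hGpos : 0 < G := by
      have : (0:ℝ) ≤ C * (t1 - s0) := mul_nonneg (le_of_lt hCpos) (by linarith)
      rw [hG]; linarith
    set δ : ℝ := G ^ (1/e2) with hδ
    have hδpos : 0 < δ := Real.rpow_pos_of_pos hGpos _
    have hlow : ∀ s ∈ Ico s0 t1, m + δ ≤ E s := by
      intro s hs
      have hψs : 0 < E s - m := by linarith [hψpos s hs]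
      have h1 : g s ≤ G := by
        have := hgbd s hs
        have h2 : C * (s - s0) ≤ C * (t1 - s0) :=
          mul_le_mul_of_nonneg_left (by linarith [hs.2]) (le_of_lt hCpos)
        rw [hG]; linarith
      have h2 : G ^ (1/e2) ≤ ((E s - m) ^ e2) ^ (1/e2) := by
        apply Real.rpow_le_rpow_of_nonpos (Real.rpow_pos_of_pos hψs e2) h1
        rw [one_div, inv_nonpos]; linarith
      have h3 : ((E s - m) ^ e2) ^ (1/e2) = E s - m := by
        rw [← Real.rpow_mul (le_of_lt hψs), mul_one_div_cancel he2ne, Real.rpow_one]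
      rw [h3] at h2
      rw [hδ]; linarith
    -- contradiction with continuity at t1
    have hcont : Tendsto E (𝓝[Ico s0 t1] t1) (𝓝 (E t1)) := by
      have h1 : ContinuousWithinAt E (Icc s0 t1) t1 :=
        (hEc.mono (fun z hz => le_trans hs0mem hz.1)) t1 (right_mem_Icc.mpr (le_of_lt hs0t1))
      exact h1.tendsto.mono_left (nhdsWithin_mono t1 Ico_subset_Icc_self)
    have hNB : (𝓝[Ico s0 t1] t1).NeBot := by
      apply mem_closure_iff_nhdsWithin_neBot.mp
      rw [closure_Ico (ne_of_lt hs0t1)]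
      exact right_mem_Icc.mpr (le_of_lt hs0t1)
    have : m + δ ≤ E t1 :=
      ge_of_tendsto hcont (eventually_nhdsWithin_of_forall (fun s hs => hlow s hs))
    rw [hEt1] at this
    linarith
  -- limit of the energy
  obtain ⟨L', hEtends', hEble, _⟩ := wdo_mono_limit (fun t => -E t) 0 (-m)
    (fun s hs t ht hst => neg_le_neg (hEanti hs ht hst))
    (fun t _ => neg_le_neg (hEm t))
  set Einf : ℝ := -L' with hEinf
  have hEtends : Tendsto E atTop (𝓝 Einf) := by
    have := hEtends'.neg
    simpa using this
  -- main argument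
  intro T hT
  by_contra hcon
  push_neg at hcon
  set T' : ℝ := T + 1 with hT'
  have hT'pos : (0:ℝ) < T' := by rw [hT']; linarith [mem_Ici.mp hT]
  have hsub : Ici T' ⊆ Ici (0:ℝ) := fun t ht => le_trans (le_of_lt hT'pos) ht
  have hne : ∀ t ∈ Ici T', x t - a ≠ 0 := by
    intro t ht
    have h1 : T ≤ t := by have := mem_Ici.mp ht; rw [hT'] at this; linarith
    intro h
    exact hcon t h1 (by linarith [sub_eq_zero.mp h])
  have hdv : ∀ t ∈ Ici T', HasDerivAt x' (x'' t) t :=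
    fun t ht => hD' t (lt_of_lt_of_le hT'pos ht)
  have hdx : ∀ t ∈ Ici T', HasDerivAt x (x' t) t :=
    fun t ht => hD t (lt_of_lt_of_le hT'pos ht)
  have hx''eq : ∀ t ∈ Ici (0:ℝ), x'' t = -(|x' t| ^ (p-2) * x' t) - deriv f (x t) := by
    intro t ht
    have := heq t ht
    linarith
  have hside := wdo_same_sign (fun t => x t - a) T'
    ((hxc.mono hsub).sub continuousOn_const) hne
  rcases hside with hsideA | hsideB
  · -- CASE A : x > a on [T',∞)
    have hsideA' : ∀ t ∈ Ici T', a < x t := by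
      intro t ht; have := hsideA t ht; linarith
    -- at zeros of x', the second derivative is negative
    have hzneg : ∀ t ∈ Ici T', x' t = 0 → x'' t < 0 := by
      intro t ht h0
      have hEf : E t = f (x t) := by simp [hE, h0]
      have hfx : m < f (x t) := by rw [← hEf]; exact hEgt t (hsub ht)
      have hxb : b < x t := by
        rcases lt_or_ge b (x t) with h | h
        · exact h
        · exfalso
          have : x t ∈ Icc a b := ⟨le_of_lt (hsideA' t ht), h⟩
          rw [hminIcc _ this] at hfx; linarith
      have h1 := hx''eq t (hsub ht)
      rw [h0] at h1
      simp only [abs_zero, mul_zero, neg_zero, zero_sub] at h1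
      rw [h1]
      simpa using hf'pos (x t) hxb
    -- case A1 : eventually x' < 0
    have caseA1 : ∀ T₁, T' ≤ T₁ → (∀ t ∈ Ici T₁, x' t < 0) → False := by
      intro T₁ hT₁ hvneg
      have hT₁0 : Ici T₁ ⊆ Ici T' := fun t ht => le_trans hT₁ ht
      have hineq : ∀ t ∈ Ici T₁, -((-x' t) ^ (p-1)) ≤ -x'' t := by
        intro t ht
        have hv := hvneg t ht
        have hwpos : (0:ℝ) < -x' t := by linarith
        have hpow : (-x' t) ^ (p-2) * (-x' t) = (-x' t) ^ (p-1) := by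
          rw [show p - 1 = (p-2) + 1 by ring, Real.rpow_add_one (ne_of_gt hwpos)]
        have hf' : 0 ≤ deriv f (x t) := by
          rw [← hf'a]; exact hf'mono (le_of_lt (hsideA' t (hT₁0 ht)))
        have h1 := hx''eq t (hsub (hT₁0 ht))
        rw [abs_of_neg hv] at h1
        have h2 : (-x' t) ^ (p-2) * x' t = -((-x' t) ^ (p-1)) := by
          rw [← hpow]; ring
        linarith
      have hesc := wdo_escape hp (fun t => -x' t) (fun t => -x'' t) (fun t => -x t) T₁
        (fun t ht => (hdv t (hT₁0 ht)).neg)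
        (fun t ht => (hdx t (hT₁0 ht)).neg)
        (fun t ht => by simpa using hvneg t ht)
        hineq
      obtain ⟨t, h1, h2⟩ := ((hesc.eventually_gt_atTop (-a)).and (eventually_ge_atTop T₁)).exists
      have := hsideA' t (hT₁0 h2)
      linarith
    -- case A2 : eventually x' > 0
    have caseA2 : ∀ T₁, T' ≤ T₁ → (∀ t ∈ Ici T₁, 0 < x' t) → False := by
      intro T₁ hT₁ hvpos
      have hT₁0 : Ici T₁ ⊆ Ici T' := fun t ht => le_trans hT₁ ht
      have hmx : MonotoneOn x (Ici T₁) := by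
        apply wdo_monoOn (convex_Ici T₁) x x' (hxc.mono (fun t ht => hsub (hT₁0 ht)))
        · intro t ht; rw [interior_Ici] at ht; exact hdx t (hT₁0 (mem_Ici.mpr (le_of_lt ht)))
        · intro t ht; rw [interior_Ici] at ht; exact le_of_lt (hvpos t (mem_Ici.mpr (le_of_lt ht)))
      obtain ⟨L, hLx, hxL, _⟩ := wdo_mono_limit x T₁ M hmx
        (fun t ht => (abs_le.mp (hM t (hsub (hT₁0 ht)))).2)
      have hfxL : Tendsto (fun t => f (x t)) atTop (𝓝 (f L)) :=
        (hfd.continuous.tendsto L).comp hLx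
      have hvform : ∀ t ∈ Ici T₁, x' t = Real.sqrt (2*(E t - f (x t))) := by
        intro t ht
        rw [← hv2 t, Real.sqrt_sq (le_of_lt (hvpos t ht))]
      have hvtend := wdo_vel_limit E (fun t => f (x t)) x' T₁ Einf (f L) hEtends hfxL hvform
      have hvinf0 : Real.sqrt (2*(Einf - f L)) = 0 := by
        by_contra hne0
        have hvpos' : 0 < Real.sqrt (2*(Einf - f L)) :=
          lt_of_le_of_ne (Real.sqrt_nonneg _) (Ne.symm hne0)
        obtain ⟨T₂, hT₂⟩ := eventually_atTop.mp
          (hvtend.eventually_const_lt (half_lt_self hvpos'))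
        exact wdo_linear_unbounded x x' (max T₁ T₂) (Real.sqrt (2*(Einf - f L))/2) M
          (by positivity)
          (fun t ht => hdx t (hT₁0 (mem_Ici.mpr (le_trans (le_max_left _ _) ht))))
          (fun t ht => le_of_lt (hT₂ t (le_trans (le_max_right _ _) ht)))
          (fun t ht => (abs_le.mp (hM t (hsub (hT₁0 (mem_Ici.mpr (le_trans (le_max_left _ _) ht)))))).2)
      rw [hvinf0] at hvtend
      have habs0 : Tendsto (fun t => |x' t|) atTop (𝓝 0) := by simpa using hvtend.abs
      have hpow0 : Tendsto (fun t => |x' t| ^ (p-2)) atTop (𝓝 0) := by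
        have hc : ContinuousAt (fun z : ℝ => z ^ (p-2)) 0 :=
          Real.continuousAt_rpow_const 0 (p-2) (Or.inr (by linarith))
        have := hc.tendsto.comp habs0
        simpa [Function.comp_def, Real.zero_rpow (show p-2 ≠ 0 by linarith)] using this
      have hterm0 : Tendsto (fun t => |x' t| ^ (p-2) * x' t) atTop (𝓝 0) := by
        simpa using hpow0.mul hvtend
      have hf'xt : Tendsto (fun t => deriv f (x t)) atTop (𝓝 (deriv f L)) :=
        (hf'c.tendsto L).comp hLx
      have hx''tend : Tendsto x'' atTop (𝓝 (-(deriv f L))) := by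
        have h1 := (hterm0.neg).sub hf'xt
        simp only [neg_zero, zero_sub] at h1
        exact (Tendsto.congr'
          (by filter_upwards [eventually_ge_atTop (0:ℝ)] with t ht using (hx''eq t ht).symm)
          h1)
      have hf'L : deriv f L ≤ 0 := by
        by_contra hpos'
        push_neg at hpos'
        obtain ⟨T₂, hT₂⟩ := eventually_atTop.mp
          (hx''tend.eventually_lt_const (by linarith : -(deriv f L) < -(deriv f L)/2))
        exact wdo_linear_unbounded (fun t => -x' t) (fun t => -x'' t) (max T₁ T₂)
          (deriv f L / 2) 0 (by linarith)
          (fun t ht => (hdv t (hT₁0 (mem_Ici.mpr (le_trans (le_max_left _ _) ht)))).neg)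
          (fun t ht => by have := hT₂ t (le_trans (le_max_right _ _) ht); linarith)
          (fun t ht => by have := hvpos t (mem_Ici.mpr (le_trans (le_max_left _ _) ht)); linarith)
      have hf'x0 : ∀ t ∈ Ici T₁, deriv f (x t) = 0 := by
        intro t ht
        have h1 : 0 ≤ deriv f (x t) := by
          rw [← hf'a]; exact hf'mono (le_of_lt (hsideA' t (hT₁0 ht)))
        have h2 : deriv f (x t) ≤ deriv f L := hf'mono (hxL t ht)
        linarith
      have hineq : ∀ t ∈ Ici T₁, -((x' t) ^ (p-1)) ≤ x'' t := by
        intro t ht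
        have hv := hvpos t ht
        have h1 := hx''eq t (hsub (hT₁0 ht))
        rw [abs_of_pos hv, hf'x0 t ht] at h1
        have hpow : x' t ^ (p-2) * x' t = x' t ^ (p-1) := by
          rw [show p - 1 = (p-2) + 1 by ring, Real.rpow_add_one (ne_of_gt hv)]
        linarith
      have hesc := wdo_escape hp x' x'' x T₁ (fun t ht => hdv t (hT₁0 ht))
        (fun t ht => hdx t (hT₁0 ht)) hvpos hineq
      obtain ⟨t, h1, h2⟩ := ((hesc.eventually_gt_atTop M).and (eventually_ge_atTop T₁)).exists
      have := (abs_le.mp (hM t (hsub (hT₁0 h2)))).2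
      linarith
    by_cases hzex : ∃ t0 ∈ Ici T', x' t0 = 0
    · obtain ⟨t0, ht0, h0⟩ := hzex
      have := wdo_stays_neg x' x'' T' hdv hzneg t0 ht0 h0
      exact caseA1 (t0 + 1) (by linarith [mem_Ici.mp ht0])
        (fun t ht => this t (by linarith [mem_Ici.mp ht]))
    · push_neg at hzex
      rcases wdo_same_sign x' T' (hx'c.mono hsub) hzex with h | h
      · exact caseA2 T' le_rfl h
      · exact caseA1 T' le_rfl h
  · -- CASE B : x < a on [T',∞)
    have hsideB' : ∀ t ∈ Ici T', x t < a := by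
      intro t ht; have := hsideB t ht; linarith
    have hzpos : ∀ t ∈ Ici T', x' t = 0 → 0 < x'' t := by
      intro t ht h0
      have h1 := hx''eq t (hsub ht)
      rw [h0] at h1
      simp only [abs_zero, mul_zero, neg_zero, zero_sub] at h1
      rw [h1]
      simpa using hf'neg (x t) (hsideB' t ht)
    -- case B1 : eventually x' > 0
    have caseB1 : ∀ T₁, T' ≤ T₁ → (∀ t ∈ Ici T₁, 0 < x' t) → False := by
      intro T₁ hT₁ hvpos
      have hT₁0 : Ici T₁ ⊆ Ici T' := fun t ht => le_trans hT₁ ht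
      have hineq : ∀ t ∈ Ici T₁, -((x' t) ^ (p-1)) ≤ x'' t := by
        intro t ht
        have hv := hvpos t ht
        have h1 := hx''eq t (hsub (hT₁0 ht))
        rw [abs_of_pos hv] at h1
        have hf' : deriv f (x t) < 0 := hf'neg (x t) (hsideB' t (hT₁0 ht))
        have hpow : x' t ^ (p-2) * x' t = x' t ^ (p-1) := by
          rw [show p - 1 = (p-2) + 1 by ring, Real.rpow_add_one (ne_of_gt hv)]
        linarith
      have hesc := wdo_escape hp x' x'' x T₁ (fun t ht => hdv t (hT₁0 ht))
        (fun t ht => hdx t (hT₁0 ht)) hvpos hineq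
      obtain ⟨t, h1, h2⟩ := ((hesc.eventually_gt_atTop a).and (eventually_ge_atTop T₁)).exists
      have := hsideB' t (hT₁0 h2)
      linarith
    -- case B2 : eventually x' < 0
    have caseB2 : ∀ T₁, T' ≤ T₁ → (∀ t ∈ Ici T₁, x' t < 0) → False := by
      intro T₁ hT₁ hvneg
      have hT₁0 : Ici T₁ ⊆ Ici T' := fun t ht => le_trans hT₁ ht
      have hmy : MonotoneOn (fun t => -x t) (Ici T₁) := by
        apply wdo_monoOn (convex_Ici T₁) _ (fun t => -x' t)
          ((hxc.mono (fun t ht => hsub (hT₁0 ht))).neg)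
        · intro t ht; rw [interior_Ici] at ht; exact (hdx t (hT₁0 (mem_Ici.mpr (le_of_lt ht)))).neg
        · intro t ht; rw [interior_Ici] at ht
          have := hvneg t (mem_Ici.mpr (le_of_lt ht))
          show 0 ≤ -x' t
          linarith
      have hybdd : ∀ t ∈ Ici T₁, (fun t => -x t) t ≤ M := by
        intro t ht
        have := (abs_le.mp (hM t (hsub (hT₁0 ht)))).1
        show -x t ≤ M
        linarith
      obtain ⟨L', hLy, hyL, _⟩ := wdo_mono_limit (fun t => -x t) T₁ M hmy hybdd
      have hLx : Tendsto x atTop (𝓝 (-L')) := by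
        have h := hLy.neg
        exact h.congr (fun t => neg_neg (x t))
      have hLa : -L' < a := by
        have h1 : -x T₁ ≤ L' := hyL T₁ self_mem_Ici
        have h2 := hsideB' T₁ (hT₁0 self_mem_Ici)
        linarith
      have hfxL : Tendsto (fun t => f (x t)) atTop (𝓝 (f (-L'))) :=
        (hfd.continuous.tendsto _).comp hLx
      have hvform : ∀ t ∈ Ici T₁, -x' t = Real.sqrt (2*(E t - f (x t))) := by
        intro t ht
        rw [← hv2 t, Real.sqrt_sq_eq_abs, abs_of_neg (hvneg t ht)]
      have hwtend := wdo_vel_limit E (fun t => f (x t)) (fun t => -x' t) T₁ Einf (f (-L'))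
        hEtends hfxL hvform
      have hvinf0 : Real.sqrt (2*(Einf - f (-L'))) = 0 := by
        by_contra hne0
        have hvpos' : 0 < Real.sqrt (2*(Einf - f (-L'))) :=
          lt_of_le_of_ne (Real.sqrt_nonneg _) (Ne.symm hne0)
        obtain ⟨T₂, hT₂⟩ := eventually_atTop.mp
          (hwtend.eventually_const_lt (half_lt_self hvpos'))
        exact wdo_linear_unbounded (fun t => -x t) (fun t => -x' t) (max T₁ T₂)
          (Real.sqrt (2*(Einf - f (-L')))/2) M (by positivity)
          (fun t ht => (hdx t (hT₁0 (mem_Ici.mpr (le_trans (le_max_left _ _) ht)))).neg)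
          (fun t ht => le_of_lt (hT₂ t (le_trans (le_max_right _ _) ht)))
          (fun t ht => by
            have := (abs_le.mp (hM t (hsub (hT₁0 (mem_Ici.mpr (le_trans (le_max_left _ _) ht)))))).1
            linarith)
      rw [hvinf0] at hwtend
      have hv0 : Tendsto x' atTop (𝓝 0) := by simpa using hwtend.neg
      have habs0 : Tendsto (fun t => |x' t|) atTop (𝓝 0) := by simpa using hv0.abs
      have hpow0 : Tendsto (fun t => |x' t| ^ (p-2)) atTop (𝓝 0) := by
        have hc : ContinuousAt (fun z : ℝ => z ^ (p-2)) 0 :=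
          Real.continuousAt_rpow_const 0 (p-2) (Or.inr (by linarith))
        have := hc.tendsto.comp habs0
        simpa [Function.comp_def, Real.zero_rpow (show p-2 ≠ 0 by linarith)] using this
      have hterm0 : Tendsto (fun t => |x' t| ^ (p-2) * x' t) atTop (𝓝 0) := by
        simpa using hpow0.mul hv0
      have hf'xt : Tendsto (fun t => deriv f (x t)) atTop (𝓝 (deriv f (-L'))) :=
        (hf'c.tendsto _).comp hLx
      have hx''tend : Tendsto x'' atTop (𝓝 (-(deriv f (-L')))) := by
        have h1 := (hterm0.neg).sub hf'xt
        simp only [neg_zero, zero_sub] at h1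
        exact (Tendsto.congr'
          (by filter_upwards [eventually_ge_atTop (0:ℝ)] with t ht using (hx''eq t ht).symm)
          h1)
      have hf'Lneg : deriv f (-L') < 0 := hf'neg _ hLa
      obtain ⟨T₂, hT₂⟩ := eventually_atTop.mp
        (hx''tend.eventually_const_lt (by linarith : -(deriv f (-L'))/2 < -(deriv f (-L'))))
      exact wdo_linear_unbounded x' x'' (max T₁ T₂) (-(deriv f (-L'))/2) 0 (by linarith)
        (fun t ht => hdv t (hT₁0 (mem_Ici.mpr (le_trans (le_max_left _ _) ht))))
        (fun t ht => le_of_lt (hT₂ t (le_trans (le_max_right _ _) ht)))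
        (fun t ht => le_of_lt (hvneg t (mem_Ici.mpr (le_trans (le_max_left _ _) ht))))
    by_cases hzex : ∃ t0 ∈ Ici T', x' t0 = 0
    · obtain ⟨t0, ht0, h0⟩ := hzex
      have hneg := wdo_stays_neg (fun t => -x' t) (fun t => -x'' t) T'
        (fun t ht => (hdv t ht).neg)
        (fun t ht h0' => by
          have : x' t = 0 := by simpa using h0'
          simpa using hzpos t ht this)
        t0 ht0 (by simpa using h0)
      refine caseB1 (t0 + 1) (by linarith [mem_Ici.mp ht0]) (fun t ht => ?_)
      have := hneg t (by linarith [mem_Ici.mp ht])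
      simp only [neg_lt_zero] at this
      exact this
    · push_neg at hzex
      rcases wdo_same_sign x' T' (hx'c.mono hsub) hzex with h | h
      · exact caseB1 T' le_rfl h
      · exact caseB2 T' le_rfl h
/-- **Oscillation under weak damping (Proposition 6.2).**
Let `f : ℝ → ℝ` be convex, `C¹`, coercive, with `argmin f = [a,b]`, `a < b`.
For `p ≥ 3`, every non-constant `C²` solution on `[0,∞)` of
`ẍ + |ẋ|^{p-2} ẋ + f'(x) = 0` passes through `a` and `b` infinitely many times. -/
theorem weak_damping_oscillation
    (f : ℝ → ℝ) (hf : ContDiff ℝ 1 f) (hconv : ConvexOn ℝ Set.univ f)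
    (hcoercive : Tendsto f (cocompact ℝ) atTop)
    (a b : ℝ) (hab : a < b)
    (hargmin : {z : ℝ | ∀ y, f z ≤ f y} = Set.Icc a b)
    (p : ℝ) (hp : 3 ≤ p)
    (x x' x'' : ℝ → ℝ)
    (hx : ∀ t ∈ Set.Ici (0:ℝ), HasDerivWithinAt x (x' t) (Set.Ici 0) t)
    (hx' : ∀ t ∈ Set.Ici (0:ℝ), HasDerivWithinAt x' (x'' t) (Set.Ici 0) t)
    (hx''c : ContinuousOn x'' (Set.Ici 0))
    (heq : ∀ t ∈ Set.Ici (0:ℝ),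
        x'' t + |x' t| ^ (p - 2) * x' t + deriv f (x t) = 0)
    (hnonconst : ¬ ∀ s ∈ Set.Ici (0:ℝ), ∀ t ∈ Set.Ici (0:ℝ), x s = x t) :
    ∀ T ∈ Set.Ici (0:ℝ),
      (∃ t, T ≤ t ∧ x t = a) ∧ (∃ s, T ≤ s ∧ x s = b) := by
  have hfd : Differentiable ℝ f := hf.differentiable one_ne_zero
  intro T hT
  constructor
  · exact wdo_master f hf hconv hcoercive a b hab hargmin p hp x x' x''
      hx hx' hx''c heq hnonconst T hT
  · -- apply the master lemma to the reflected system
    have hfneg : ContDiff ℝ 1 (fun z : ℝ => f (-z)) := hf.comp contDiff_neg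
    have hconvneg : ConvexOn ℝ Set.univ (fun z : ℝ => f (-z)) := by
      refine ⟨convex_univ, fun z _ y _ α β hα hβ hαβ => ?_⟩
      have h := hconv.2 (mem_univ (-z)) (mem_univ (-y)) hα hβ hαβ
      have heq2 : α • (-z) + β • (-y) = -(α • z + β • y) := by
        simp only [smul_eq_mul]; ring
      rw [heq2] at h
      exact h
    have hnegco : Tendsto (fun z : ℝ => -z) (cocompact ℝ) (cocompact ℝ) :=
      (Homeomorph.neg ℝ).map_cocompact.le
    have hcoercneg : Tendsto (fun z : ℝ => f (-z)) (cocompact ℝ) atTop :=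
      hcoercive.comp hnegco
    have hargminneg : {z : ℝ | ∀ y, (fun z : ℝ => f (-z)) z ≤ (fun z : ℝ => f (-z)) y}
        = Set.Icc (-b) (-a) := by
      ext z
      simp only [mem_setOf_eq, mem_Icc]
      constructor
      · intro h
        have h2 : -z ∈ {w : ℝ | ∀ y, f w ≤ f y} := by
          intro y
          have := h (-y)
          simpa using this
        rw [hargmin] at h2
        obtain ⟨h3, h4⟩ := h2
        constructor <;> linarith
      · intro ⟨h1, h2⟩
        have h3 : -z ∈ Set.Icc a b := ⟨by linarith, by linarith⟩
        rw [← hargmin] at h3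
        intro y
        exact h3 (-y)
    have hderivneg : ∀ w : ℝ, deriv (fun z : ℝ => f (-z)) w = -(deriv f (-w)) := by
      intro w
      have h1 : HasDerivAt (fun z : ℝ => f (-z)) (deriv f (-w) * (-1)) w := by
        have h2 := (hfd (-w)).hasDerivAt.comp w (hasDerivAt_neg w)
        exact h2
      rw [h1.deriv]; ring
    have key := wdo_master (fun z : ℝ => f (-z)) hfneg hconvneg hcoercneg
      (-b) (-a) (by linarith) hargminneg p hp
      (fun t => -x t) (fun t => -x' t) (fun t => -x'' t)
      (fun t ht => (hx t ht).neg)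
      (fun t ht => (hx' t ht).neg)
      hx''c.neg
      (by
        intro t ht
        show -x'' t + |(-x' t)| ^ (p-2) * (-x' t) + deriv (fun z : ℝ => f (-z)) (-x t) = 0
        rw [abs_neg, hderivneg, neg_neg]
        have h1 := heq t ht
        linarith)
      (by
        intro h
        apply hnonconst
        intro s hs t ht
        have := h s hs t ht
        simp only [neg_inj] at this
        exact this)
      T hT
    obtain ⟨t, htT, hxt⟩ := key
    exact ⟨t, htT, by linarith [neg_eq_iff_eq_neg.mp hxt]⟩
end
end
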